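/- arXiv:2212.07408 — 7 statements merged into one kernel-verified Lean document; each statement's English description precedes it below -/
import Mathlib

section
/- Let 1 ≤ n ≤ d be integers, let y > 0 be a real number and let V ∈ M_{d×n}(ℝ). Then there exists γ ∈ SL_{d+n}(ℤ) with γ·n_+(V)·D(y) ∈ H if and only if y is a positive integer q and there exists a q-primitive matrix R ∈ M_{d×n}(ℤ) such that V − q^{−1}R has all entries in ℤ. -/
noncomputable section

/-- `n₊(V) = (I_d V; 0 I_n)`. -/
def nPlus (d n : ℕ) (V : Matrix (Fin d) (Fin n) ℝ) :
    Matrix (Fin d ⊕ Fin n) (Fin d ⊕ Fin n) ℝ :=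
  Matrix.fromBlocks 1 V 0 1

/-- `D(y) = diag(y^{−n/d}·I_d, y·I_n)`. -/
def Dy (d n : ℕ) (y : ℝ) : Matrix (Fin d ⊕ Fin n) (Fin d ⊕ Fin n) ℝ :=
  Matrix.fromBlocks ((y ^ (-(n : ℝ) / (d : ℝ))) • (1 : Matrix (Fin d) (Fin d) ℝ)) 0 0
    (y • (1 : Matrix (Fin n) (Fin n) ℝ))

/-- Membership in the subgroup
`H = {(A 0; U I_n) : A ∈ SL_d(ℝ), U ∈ M_{n×d}(ℝ), A = I if n = d}`. -/
def memH (d n : ℕ) (M : Matrix (Fin d ⊕ Fin n) (Fin d ⊕ Fin n) ℝ) : Prop :=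
  ∃ (A : Matrix (Fin d) (Fin d) ℝ) (U : Matrix (Fin n) (Fin d) ℝ),
    A.det = 1 ∧ (n = d → A = 1) ∧ M = Matrix.fromBlocks A 0 U 1

/-- `R ∈ M_{d×n}(ℤ)` is `q`-primitive if the rows of `R mod q` generate `(ℤ/qℤ)ⁿ`. -/
def qPrimitive (d n q : ℕ) (R : Matrix (Fin d) (Fin n) ℤ) : Prop :=
  Submodule.span (ZMod q)
    (Set.range fun i : Fin d => (R.map (Int.cast : ℤ → ZMod q)) i) = ⊤

lemma qPrimitive_iff_exists_left_inv (d n q : ℕ) (R : Matrix (Fin d) (Fin n) ℤ) :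
    qPrimitive d n q R ↔
      ∃ S : Matrix (Fin n) (Fin d) (ZMod q), S * R.map (Int.cast : ℤ → ZMod q) = 1 := by
  set Rb := R.map (Int.cast : ℤ → ZMod q) with hRb
  constructor
  · intro h
    have hmem : ∀ j : Fin n, ∃ c : Fin d → ZMod q,
        ∑ i, c i • Rb i = Pi.single j (1 : ZMod q) := by
      intro j
      have : (Pi.single j (1 : ZMod q) : Fin n → ZMod q) ∈
          Submodule.span (ZMod q) (Set.range fun i : Fin d => Rb i) := by
        rw [h]; trivial
      exact (Submodule.mem_span_range_iff_exists_fun (ZMod q)).mp this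
    choose c hc using hmem
    refine ⟨Matrix.of fun j i => c j i, ?_⟩
    ext j k
    have := congrFun (hc j) k
    simp only [Finset.sum_apply, Pi.smul_apply, smul_eq_mul] at this
    rw [Matrix.mul_apply]
    simp only [Matrix.of_apply]
    rw [this, Matrix.one_apply, Pi.single_apply]
    simp [eq_comm]
  · rintro ⟨S, hS⟩
    rw [qPrimitive, eq_top_iff]
    intro x _
    rw [Submodule.mem_span_range_iff_exists_fun (ZMod q)]
    refine ⟨fun i => ∑ j, x j * S j i, ?_⟩
    funext k
    have h1 : ∀ j k, ∑ i, S j i * Rb i k = (1 : Matrix (Fin n) (Fin n) (ZMod q)) j k := by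
      intro j k; rw [← Matrix.mul_apply, hS]
    simp only [Finset.sum_apply, Pi.smul_apply, smul_eq_mul]
    calc ∑ i, (∑ j, x j * S j i) * Rb i k
        = ∑ j, x j * ∑ i, S j i * Rb i k := by
          simp only [Finset.sum_mul, Finset.mul_sum, mul_assoc]
          rw [Finset.sum_comm]
      _ = x k := by simp [h1, Matrix.one_apply]

lemma exists_good_P (d n q : ℕ) (hq : 0 < q) (hd : 0 < d)
    (R : Matrix (Fin d) (Fin n) ℤ) (hprim : qPrimitive d n q R) :
    ∃ P : Matrix (Fin d) (Fin d) ℤ, P.det = (q : ℤ) ^ n ∧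
      ∀ i j, (q : ℤ) ∣ (P * R) i j := by
  classical
  haveI : NeZero q := ⟨hq.ne'⟩
  -- the linear map x ↦ x·R mod q
  let f : (Fin d → ℤ) →ₗ[ℤ] (Fin n → ZMod q) :=
    { toFun := fun x j => ∑ i, (x i : ZMod q) * ((R i j : ℤ) : ZMod q)
      map_add' := by
        intro x y; funext j
        simp [add_mul, Finset.sum_add_distrib]
      map_smul' := by
        intro z x; funext j
        simp [Finset.mul_sum, mul_assoc] }
  have hfapply : ∀ (x : Fin d → ℤ) (j : Fin n),
      f x j = ∑ i, (x i : ZMod q) * ((R i j : ℤ) : ZMod q) := fun _ _ => rfl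
  -- surjectivity from primitivity
  have hsurj : Function.Surjective f := by
    intro v
    have hv : v ∈ Submodule.span (ZMod q)
        (Set.range fun i : Fin d => (R.map (Int.cast : ℤ → ZMod q)) i) := by
      rw [hprim]; trivial
    obtain ⟨c, hc⟩ := (Submodule.mem_span_range_iff_exists_fun (ZMod q)).mp hv
    choose x hx using fun i => ZMod.intCast_surjective (c i)
    refine ⟨x, ?_⟩
    funext j
    rw [hfapply]
    have := congrFun hc j
    simp only [Finset.sum_apply, Pi.smul_apply, smul_eq_mul, Matrix.map_apply] at this
    simp only [hx]
    exact this
  set L : Submodule ℤ (Fin d → ℤ) := LinearMap.ker f with hL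
  have hker : L.toAddSubgroup = (f.toAddMonoidHom).ker := by
    ext x; simp [hL, LinearMap.mem_ker]
  have hindex : L.toAddSubgroup.index = q ^ n := by
    rw [hker, AddSubgroup.index_ker]
    have : (f.toAddMonoidHom).range = ⊤ := by
      rw [AddMonoidHom.range_eq_top]; exact hsurj
    rw [this, Nat.card_congr AddSubgroup.topEquiv.toEquiv]
    simp [Nat.card_pi, Nat.card_zmod, Finset.prod_const, Finset.card_univ]
  obtain ⟨m, snf⟩ := L.smithNormalForm (Pi.basisFun ℤ (Fin d))
  have hm : m = d := by
    have := snf.toAddSubgroup_index_ne_zero_iff.mp (by rw [hindex]; positivity)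
    simpa using this
  subst hm
  -- product of diagonal entries
  have hprod : ∏ i, (snf.a i).natAbs = q ^ n := by
    have h1 := snf.toAddSubgroup_index_eq_pow_mul_prod
    rw [hindex] at h1
    simp only [Fintype.card_fin, Nat.sub_self, pow_zero, one_mul,
      Ideal.span_singleton_toAddSubgroup_eq_zmultiples, Int.index_zmultiples] at h1
    exact h1.symm
  -- the permutation coming from the embedding
  let σ := Equiv.ofBijective snf.f
    ((Finite.injective_iff_bijective).mp snf.f.injective)
  -- basis matrix
  let W := Matrix.of fun i j => snf.bM i j
  have hWunit : IsUnit W.det := by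
    haveI := Module.Basis.invertibleToMatrix (Pi.basisFun ℤ _) snf.bM
    have h := Matrix.isUnit_det_of_invertible
      ((Pi.basisFun ℤ _).toMatrix (⇑snf.bM))
    have heq : (Pi.basisFun ℤ _).toMatrix (⇑snf.bM) = W.transpose := by
      ext i j
      simp [Module.Basis.toMatrix_apply, W, Matrix.transpose_apply]
    rwa [heq, Matrix.det_transpose] at h
  let P := Matrix.of fun i j => (snf.bN i).1 j
  have hPfact : P = Matrix.diagonal snf.a * (W.submatrix (⇑σ) id) := by
    ext i j
    have h := congrFun (snf.snf i) j
    simp only [Pi.smul_apply, smul_eq_mul] at h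
    simp only [P, Matrix.of_apply, Matrix.diagonal_mul, Matrix.submatrix_apply, id_eq]
    rw [h]
    rfl
  have habs : (∏ i, snf.a i).natAbs = q ^ n := by
    rw [← hprod]; exact map_prod Int.natAbsHom snf.a Finset.univ
  have hPdet : P.det.natAbs = q ^ n := by
    rw [hPfact, Matrix.det_mul, Matrix.det_diagonal, Matrix.det_permute]
    have h2 : W.det.natAbs = 1 := Int.isUnit_iff.mp hWunit |>.elim
      (fun h => by simp [h]) (fun h => by simp [h])
    rcases Int.units_eq_one_or (Equiv.Perm.sign σ) with h | h <;>
      rw [h] <;>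
      simp [Int.natAbs_mul, h2, habs]
  -- rows of P are in L
  have hrow : ∀ i, (fun j => P i j) ∈ L := by
    intro i
    exact (snf.bN i).2
  have hdvd : ∀ (i) (j), (q : ℤ) ∣ (P * R) i j := by
    intro i j
    rw [← ZMod.intCast_zmod_eq_zero_iff_dvd]
    have h0 := congrFun (hrow i) j
    rw [hfapply] at h0
    rw [Matrix.mul_apply]
    push_cast
    exact h0
  rcases Int.natAbs_eq_iff.mp hPdet with hsgn | hsgn
  · exact ⟨P, by exact_mod_cast hsgn, hdvd⟩
  · -- flip a sign
    obtain ⟨i0⟩ : Nonempty (Fin _) := ⟨⟨0, hd⟩⟩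
    let D := Matrix.diagonal (fun i => if i = i0 then (-1 : ℤ) else 1)
    refine ⟨D * P, ?_, ?_⟩
    · rw [Matrix.det_mul, Matrix.det_diagonal]
      rw [Finset.prod_ite_eq' Finset.univ i0 (fun _ => (-1 : ℤ))]
      simp only [Finset.mem_univ, if_true]
      rw [hsgn]; push_cast; ring
    · intro i j
      rw [Matrix.mul_assoc, Matrix.mul_apply]
      exact Finset.dvd_sum fun k _ => Dvd.dvd.mul_left (hdvd k j) _

lemma forward_dir (d n : ℕ) (hn : 1 ≤ n) (y : ℝ) (hy : 0 < y)
    (V : Matrix (Fin d) (Fin n) ℝ) (γ : Matrix (Fin d ⊕ Fin n) (Fin d ⊕ Fin n) ℤ)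
    (hdet : γ.det = 1)
    (hmem : memH d n ((γ.map (Int.cast : ℤ → ℝ)) * nPlus d n V * Dy d n y)) :
    ∃ q : ℕ, 0 < q ∧ y = (q : ℝ) ∧
      ∃ R : Matrix (Fin d) (Fin n) ℤ, qPrimitive d n q R ∧
        ∀ i j, ∃ m : ℤ, V i j - (R i j : ℝ) / (q : ℝ) = (m : ℝ) := by
  classical
  obtain ⟨A, U, hA, -, hEq⟩ := hmem
  set c : ℝ := y ^ (-(n : ℝ) / (d : ℝ)) with hc
  set Gr := γ.map (Int.cast : ℤ → ℝ) with hGr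
  have hGdet : Gr.det = 1 := by
    have : Gr = (Int.castRingHom ℝ).mapMatrix γ := rfl
    rw [this, ← RingHom.map_det, hdet]
    simp
  have hAinv : A * A⁻¹ = 1 := Matrix.mul_nonsing_inv A (by rw [hA]; norm_num)
  set W : Matrix (Fin n) (Fin d) ℝ := -(U * A⁻¹) with hW
  have hHinv : Matrix.fromBlocks A 0 U (1 : Matrix (Fin n) (Fin n) ℝ) *
      Matrix.fromBlocks A⁻¹ 0 W (1 : Matrix (Fin n) (Fin n) ℝ)
      = (1 : Matrix (Fin d ⊕ Fin n) (Fin d ⊕ Fin n) ℝ) := by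
    rw [Matrix.fromBlocks_multiply]
    simp [hAinv, W]
  set X := nPlus d n V * Dy d n y *
    Matrix.fromBlocks A⁻¹ 0 W (1 : Matrix (Fin n) (Fin n) ℝ) with hXdef
  have hGX : Gr * X = 1 := by
    have h1 : Gr * X = Gr * nPlus d n V * Dy d n y *
        Matrix.fromBlocks A⁻¹ 0 W (1 : Matrix (Fin n) (Fin n) ℝ) := by
      simp only [hXdef, Matrix.mul_assoc]
    rw [h1, hEq, hHinv]
  have hXadj : (γ.adjugate).map (Int.cast : ℤ → ℝ) = X := by
    have h1 : Gr⁻¹ = X := Matrix.inv_eq_right_inv hGX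
    have h2 : Gr⁻¹ = Gr.adjugate := by
      rw [Matrix.inv_def, hGdet]; simp
    have h3 : (γ.adjugate).map (Int.cast : ℤ → ℝ) = Gr.adjugate := by
      have := RingHom.map_adjugate (Int.castRingHom ℝ) γ
      exact this
    rw [h3, ← h2, h1]
  have hX : X = Matrix.fromBlocks (c • A⁻¹ + y • (V * W)) (y • V) (y • W)
      (y • (1 : Matrix (Fin n) (Fin n) ℝ)) := by
    rw [hXdef, nPlus, Dy, Matrix.fromBlocks_multiply, Matrix.fromBlocks_multiply]
    refine Matrix.fromBlocks_inj.mpr ⟨?_, ?_, ?_, ?_⟩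
    · simp [Matrix.mul_smul, Matrix.smul_mul, hc]
    · simp [Matrix.mul_smul]
    · simp [Matrix.smul_mul]
    · simp [Matrix.smul_mul]
  have hmain := hXadj.trans hX
  have h12 : ∀ i j, ((γ.adjugate (Sum.inl i) (Sum.inr j) : ℤ) : ℝ) = y * V i j := by
    intro i j
    have h := congrFun (congrFun hmain (Sum.inl i)) (Sum.inr j)
    simpa [Matrix.map_apply, Matrix.fromBlocks_apply₁₂] using h
  have h22 : ∀ j k, ((γ.adjugate (Sum.inr j) (Sum.inr k) : ℤ) : ℝ)
      = y * (if j = k then 1 else 0) := by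
    intro j k
    have h := congrFun (congrFun hmain (Sum.inr j)) (Sum.inr k)
    simpa [Matrix.map_apply, Matrix.fromBlocks_apply₂₂, Matrix.one_apply] using h
  set j0 : Fin n := ⟨0, hn⟩ with hj0
  set z : ℤ := γ.adjugate (Sum.inr j0) (Sum.inr j0) with hzdef
  have hzy : (z : ℝ) = y := by
    have := h22 j0 j0
    simpa using this
  have hzpos : 0 < z := by exact_mod_cast hzy ▸ hy
  refine ⟨z.toNat, by omega, ?_, ?_⟩
  · rw [← hzy]
    norm_cast
    omega
  set q : ℕ := z.toNat with hqdef
  have hqz : (q : ℤ) = z := Int.toNat_of_nonneg hzpos.le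
  have hqy : (q : ℝ) = y := by rw [← hzy]; exact_mod_cast congrArg (Int.cast : ℤ → ℝ) hqz
  have hqR : (0:ℝ) < q := by rw [hqy]; exact hy
  set R : Matrix (Fin d) (Fin n) ℤ := Matrix.of fun i j => γ.adjugate (Sum.inl i) (Sum.inr j)
    with hRdef
  have hRV : ∀ i j, ((R i j : ℤ) : ℝ) = q * V i j := by
    intro i j; rw [hqy]; exact h12 i j
  have hE : ∀ j k, γ.adjugate (Sum.inr j) (Sum.inr k) = if j = k then (q : ℤ) else 0 := by
    intro j k
    have h := h22 j k
    rw [← hqy] at h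
    apply @Int.cast_injective ℝ _
    rw [h]
    split_ifs <;> simp
  refine ⟨R, ?_, ?_⟩
  · -- primitivity
    rw [qPrimitive_iff_exists_left_inv]
    haveI : NeZero q := ⟨by omega⟩
    refine ⟨Matrix.of fun j i => ((γ (Sum.inr j) (Sum.inl i) : ℤ) : ZMod q), ?_⟩
    have hmul := Matrix.mul_adjugate γ
    rw [hdet, one_smul] at hmul
    ext j k
    have hentry : (γ * γ.adjugate) (Sum.inr j) (Sum.inr k)
        = (1 : Matrix (Fin d ⊕ Fin n) (Fin d ⊕ Fin n) ℤ) (Sum.inr j) (Sum.inr k) := by rw [hmul]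
    rw [Matrix.mul_apply, Fintype.sum_sum_type] at hentry
    have hsum2 : ∑ l : Fin n, γ (Sum.inr j) (Sum.inr l) * γ.adjugate (Sum.inr l) (Sum.inr k)
        = γ (Sum.inr j) (Sum.inr k) * (q : ℤ) := by
      simp only [hE, mul_ite, mul_zero]
      simp
    rw [hsum2] at hentry
    have hcast := congrArg (Int.cast : ℤ → ZMod q) hentry
    push_cast at hcast
    rw [Matrix.mul_apply]
    simp only [Matrix.of_apply, Matrix.map_apply]
    rw [ZMod.natCast_self, mul_zero, add_zero] at hcast
    have hgoal : ∑ i, ((γ (Sum.inr j) (Sum.inl i) : ℤ) : ZMod q) * ((R i k : ℤ) : ZMod q)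
        = (((1 : Matrix (Fin d ⊕ Fin n) (Fin d ⊕ Fin n) ℤ) (Sum.inr j) (Sum.inr k) : ℤ)
            : ZMod q) := hcast
    rw [hgoal, Matrix.one_apply, Matrix.one_apply]
    simp only [Sum.inr.injEq]
    split_ifs <;> simp
  · intro i j
    refine ⟨0, ?_⟩
    have := hRV i j
    have hq0 : (q : ℝ) ≠ 0 := ne_of_gt hqR
    field_simp
    push_cast
    linarith [hRV i j]

lemma backward_dir (d n q : ℕ) (hn : 1 ≤ n) (hnd : n ≤ d) (hq : 0 < q)
    (V : Matrix (Fin d) (Fin n) ℝ) (R : Matrix (Fin d) (Fin n) ℤ)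
    (hprim : qPrimitive d n q R)
    (hV : ∀ i j, ∃ m : ℤ, V i j - (R i j : ℝ) / (q : ℝ) = (m : ℝ)) :
    ∃ γ : Matrix (Fin d ⊕ Fin n) (Fin d ⊕ Fin n) ℤ,
      γ.det = 1 ∧ memH d n ((γ.map (Int.cast : ℤ → ℝ)) * nPlus d n V * Dy d n (q : ℝ)) := by
  classical
  haveI : NeZero q := ⟨hq.ne'⟩
  have hd : 0 < d := lt_of_lt_of_le hn hnd
  have hq0 : ((q : ℝ)) ≠ 0 := by positivity
  have hd0 : ((d : ℝ)) ≠ 0 := by positivity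
  -- the matrix P
  obtain ⟨P, hPdet, hPdvd, hPnd⟩ : ∃ P : Matrix (Fin d) (Fin d) ℤ,
      P.det = (q : ℤ) ^ n ∧ (∀ i j, (q : ℤ) ∣ (P * R) i j) ∧
        (n = d → P = (q : ℤ) • 1) := by
    by_cases hcase : n = d
    · subst hcase
      refine ⟨(q : ℤ) • 1, ?_, ?_, fun _ => rfl⟩
      · rw [Matrix.smul_one_eq_diagonal, Matrix.det_diagonal]
        simp
      · intro i j
        rw [Matrix.smul_mul, Matrix.one_mul]
        exact ⟨R i j, rfl⟩
    · obtain ⟨P, h1, h2⟩ := exists_good_P d n q hq hd R hprim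
      exact ⟨P, h1, h2, fun h => absurd h hcase⟩
  -- the matrix S
  obtain ⟨Sb, hSb⟩ := (qPrimitive_iff_exists_left_inv d n q R).mp hprim
  choose Sf hSf using fun (j : Fin n) (i : Fin d) => ZMod.intCast_surjective (Sb j i)
  set S : Matrix (Fin n) (Fin d) ℤ := Matrix.of Sf with hSdef
  have hSR : ∀ j k, (((S * R) j k : ℤ) : ZMod q) = if j = k then 1 else 0 := by
    intro j k
    have h := congrFun (congrFun hSb j) k
    rw [Matrix.mul_apply] at h ⊢
    push_cast
    rw [show (∑ i, ((S j i : ℤ) : ZMod q) * ((R i k : ℤ) : ZMod q))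
        = ∑ i, Sb j i * (R.map (Int.cast : ℤ → ZMod q)) i k by
      refine Finset.sum_congr rfl fun i _ => ?_
      rw [show ((S j i : ℤ) : ZMod q) = Sb j i from hSf j i]; rfl]
    rw [h, Matrix.one_apply]
  -- integer matrices B, C, M
  choose Mf hMf using hV
  set Mm : Matrix (Fin d) (Fin n) ℤ := Matrix.of Mf with hMdef
  set B : Matrix (Fin d) (Fin n) ℤ := Matrix.of (fun i j => (P * R) i j / q) with hBdef
  have hB : ∀ i j, ((P * R) i j) = q * B i j := fun i j =>
    (Int.mul_ediv_cancel' (hPdvd i j)).symm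
  have hCdvd : ∀ j k, (q : ℤ) ∣ ((S * R) j k - if j = k then 1 else 0) := by
    intro j k
    rw [← ZMod.intCast_zmod_eq_zero_iff_dvd]
    push_cast
    rw [hSR j k]
    split_ifs <;> simp
  set C : Matrix (Fin n) (Fin n) ℤ :=
    Matrix.of (fun j k => ((S * R) j k - if j = k then 1 else 0) / q) with hCdef
  have hC : ∀ j k, (S * R) j k = (if j = k then 1 else 0) + q * C j k := by
    intro j k
    have := Int.mul_ediv_cancel' (hCdvd j k)
    simp only [hCdef, Matrix.of_apply]
    omega
  -- the candidate γ
  set γ : Matrix (Fin d ⊕ Fin n) (Fin d ⊕ Fin n) ℤ :=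
    Matrix.fromBlocks P (-(B + P * Mm)) S (-(C + S * Mm)) with hγdef
  -- real versions
  set Pr := P.map (Int.cast : ℤ → ℝ) with hPr
  set Sr := S.map (Int.cast : ℤ → ℝ) with hSr
  have hγmap : γ.map (Int.cast : ℤ → ℝ) = Matrix.fromBlocks Pr
      ((-(B + P * Mm)).map (Int.cast : ℤ → ℝ)) Sr
      ((-(C + S * Mm)).map (Int.cast : ℤ → ℝ)) := by
    rw [hγdef, Matrix.fromBlocks_map]
  have hVexp : ∀ i j, V i j = (R i j : ℝ) / q + (Mf i j : ℝ) := by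
    intro i j
    have := hMf i j
    linarith
  -- key block identities over ℝ
  have hPV : Pr * V + (-(B + P * Mm)).map (Int.cast : ℤ → ℝ) = 0 := by
    ext i j
    have key : ∑ k, (P i k : ℝ) * V k j = ((B + P * Mm) i j : ℝ) := by
      have h1 : ∑ k, (P i k : ℝ) * V k j
          = (∑ k, (P i k : ℝ) * (R k j : ℝ)) / q + ∑ k, (P i k : ℝ) * (Mf k j : ℝ) := by
        rw [Finset.sum_div, ← Finset.sum_add_distrib]
        exact Finset.sum_congr rfl fun k _ => by rw [hVexp k j]; ring
      have h2 : (∑ k, (P i k : ℝ) * (R k j : ℝ)) = ((P * R) i j : ℝ) := by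
        rw [Matrix.mul_apply]; push_cast; rfl
      have h3 : (∑ k, (P i k : ℝ) * (Mf k j : ℝ)) = ((P * Mm) i j : ℝ) := by
        rw [Matrix.mul_apply]; push_cast; rfl
      rw [h1, h2, h3, hB i j, Matrix.add_apply]
      push_cast
      field_simp
    simp only [Matrix.add_apply, Matrix.mul_apply, Matrix.map_apply, Matrix.neg_apply,
      Matrix.zero_apply, hPr]
    rw [key, Matrix.add_apply, Matrix.mul_apply]
    push_cast
    ring
  have hSV : Sr * V + (-(C + S * Mm)).map (Int.cast : ℤ → ℝ)
      = ((q : ℝ))⁻¹ • (1 : Matrix (Fin n) (Fin n) ℝ) := by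
    ext j k
    have key : ∑ i, (S j i : ℝ) * V i k
        = ((if j = k then 1 else 0 : ℝ)) / q + ((C + S * Mm) j k : ℝ) := by
      have h1 : ∑ i, (S j i : ℝ) * V i k
          = (∑ i, (S j i : ℝ) * (R i k : ℝ)) / q + ∑ i, (S j i : ℝ) * (Mf i k : ℝ) := by
        rw [Finset.sum_div, ← Finset.sum_add_distrib]
        exact Finset.sum_congr rfl fun i _ => by rw [hVexp i k]; ring
      have h2 : (∑ i, (S j i : ℝ) * (R i k : ℝ)) = ((S * R) j k : ℝ) := by
        rw [Matrix.mul_apply]; push_cast; rfl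
      have h3 : (∑ i, (S j i : ℝ) * (Mf i k : ℝ)) = ((S * Mm) j k : ℝ) := by
        rw [Matrix.mul_apply]; push_cast; rfl
      rw [h1, h2, h3, hC j k, Matrix.add_apply]
      push_cast [apply_ite (Int.cast : ℤ → ℝ)]
      split_ifs <;> field_simp <;> ring
    simp only [Matrix.add_apply, Matrix.mul_apply, Matrix.map_apply, Matrix.neg_apply,
      Matrix.smul_apply, Matrix.one_apply, smul_eq_mul, hSr]
    rw [key, Matrix.add_apply, Matrix.mul_apply]
    push_cast
    split_ifs <;> field_simp <;> ring
  -- the product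
  set c : ℝ := (q : ℝ) ^ (-(n : ℝ) / (d : ℝ)) with hc
  have hprodEq : (γ.map (Int.cast : ℤ → ℝ)) * nPlus d n V * Dy d n (q : ℝ)
      = Matrix.fromBlocks (c • Pr) 0 (c • Sr) 1 := by
    rw [hγmap, nPlus, Dy, Matrix.fromBlocks_multiply, Matrix.fromBlocks_multiply]
    refine Matrix.fromBlocks_inj.mpr ⟨?_, ?_, ?_, ?_⟩
    · simp [Matrix.mul_smul, hc]
    · rw [Matrix.mul_one, Matrix.mul_one, Matrix.mul_zero, hPV]
      simp
    · simp [Matrix.mul_smul, hc]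
    · simp only [Matrix.mul_zero, add_zero, Matrix.zero_mul, zero_add,
        Matrix.mul_one]
      rw [hSV, Matrix.smul_mul, Matrix.mul_smul, Matrix.one_mul, smul_smul,
        inv_mul_cancel₀ hq0, one_smul]
  -- power computation
  have hcd : c ^ d = ((q : ℝ) ^ n)⁻¹ := by
    rw [hc, ← Real.rpow_natCast ((q : ℝ) ^ (-(n : ℝ) / (d : ℝ))) d,
      ← Real.rpow_mul (by positivity)]
    rw [show (-(n : ℝ) / (d : ℝ)) * (d : ℕ) = -(n : ℝ) by field_simp]
    rw [Real.rpow_neg (by positivity), Real.rpow_natCast]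
  have hPrdet : Pr.det = (q : ℝ) ^ n := by
    have : Pr = (Int.castRingHom ℝ).mapMatrix P := rfl
    rw [this, ← RingHom.map_det, hPdet]
    simp
  have hAdet : (c • Pr).det = 1 := by
    rw [Matrix.det_smul, Fintype.card_fin, hcd, hPrdet]
    field_simp
  -- membership in H
  refine ⟨γ, ?_, c • Pr, c • Sr, hAdet, ?_, hprodEq⟩
  · -- determinant of γ
    have hdetmap : (γ.map (Int.cast : ℤ → ℝ)).det = ((γ.det : ℤ) : ℝ) := by
      have : γ.map (Int.cast : ℤ → ℝ) = (Int.castRingHom ℝ).mapMatrix γ := rfl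
      rw [this, ← RingHom.map_det]
      rfl
    have h1 : ((γ.det : ℤ) : ℝ) * (nPlus d n V).det * (Dy d n (q : ℝ)).det = 1 := by
      rw [← hdetmap, ← Matrix.det_mul, ← Matrix.det_mul, hprodEq,
        Matrix.det_fromBlocks_zero₁₂, hAdet, Matrix.det_one, mul_one]
    have h2 : (nPlus d n V).det = 1 := by
      rw [nPlus, Matrix.det_fromBlocks_zero₂₁, Matrix.det_one, Matrix.det_one, mul_one]
    have h3 : (Dy d n (q : ℝ)).det = 1 := by
      rw [Dy, Matrix.det_fromBlocks_zero₂₁, Matrix.det_smul, Matrix.det_smul,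
        Fintype.card_fin, Fintype.card_fin, Matrix.det_one, Matrix.det_one, hcd]
      field_simp
    rw [h2, h3, mul_one, mul_one] at h1
    exact_mod_cast h1
  · -- n = d → A = 1
    intro hnd'
    have hP1 : P = (q : ℤ) • 1 := hPnd hnd'
    have hPr1 : Pr = (q : ℝ) • 1 := by
      rw [hPr, hP1]
      ext i j
      rw [Matrix.map_apply]
      simp only [Matrix.smul_apply, Matrix.one_apply, smul_eq_mul, mul_ite, mul_one, mul_zero]
      split_ifs <;> simp
    rw [hPr1, smul_smul, hc, hnd']
    rw [show (-(d : ℝ) / (d : ℝ)) = -1 by field_simp]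
    rw [Real.rpow_neg_one]
    rw [inv_mul_cancel₀ hq0, one_smul]

/-- There is `γ ∈ SL_{d+n}(ℤ)` with `γ·n₊(V)·D(y) ∈ H` if and only if `y` is a positive
integer `q` and `V ≡ q⁻¹R (mod M_{d×n}(ℤ))` for some `q`-primitive `R ∈ M_{d×n}(ℤ)`. -/
theorem rational_point_in_H_iff (d n : ℕ) (hn : 1 ≤ n) (hnd : n ≤ d)
    (y : ℝ) (hy : 0 < y) (V : Matrix (Fin d) (Fin n) ℝ) :
    (∃ γ : Matrix (Fin d ⊕ Fin n) (Fin d ⊕ Fin n) ℤ,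
      γ.det = 1 ∧ memH d n ((γ.map (Int.cast : ℤ → ℝ)) * nPlus d n V * Dy d n y)) ↔
    (∃ q : ℕ, 0 < q ∧ y = (q : ℝ) ∧
      ∃ R : Matrix (Fin d) (Fin n) ℤ, qPrimitive d n q R ∧
        ∀ i j, ∃ m : ℤ, V i j - (R i j : ℝ) / (q : ℝ) = (m : ℝ)) := by
  constructor
  · rintro ⟨γ, hdet, hmem⟩
    exact forward_dir d n hn y hy V γ hdet hmem
  · rintro ⟨q, hq, rfl, R, hprim, hV⟩
    exact backward_dir d n q hn hnd hq V R hprim hV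

end
end

section
/- Let 1 ≤ n ≤ d be integers and let q be a positive integer. Then the number of q-primitive matrices in M_{d×n}(ℤ/qℤ) equals q^{dn}·∏_{p prime, p∣q} ∏_{j=d+1−n}^{d} (1 − p^{−j}) (an identity of real numbers). -/
open scoped BigOperators

open Matrix

lemma span_rows_top_iff_li {F : Type*} [Field F] {d n : ℕ}
    (v : Fin d → Fin n → F) :
    Submodule.span F (Set.range v) = ⊤ ↔
      LinearIndependent F (fun j : Fin n => fun i : Fin d => v i j) := by
  set M : Matrix (Fin d) (Fin n) F := Matrix.of v with hM
  have h1 : Submodule.span F (Set.range v) = Submodule.span F (Set.range M) := rfl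
  have h2 : (fun j : Fin n => fun i : Fin d => v i j) = Mᵀ := rfl
  have hrank : M.rank = Mᵀ.rank := (Matrix.rank_transpose M).symm
  rw [Matrix.rank_eq_finrank_span_row, Matrix.rank_eq_finrank_span_row] at hrank
  rw [h1, h2]
  rw [show LinearIndependent F Mᵀ ↔ _ from linearIndependent_iff_card_eq_finrank_span]
  change Module.finrank F (Submodule.span F (Set.range M)) = Module.finrank F (Submodule.span F (Set.range Mᵀ)) at hrank
  constructor
  · intro h
    rw [Set.finrank, ← hrank, h, finrank_top, Module.finrank_fintype_fun_eq_card]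
  · intro h
    apply Submodule.eq_top_of_finrank_eq
    rw [hrank, ← Set.finrank, ← h, Module.finrank_fintype_fun_eq_card]

lemma card_spanning_field (p d n : ℕ) [Fact p.Prime] (hnd : n ≤ d) :
    Nat.card {v : Fin d → Fin n → ZMod p // Submodule.span (ZMod p) (Set.range v) = ⊤}
      = ∏ i : Fin n, (p ^ d - p ^ (i : ℕ)) := by
  have e : {v : Fin d → Fin n → ZMod p // Submodule.span (ZMod p) (Set.range v) = ⊤}
      ≃ {w : Fin n → Fin d → ZMod p // LinearIndependent (ZMod p) w} :=
    { toFun := fun x => ⟨fun j i => x.1 i j, (span_rows_top_iff_li x.1).mp x.2⟩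
      invFun := fun y => ⟨fun i j => y.1 j i, (span_rows_top_iff_li _).mpr y.2⟩
      left_inv := fun x => rfl
      right_inv := fun y => rfl }
  rw [Nat.card_congr e]
  have hk : n ≤ Module.finrank (ZMod p) (Fin d → ZMod p) := by
    rw [Module.finrank_fintype_fun_eq_card, Fintype.card_fin]; exact hnd
  rw [card_linearIndependent hk]
  simp [ZMod.card, Module.finrank_fintype_fun_eq_card]

section SupSmul
variable {R M : Type*} [CommRing R] [AddCommGroup M] [Module R M]

def mulL (R : Type*) {M : Type*} [CommRing R] [AddCommGroup M] [Module R M] (c : R) :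
    M →ₗ[R] M := c • LinearMap.id

lemma sup_mulL_mul (N : Submodule R M) (c₁ c₂ : R)
    (h₁ : N ⊔ LinearMap.range (mulL R c₁ : M →ₗ[R] M) = ⊤)
    (h₂ : N ⊔ LinearMap.range (mulL R c₂ : M →ₗ[R] M) = ⊤) :
    N ⊔ LinearMap.range (mulL R (c₁ * c₂) : M →ₗ[R] M) = ⊤ := by
  rw [eq_top_iff]
  intro x _
  have hx : x ∈ N ⊔ LinearMap.range (mulL R c₁ : M →ₗ[R] M) := by rw [h₁]; trivial
  obtain ⟨a, haN, y', hy', rfl⟩ := Submodule.mem_sup.mp hx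
  obtain ⟨y, rfl⟩ := hy'
  have hy : y ∈ N ⊔ LinearMap.range (mulL R c₂ : M →ₗ[R] M) := by rw [h₂]; trivial
  obtain ⟨b, hbN, z', hz', rfl⟩ := Submodule.mem_sup.mp hy
  obtain ⟨z, rfl⟩ := hz'
  refine Submodule.mem_sup.mpr ⟨a + mulL R c₁ b, Submodule.add_mem _ haN ?_,
    mulL R (c₁ * c₂) z, ⟨z, rfl⟩, ?_⟩
  · simpa [mulL] using N.smul_mem c₁ hbN
  · show a + mulL R c₁ b + mulL R (c₁ * c₂) z = a + mulL R c₁ (b + mulL R c₂ z)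
    simp only [mulL, LinearMap.smul_apply, LinearMap.id_apply]
    rw [smul_add, smul_smul, add_assoc]

lemma sup_mulL_one (N : Submodule R M) :
    N ⊔ LinearMap.range (mulL R 1 : M →ₗ[R] M) = ⊤ := by
  have : LinearMap.range (mulL R 1 : M →ₗ[R] M) = ⊤ := by
    rw [LinearMap.range_eq_top]
    exact fun x => ⟨x, by simp [mulL]⟩
  rw [this, sup_top_eq]

lemma sup_mulL_prod {ι : Type*} (N : Submodule R M) (s : Finset ι) (f : ι → R)
    (h : ∀ i ∈ s, N ⊔ LinearMap.range (mulL R (f i) : M →ₗ[R] M) = ⊤) :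
    N ⊔ LinearMap.range (mulL R (∏ i ∈ s, f i) : M →ₗ[R] M) = ⊤ := by
  induction s using Finset.cons_induction with
  | empty => simpa using sup_mulL_one N
  | cons i s his ih =>
      rw [Finset.prod_cons]
      exact sup_mulL_mul N _ _ (h i (Finset.mem_cons_self i s))
        (ih fun j hj => h j (Finset.mem_cons_of_mem hj))

lemma sup_mulL_pow (N : Submodule R M) (c : R) (e : ℕ)
    (h : N ⊔ LinearMap.range (mulL R c : M →ₗ[R] M) = ⊤) :
    N ⊔ LinearMap.range (mulL R (c ^ e) : M →ₗ[R] M) = ⊤ := by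
  have := sup_mulL_prod N (Finset.range e) (fun _ => c) (fun i _ => h)
  simpa using this

end SupSmul

section Reduction
variable (n q p : ℕ)

def redS (h : p ∣ q) : (Fin n → ZMod q) →ₛₗ[ZMod.castHom h (ZMod p)] (Fin n → ZMod p) where
  toFun x := fun j => ZMod.castHom h (ZMod p) (x j)
  map_add' x y := funext fun j => map_add _ _ _
  map_smul' c x := funext fun j => map_mul _ c (x j)

lemma castHom_surj {q p : ℕ} [NeZero q] (h : p ∣ q) :
    Function.Surjective (ZMod.castHom h (ZMod p)) := by
  intro y
  refine ⟨((y.val : ℕ) : ZMod q), ?_⟩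
  have : NeZero p := ⟨fun hp => (NeZero.ne q) (by simpa [hp] using h)⟩
  rw [map_natCast]
  exact ZMod.natCast_rightInverse y

lemma redS_surj {n q p : ℕ} [NeZero q] (h : p ∣ q) :
    Function.Surjective (redS n q p h) := by
  intro y
  choose x hx using fun j => castHom_surj h (y j)
  exact ⟨x, funext hx⟩

lemma mem_ker_redS {n q p : ℕ} [NeZero q] (h : p ∣ q) (x : Fin n → ZMod q)
    (hx : redS n q p h x = 0) :
    x ∈ LinearMap.range (mulL (ZMod q) ((p : ℕ) : ZMod q) :
      (Fin n → ZMod q) →ₗ[ZMod q] (Fin n → ZMod q)) := by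
  have key : ∀ a : ZMod q, ZMod.castHom h (ZMod p) a = 0 →
      ∃ b : ZMod q, ((p : ℕ) : ZMod q) * b = a := by
    intro a ha
    have h1 : ((a.val : ℕ) : ZMod p) = 0 := by
      rwa [ZMod.natCast_val, ← ZMod.castHom_apply (h := h)]
    rw [ZMod.natCast_eq_zero_iff] at h1
    obtain ⟨c, hc⟩ := h1
    refine ⟨((c : ℕ) : ZMod q), ?_⟩
    have ha2 : a = ((a.val : ℕ) : ZMod q) := (ZMod.natCast_rightInverse a).symm
    rw [ha2, hc]
    push_cast
    ring
  choose b hb using fun j => key (x j) (congrFun hx j)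
  refine ⟨b, funext fun j => ?_⟩
  simpa [mulL] using hb j

end Reduction

lemma span_top_iff_forall_prime (d n q : ℕ) (hq : 0 < q) (v : Fin d → Fin n → ZMod q) :
    Submodule.span (ZMod q) (Set.range v) = ⊤ ↔
      ∀ p (hp : p ∈ q.primeFactors),
        Submodule.span (ZMod p)
          (Set.range fun i => redS n q p (Nat.dvd_of_mem_primeFactors hp) (v i)) = ⊤ := by
  haveI : NeZero q := ⟨hq.ne'⟩
  constructor
  · intro h p hp
    haveI : RingHomSurjective (ZMod.castHom (Nat.dvd_of_mem_primeFactors hp) (ZMod p)) :=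
      ⟨castHom_surj _⟩
    have h1 : Submodule.map (redS n q p (Nat.dvd_of_mem_primeFactors hp))
        (Submodule.span (ZMod q) (Set.range v)) =
        Submodule.span (ZMod p)
          (Set.range fun i => redS n q p (Nat.dvd_of_mem_primeFactors hp) (v i)) := by
      rw [Submodule.map_span]
      congr 1
      rw [← Set.range_comp]
      rfl
    rw [← h1, h, Submodule.map_top, LinearMap.range_eq_top]
    exact redS_surj _
  · intro h
    set N := Submodule.span (ZMod q) (Set.range v) with hN
    have key : ∀ p (hp : p ∈ q.primeFactors),
        N ⊔ LinearMap.range (mulL (ZMod q) ((p : ℕ) : ZMod q) :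
          (Fin n → ZMod q) →ₗ[ZMod q] (Fin n → ZMod q)) = ⊤ := by
      intro p hp
      have hd := Nat.dvd_of_mem_primeFactors hp
      haveI : RingHomSurjective (ZMod.castHom hd (ZMod p)) := ⟨castHom_surj _⟩
      have h1 : Submodule.map (redS n q p hd) N = ⊤ := by
        rw [hN, Submodule.map_span]
        have h2 : (redS n q p hd) '' Set.range v =
            Set.range fun i => redS n q p hd (v i) := by
          rw [← Set.range_comp]; rfl
        rw [h2]
        exact h p hp
      have h3 : N ⊔ LinearMap.ker (redS n q p hd) = ⊤ := by
        rw [← Submodule.comap_map_eq, h1, Submodule.comap_top]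
      rw [eq_top_iff, ← h3]
      apply sup_le_sup_left
      intro x hx
      exact mem_ker_redS hd x hx
    -- combine over all primes
    have hnat : (∏ p ∈ q.primeFactors, p ^ (q.factorization p)) = q := by
      rw [← Nat.prod_factorization_eq_prod_primeFactors fun p k => p ^ k]
      exact Nat.factorization_prod_pow_eq_self hq.ne'
    have hc0 : (∏ p ∈ q.primeFactors, ((p : ZMod q) ^ (q.factorization p))) = 0 := by
      have : ((∏ p ∈ q.primeFactors, p ^ (q.factorization p) : ℕ) : ZMod q) = 0 := by
        rw [hnat, ZMod.natCast_self]
      rw [Nat.cast_prod] at this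
      simpa using this
    have hq2 := sup_mulL_prod N q.primeFactors
      (fun p => ((p : ZMod q) ^ (q.factorization p)))
      (fun p hp => sup_mulL_pow N _ _ (key p hp))
    have hzero : LinearMap.range (mulL (ZMod q)
        (∏ p ∈ q.primeFactors, ((p : ZMod q) ^ (q.factorization p))) :
        (Fin n → ZMod q) →ₗ[ZMod q] (Fin n → ZMod q)) = ⊥ := by
      rw [hc0, LinearMap.range_eq_bot]
      ext x j
      simp [mulL]
    rw [hzero, sup_bot_eq] at hq2
    exact hq2

section Counting

/-- Fibers of a surjective additive hom over a set multiply. -/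
lemma card_preimage_addHom {G H : Type*} [AddCommGroup G] [AddCommGroup H] (f : G →+ H)
    (hf : Function.Surjective f) (T : Set H) :
    Nat.card (f ⁻¹' T) = Nat.card f.ker * Nat.card T := by
  set s : H → G := Function.surjInv hf with hs
  have hfs : ∀ h, f (s h) = h := fun h => Function.surjInv_eq hf h
  have e : (f ⁻¹' T) ≃ f.ker × T :=
    { toFun := fun x => (⟨x.1 - s (f x.1), by
        simp [AddMonoidHom.mem_ker, map_sub, hfs]⟩, ⟨f x.1, x.2⟩)
      invFun := fun kt => ⟨s kt.2.1 + kt.1.1, by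
        have : f (s kt.2.1 + kt.1.1) = kt.2.1 := by
          rw [map_add, hfs, AddMonoidHom.mem_ker.mp kt.1.2, add_zero]
        simp only [Set.mem_preimage, this]
        exact kt.2.2⟩
      left_inv := fun x => by
        apply Subtype.ext
        show s (f x.1) + (x.1 - s (f x.1)) = x.1
        abel
      right_inv := fun kt => by
        have hfk : f (s kt.2.1 + kt.1.1) = kt.2.1 := by
          rw [map_add, hfs, AddMonoidHom.mem_ker.mp kt.1.2, add_zero]
        refine Prod.ext (Subtype.ext ?_) (Subtype.ext ?_)
        · show (s kt.2.1 + kt.1.1) - s (f (s kt.2.1 + kt.1.1)) = kt.1.1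
          rw [hfk]
          abel
        · exact hfk }
  rw [Nat.card_congr e, Nat.card_prod]

lemma card_eq_card_ker_mul {G H : Type*} [AddCommGroup G] [AddCommGroup H] (f : G →+ H)
    (hf : Function.Surjective f) :
    Nat.card G = Nat.card f.ker * Nat.card H := by
  have := card_preimage_addHom f hf Set.univ
  rwa [Set.preimage_univ, Nat.card_congr (Equiv.Set.univ G),
    Nat.card_congr (Equiv.Set.univ H)] at this

end Counting

section CRT

def rho (q : ℕ) : ZMod q →+* Π p : q.primeFactors, ZMod (p : ℕ) :=
  Pi.ringHom fun p => ZMod.castHom (Nat.dvd_of_mem_primeFactors p.2) (ZMod (p : ℕ))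

lemma rho_surj (q : ℕ) (hq : 0 < q) : Function.Surjective (rho q) := by
  haveI : NeZero q := ⟨hq.ne'⟩
  haveI hnz : ∀ p : q.primeFactors, NeZero (p : ℕ) :=
    fun p => ⟨(Nat.prime_of_mem_primeFactors p.2).pos.ne'⟩
  set m : ℕ := ∏ p ∈ q.primeFactors, p with hm
  have hmq : m ∣ q := Nat.prod_primeFactors_dvd q
  have hm0 : 0 < m := Nat.pos_of_dvd_of_pos hmq hq
  haveI : NeZero m := ⟨hm0.ne'⟩
  set ρ' : ZMod m →+* Π p : q.primeFactors, ZMod (p : ℕ) :=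
    Pi.ringHom fun p => ZMod.castHom (Finset.dvd_prod_of_mem _ p.2) (ZMod (p : ℕ)) with hρ'
  have hcomp : rho q = ρ'.comp (ZMod.castHom hmq (ZMod m)) := RingHom.ext_zmod _ _
  have hinj : Function.Injective ρ' := by
    rw [injective_iff_map_eq_zero]
    intro x hx
    have hdvd : ∀ p ∈ q.primeFactors, p ∣ x.val := by
      intro p hp
      have := congrFun hx ⟨p, hp⟩
      have h1 : ((x.val : ℕ) : ZMod p) = 0 := by
        rwa [ZMod.natCast_val, ← ZMod.castHom_apply (h := Finset.dvd_prod_of_mem _ hp)]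
      rwa [ZMod.natCast_eq_zero_iff] at h1
    have hmd : m ∣ x.val :=
      Finset.prod_primes_dvd _
        (fun p hp => (Nat.prime_of_mem_primeFactors hp).prime)
        (fun p hp => hdvd p hp)
    have hval : x.val = 0 := Nat.eq_zero_of_dvd_of_lt hmd (ZMod.val_lt x)
    exact (ZMod.val_eq_zero x).mp hval
  have hcard : Fintype.card (Π p : q.primeFactors, ZMod (p : ℕ)) = Fintype.card (ZMod m) := by
    rw [Fintype.card_pi, ZMod.card m, hm]
    rw [← Finset.prod_attach q.primeFactors (fun p => p)]
    exact Finset.prod_congr rfl fun p _ => ZMod.card (p : ℕ)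
  have hbij : Function.Bijective ρ' :=
    (Fintype.bijective_iff_injective_and_card ρ').mpr ⟨hinj, hcard.symm⟩
  rw [hcomp]
  exact hbij.surjective.comp (castHom_surj hmq)

end CRT

section Main

def Phi (d n q : ℕ) : (Fin d → Fin n → ZMod q) →+
    (Π p : q.primeFactors, Fin d → Fin n → ZMod (p : ℕ)) where
  toFun v := fun p i j => ZMod.castHom (Nat.dvd_of_mem_primeFactors p.2) (ZMod (p : ℕ)) (v i j)
  map_zero' := by funext p i j; simp
  map_add' v w := by funext p i j; exact map_add _ _ _

lemma Phi_surj (d n q : ℕ) (hq : 0 < q) : Function.Surjective (Phi d n q) := by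
  intro w
  choose x hx using fun i j => rho_surj q hq (fun p => w p i j)
  refine ⟨fun i j => x i j, ?_⟩
  funext p i j
  exact congrFun (hx i j) p

lemma key_count (d n q : ℕ) (hnd : n ≤ d) (hq : 0 < q) :
    Nat.card {v : Fin d → Fin n → ZMod q // Submodule.span (ZMod q) (Set.range v) = ⊤} *
      (∏ p ∈ q.primeFactors, p ^ (d * n)) =
    q ^ (d * n) * ∏ p ∈ q.primeFactors, (∏ i : Fin n, (p ^ d - p ^ (i : ℕ))) := by
  haveI : NeZero q := ⟨hq.ne'⟩
  haveI hnz : ∀ p : q.primeFactors, NeZero (p : ℕ) :=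
    fun p => ⟨(Nat.prime_of_mem_primeFactors p.2).pos.ne'⟩
  set T : Set (Π p : q.primeFactors, Fin d → Fin n → ZMod (p : ℕ)) :=
    Set.univ.pi (fun p => {u | Submodule.span (ZMod (p : ℕ)) (Set.range u) = ⊤}) with hT
  have hpre : (Phi d n q) ⁻¹' T =
      {v : Fin d → Fin n → ZMod q | Submodule.span (ZMod q) (Set.range v) = ⊤} := by
    ext v
    simp only [Set.mem_preimage, hT, Set.mem_pi, Set.mem_univ, forall_true_left,
      Set.mem_setOf_eq]
    rw [span_top_iff_forall_prime d n q hq v]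
    constructor
    · intro h p hp
      exact h ⟨p, hp⟩
    · intro h p
      exact h p p.2
  have hfib := card_preimage_addHom (Phi d n q) (Phi_surj d n q hq) T
  rw [hpre] at hfib
  have hcardT : Nat.card T = ∏ p ∈ q.primeFactors.attach,
      (∏ i : Fin n, ((p : ℕ) ^ d - (p : ℕ) ^ (i : ℕ))) := by
    rw [Nat.card_congr (Equiv.Set.univPi _), Nat.card_pi]
    rw [← Finset.prod_coe_sort_eq_attach]
    refine Finset.prod_congr rfl ?_
    intro p _
    haveI : Fact (Nat.Prime (p : ℕ)) := ⟨Nat.prime_of_mem_primeFactors p.2⟩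
    exact card_spanning_field (p : ℕ) d n hnd
  have htot := card_eq_card_ker_mul (Phi d n q) (Phi_surj d n q hq)
  have hG : Nat.card (Fin d → Fin n → ZMod q) = q ^ (d * n) := by
    simp only [Nat.card_pi, Nat.card_zmod, Finset.prod_const, Finset.card_univ,
      Fintype.card_fin]
    rw [← pow_mul, Nat.mul_comm]
  have hH : Nat.card (Π p : q.primeFactors, Fin d → Fin n → ZMod (p : ℕ)) =
      ∏ p ∈ q.primeFactors, p ^ (d * n) := by
    rw [Nat.card_pi]
    have hinner : ∀ a : q.primeFactors, Nat.card (Fin d → Fin n → ZMod (a : ℕ)) =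
        (a : ℕ) ^ (d * n) := by
      intro a
      simp only [Nat.card_pi, Nat.card_zmod, Finset.prod_const, Finset.card_univ,
        Fintype.card_fin]
      rw [← pow_mul, Nat.mul_comm]
    rw [Finset.prod_congr rfl fun a _ => hinner a]
    exact Finset.prod_coe_sort q.primeFactors (fun p => p ^ (d * n))
  have hattach : (∏ p ∈ q.primeFactors.attach, (∏ i : Fin n, ((p : ℕ) ^ d - (p : ℕ) ^ (i : ℕ))))
      = ∏ p ∈ q.primeFactors, (∏ i : Fin n, (p ^ d - p ^ (i : ℕ))) :=
    Finset.prod_attach q.primeFactors (fun p => ∏ i : Fin n, (p ^ d - p ^ (i : ℕ)))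
  calc Nat.card {v : Fin d → Fin n → ZMod q //
        Submodule.span (ZMod q) (Set.range v) = ⊤} * (∏ p ∈ q.primeFactors, p ^ (d * n))
      = (Nat.card ((Phi d n q).ker) * Nat.card T) * (∏ p ∈ q.primeFactors, p ^ (d * n)) := by
        rw [← hfib]; rfl
    _ = (Nat.card ((Phi d n q).ker) * (∏ p ∈ q.primeFactors, p ^ (d * n))) * Nat.card T := by
        ring
    _ = q ^ (d * n) * ∏ p ∈ q.primeFactors, (∏ i : Fin n, (p ^ d - p ^ (i : ℕ))) := by
        rw [← hH, ← htot, hG, hcardT, hattach]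

end Main

lemma per_prime (p d n : ℕ) (hp : 2 ≤ p) (hnd : n ≤ d) :
    (∏ j ∈ Finset.Icc (d + 1 - n) d, (1 - (p : ℝ) ^ (-(j : ℤ)))) * (p : ℝ) ^ (d * n)
      = ((∏ i : Fin n, (p ^ d - p ^ (i : ℕ)) : ℕ) : ℝ) := by
  have hp0 : (p : ℝ) ≠ 0 := by
    have : 0 < p := lt_of_lt_of_le (by norm_num) hp
    exact_mod_cast this.ne'
  -- reindex Icc to range
  have hre : (∏ j ∈ Finset.Icc (d + 1 - n) d, (1 - (p : ℝ) ^ (-(j : ℤ))))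
      = ∏ i ∈ Finset.range n, (1 - (p : ℝ) ^ (-((d - i : ℕ) : ℤ))) := by
    refine (Finset.prod_bij' (fun j _ => d - j) (fun i _ => d - i) ?_ ?_ ?_ ?_ ?_).symm
    all_goals intro a ha
    all_goals simp only [Finset.mem_Icc, Finset.mem_range] at ha ⊢
    all_goals first | rfl | omega | (congr 2; omega)
  rw [hre]
  -- cast RHS
  rw [Nat.cast_prod, ← Finset.prod_range fun i => ((p ^ d - p ^ i : ℕ) : ℝ)]
  have hpow : (p : ℝ) ^ (d * n) = ∏ _i ∈ Finset.range n, (p : ℝ) ^ d := by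
    rw [Finset.prod_const, Finset.card_range, ← pow_mul]
  rw [hpow, ← Finset.prod_mul_distrib]
  refine Finset.prod_congr rfl ?_
  intro i hi
  rw [Finset.mem_range] at hi
  have hid : i ≤ d := le_trans (le_of_lt hi) hnd
  have hcast : ((p ^ d - p ^ i : ℕ) : ℝ) = (p : ℝ) ^ d - (p : ℝ) ^ i := by
    have : p ^ i ≤ p ^ d := Nat.pow_le_pow_right (by omega) hid
    push_cast [Nat.cast_sub this]
    ring
  rw [hcast, sub_mul, one_mul]
  congr 1
  rw [← zpow_natCast (p : ℝ) d, ← zpow_add₀ hp0]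
  have : (-((d - i : ℕ) : ℤ)) + (d : ℤ) = (i : ℤ) := by
    push_cast [Nat.cast_sub hid]
    ring
  rw [this, zpow_natCast]

/-- The number of `q`-primitive matrices in `M_{d×n}(ℤ/qℤ)` (matrices whose rows generate
`(ℤ/qℤ)ⁿ`) equals `q^{dn}·∏_{p ∣ q} ∏_{j=d+1−n}^{d} (1 − p^{−j})`. -/
theorem card_primitive_matrices (d n q : ℕ) (hn : 1 ≤ n) (hnd : n ≤ d) (hq : 0 < q) :
    (Nat.card {R : Matrix (Fin d) (Fin n) (ZMod q) //
        Submodule.span (ZMod q) (Set.range fun i : Fin d => R i) = ⊤} : ℝ) =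
      (q : ℝ) ^ (d * n) *
        ∏ p ∈ q.primeFactors, ∏ j ∈ Finset.Icc (d + 1 - n) d, (1 - (p : ℝ) ^ (-(j : ℤ))) := by
  have hid : Nat.card {R : Matrix (Fin d) (Fin n) (ZMod q) //
      Submodule.span (ZMod q) (Set.range fun i : Fin d => R i) = ⊤}
      = Nat.card {v : Fin d → Fin n → ZMod q //
          Submodule.span (ZMod q) (Set.range v) = ⊤} := rfl
  rw [hid]
  have hkey := key_count d n q hnd hq
  set Nc := Nat.card {v : Fin d → Fin n → ZMod q //
      Submodule.span (ZMod q) (Set.range v) = ⊤} with hNc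
  set Pn : ℕ := ∏ p ∈ q.primeFactors, p ^ (d * n) with hPn
  set Sn : ℕ := ∏ p ∈ q.primeFactors, (∏ i : Fin n, (p ^ d - p ^ (i : ℕ))) with hSn
  have hPn0 : Pn ≠ 0 := by
    rw [hPn]
    exact Finset.prod_ne_zero_iff.mpr fun p hp =>
      pow_ne_zero _ (Nat.prime_of_mem_primeFactors hp).pos.ne'
  have hPnR : ((Pn : ℕ) : ℝ) ≠ 0 := Nat.cast_ne_zero.mpr hPn0
  have hcast : (Nc : ℝ) * (Pn : ℝ) = (q : ℝ) ^ (d * n) * (Sn : ℝ) := by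
    exact_mod_cast congrArg (Nat.cast : ℕ → ℝ) hkey
  set A : ℝ := ∏ p ∈ q.primeFactors, ∏ j ∈ Finset.Icc (d + 1 - n) d,
      (1 - (p : ℝ) ^ (-(j : ℤ))) with hA
  have hSA : (Sn : ℝ) = A * (Pn : ℝ) := by
    rw [hSn, hA, hPn, Nat.cast_prod, Nat.cast_prod, ← Finset.prod_mul_distrib]
    refine (Finset.prod_congr rfl ?_).symm
    intro p hp
    rw [Nat.cast_pow]
    exact per_prime p d n (Nat.prime_of_mem_primeFactors hp).two_le hnd
  rw [hSA] at hcast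
  have : (Nc : ℝ) * (Pn : ℝ) = ((q : ℝ) ^ (d * n) * A) * (Pn : ℝ) := by
    rw [hcast]; ring
  exact mul_right_cancel₀ hPnR this
end

section
/- Let 1 ≤ n < d be integers and let q be a positive integer. Let B_q ⊆ SL_d(ℤ) be any set containing exactly one element from each right coset Γ⁰(q)γ of Γ⁰(q) in SL_d(ℤ). Then the map B_q × GL_n(ℤ/qℤ) → M_{d×n}(ℤ/qℤ) sending (γ, U) to the reduction mod q of γ^{−1} multiplied by the d×n matrix (0; U) (top (d−n)×n block zero, bottom n×n block U) is injective, and its image is exactly the set R_q of q-primitive matrices in M_{d×n}(ℤ/qℤ). -/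
noncomputable section

open Matrix Finset


open Matrix Finset

lemma zmod_sr1 {q : ℕ} (hq : 0 < q) (a b x : ZMod q) (h : a * x + b = 1) :
    ∃ t : ZMod q, IsUnit (a + t * b) := by
  haveI : NeZero q := ⟨hq.ne'⟩
  have key : ∀ p : ℕ, p.Prime → p ∣ q → ¬(p ∣ a.val ∧ p ∣ b.val) := by
    rintro p hp hpq ⟨hpa, hpb⟩
    haveI : Fact p.Prime := ⟨hp⟩
    have h' : (a.val : ZMod q) * x + (b.val : ZMod q) = 1 := by
      rwa [ZMod.natCast_val, ZMod.natCast_val, ZMod.cast_id, ZMod.cast_id]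
    have h2 := congrArg (ZMod.castHom hpq (ZMod p)) h'
    rw [_root_.map_add, _root_.map_mul, _root_.map_natCast, _root_.map_natCast,
      _root_.map_one, (ZMod.natCast_eq_zero_iff _ _).2 hpa,
      (ZMod.natCast_eq_zero_iff _ _).2 hpb, zero_mul, zero_add] at h2
    exact zero_ne_one h2
  set T : Finset ℕ := q.primeFactors.filter (fun p => ¬ p ∣ a.val) with hT
  refine ⟨((T.prod id : ℕ) : ZMod q), ?_⟩
  have hcast : a + ((T.prod id : ℕ) : ZMod q) * b = ((a.val + T.prod id * b.val : ℕ) : ZMod q) := by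
    push_cast
    rw [ZMod.natCast_val, ZMod.natCast_val, ZMod.cast_id, ZMod.cast_id]
  rw [hcast, ZMod.isUnit_iff_coprime]
  by_contra hnc
  obtain ⟨p, hp, hpsum, hpq⟩ := (Nat.Prime.not_coprime_iff_dvd).1 hnc
  by_cases hpa : p ∣ a.val
  · have hpb : ¬ p ∣ b.val := fun hb => key p hp hpq ⟨hpa, hb⟩
    have hpt : ¬ p ∣ T.prod id := by
      intro hpt
      have hc : Nat.Coprime p (T.prod id) := by
        apply Nat.Coprime.prod_right
        intro r hr
        simp only [hT, Finset.mem_filter, Nat.mem_primeFactors] at hr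
        exact (Nat.coprime_primes hp hr.1.1).2 (fun h => hr.2 (h ▸ hpa))
      exact hp.one_lt.ne' (hc.eq_one_of_dvd hpt)
    have hd : p ∣ T.prod id * b.val := (Nat.dvd_add_right hpa).1 hpsum
    rcases (Nat.Prime.dvd_mul hp).1 hd with h | h
    · exact hpt h
    · exact hpb h
  · have hpt : p ∣ T.prod id := by
      apply Finset.dvd_prod_of_mem
      simp only [hT, Finset.mem_filter, Nat.mem_primeFactors]
      exact ⟨⟨hp, hpq, hq.ne'⟩, hpa⟩
    have hpsum' : p ∣ T.prod id * b.val + a.val := by rwa [add_comm] at hpsum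
    exact hpa ((Nat.dvd_add_right (hpt.mul_right _)).1 hpsum')


variable {K K' : Type*} [CommRing K] [CommRing K']

/-- Adds `w`-multiples of the rows to the last row (`w` should vanish at the last index). -/
def rowOpE {m : ℕ} (K : Type*) [CommRing K] (w : Fin (m + 1) → K) :
    Matrix (Fin (m + 1)) (Fin (m + 1)) K :=
  1 + Matrix.of (fun i j => if i = Fin.last m then w j else 0)

/-- Adds `z`-multiples of the last row to the rows (`z` should vanish at the last index). -/
def colOpF {m : ℕ} (K : Type*) [CommRing K] (z : Fin (m + 1) → K) :
    Matrix (Fin (m + 1)) (Fin (m + 1)) K :=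
  1 + Matrix.of (fun i j => if j = Fin.last m then z i else 0)

lemma rowOpE_det {m : ℕ} (w : Fin (m + 1) → K) (hw : w (Fin.last m) = 0) :
    (rowOpE K w).det = 1 := by
  have h : (rowOpE K w).BlockTriangular OrderDual.toDual := by
    intro i j hij
    have hij' : (i : Fin (m + 1)) < j := hij
    simp only [rowOpE, Matrix.add_apply, Matrix.one_apply, Matrix.of_apply]
    rw [if_neg hij'.ne, if_neg (hij'.trans_le (Fin.le_last j)).ne, add_zero]
  rw [Matrix.det_of_lowerTriangular _ h]
  apply Finset.prod_eq_one
  intro i _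
  by_cases hi : i = Fin.last m <;>
    simp [rowOpE, hi, hw]
lemma colOpF_det {m : ℕ} (z : Fin (m + 1) → K) (hz : z (Fin.last m) = 0) :
    (colOpF K z).det = 1 := by
  have h : (colOpF K z).BlockTriangular id := by
    intro i j hij
    have hij' : (j : Fin (m + 1)) < i := hij
    simp only [colOpF, Matrix.add_apply, Matrix.one_apply, Matrix.of_apply]
    rw [if_neg hij'.ne', if_neg (hij'.trans_le (Fin.le_last i)).ne, add_zero]
  rw [Matrix.det_of_upperTriangular h]
  apply Finset.prod_eq_one
  intro i _
  by_cases hi : i = Fin.last m <;>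
    simp [colOpF, hi, hz]

lemma rowOpE_map {m : ℕ} (w : Fin (m + 1) → K) (f : K →+* K') :
    (rowOpE K w).map f = rowOpE K' (f ∘ w) := by
  ext i j
  simp only [rowOpE, Matrix.map_apply, Matrix.add_apply, Matrix.one_apply, Matrix.of_apply,
    Function.comp_apply]
  rw [map_add, apply_ite f, map_zero, apply_ite f, map_zero, _root_.map_one]

lemma colOpF_map {m : ℕ} (z : Fin (m + 1) → K) (f : K →+* K') :
    (colOpF K z).map f = colOpF K' (f ∘ z) := by
  ext i j
  simp only [colOpF, Matrix.map_apply, Matrix.add_apply, Matrix.one_apply, Matrix.of_apply,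
    Function.comp_apply]
  rw [map_add, apply_ite f, map_zero, apply_ite f, map_zero, _root_.map_one]

lemma rowOpE_mul_apply {m : ℕ} {nt : Type*} [Fintype nt] (w : Fin (m + 1) → K)
    (R : Matrix (Fin (m + 1)) nt K) (i : Fin (m + 1)) (j : nt) :
    (rowOpE K w * R) i j =
      R i j + (if i = Fin.last m then ∑ k, w k * R k j else 0) := by
  rw [rowOpE, Matrix.add_mul, Matrix.one_mul, Matrix.add_apply]
  congr 1
  rw [Matrix.mul_apply]
  by_cases hi : i = Fin.last m <;> simp [hi]

lemma colOpF_mul_apply {m : ℕ} {nt : Type*} [Fintype nt] (z : Fin (m + 1) → K)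
    (R : Matrix (Fin (m + 1)) nt K) (i : Fin (m + 1)) (j : nt) :
    (colOpF K z * R) i j = R i j + z i * R (Fin.last m) j := by
  rw [colOpF, Matrix.add_mul, Matrix.one_mul, Matrix.add_apply]
  congr 1
  rw [Matrix.mul_apply]
  simp [ite_mul, Finset.sum_ite_eq' Finset.univ (Fin.last m)]

/-- Extends an `m × m` matrix to an `(m+1) × (m+1)` matrix with a `1` in the corner. -/
def extOne {m : ℕ} (K : Type*) [CommRing K] (M : Matrix (Fin m) (Fin m) K) :
    Matrix (Fin (m + 1)) (Fin (m + 1)) K :=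
  (Matrix.fromBlocks M 0 0 (1 : Matrix (Fin 1) (Fin 1) K)).submatrix
    finSumFinEquiv.symm finSumFinEquiv.symm

lemma extOne_det {m : ℕ} (M : Matrix (Fin m) (Fin m) K) : (extOne K M).det = M.det := by
  rw [extOne, Matrix.det_submatrix_equiv_self, Matrix.det_fromBlocks_zero₂₁, Matrix.det_one,
    mul_one]

lemma extOne_map {m : ℕ} (M : Matrix (Fin m) (Fin m) K) (f : K →+* K') :
    (extOne K M).map f = extOne K' (M.map f) := by
  rw [extOne, extOne, ← Matrix.submatrix_map, Matrix.fromBlocks_map]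
  congr 2 <;> ext i j <;> simp [Matrix.one_apply, apply_ite f]

lemma finSumFinEquiv_castSucc {m : ℕ} (i : Fin m) :
    finSumFinEquiv (Sum.inl i : Fin m ⊕ Fin 1) = i.castSucc := by
  rw [finSumFinEquiv_apply_left]
  ext
  simp

lemma finSumFinEquiv_last {m : ℕ} :
    finSumFinEquiv (Sum.inr 0 : Fin m ⊕ Fin 1) = Fin.last m := by
  rw [finSumFinEquiv_apply_right]
  ext
  simp [Fin.last]

lemma extOne_apply_castSucc_castSucc {m : ℕ} (M : Matrix (Fin m) (Fin m) K)
    (i k : Fin m) : extOne K M (Fin.castSucc i) (Fin.castSucc k) = M i k := by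
  rw [extOne, Matrix.submatrix_apply, ← finSumFinEquiv_castSucc, Equiv.symm_apply_apply,
    ← finSumFinEquiv_castSucc, Equiv.symm_apply_apply]
  rfl

lemma extOne_apply_castSucc_last {m : ℕ} (M : Matrix (Fin m) (Fin m) K)
    (i : Fin m) : extOne K M (Fin.castSucc i) (Fin.last m) = 0 := by
  rw [extOne, Matrix.submatrix_apply, ← finSumFinEquiv_castSucc, Equiv.symm_apply_apply,
    ← finSumFinEquiv_last, Equiv.symm_apply_apply]
  rfl

lemma extOne_mul_apply_castSucc {m : ℕ} {nt : Type*} [Fintype nt]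
    (M : Matrix (Fin m) (Fin m) K) (R : Matrix (Fin (m + 1)) nt K) (i : Fin m) (j : nt) :
    (extOne K M * R) (Fin.castSucc i) j = ∑ k : Fin m, M i k * R (Fin.castSucc k) j := by
  rw [Matrix.mul_apply, ← finSumFinEquiv.sum_comp, Fintype.sum_sum_type, Fin.sum_univ_one]
  simp only [finSumFinEquiv_castSucc, finSumFinEquiv_last, extOne_apply_castSucc_castSucc,
    extOne_apply_castSucc_last, zero_mul, add_zero]

lemma castval {q : ℕ} [NeZero q] (x : ZMod q) : (((x.val : ℤ) : ZMod q)) = x := by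
  push_cast
  simp [ZMod.natCast_val, ZMod.cast_id]

lemma surj_vecMul_mul {mt nt : Type*} [Fintype mt] [DecidableEq mt] [Fintype nt]
    {K : Type*} [CommRing K] (G : Matrix mt mt K) (hG : IsUnit G.det)
    {R : Matrix mt nt K} (hR : Function.Surjective fun c => Matrix.vecMul c R) :
    Function.Surjective fun c => Matrix.vecMul c (G * R) := by
  intro t
  obtain ⟨c, hc⟩ := hR t
  refine ⟨Matrix.vecMul c G⁻¹, ?_⟩
  show Matrix.vecMul (Matrix.vecMul c G⁻¹) (G * R) = t
  rw [Matrix.vecMul_vecMul, ← Matrix.mul_assoc, Matrix.nonsing_inv_mul G hG, Matrix.one_mul]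
  exact hc

lemma KL (q : ℕ) (hq : 0 < q) (k : ℕ) : ∀ (n : ℕ) (R : Matrix (Fin (k + n)) (Fin n) (ZMod q)),
    Function.Surjective (fun c => Matrix.vecMul c R) →
    ∃ M : Matrix (Fin (k + n)) (Fin (k + n)) ℤ, M.det = 1 ∧
      ∀ (i : Fin (k + n)) (j : Fin n), (i : ℕ) < k →
        ((M.map (Int.cast : ℤ → ZMod q)) * R) i j = 0 := by
  haveI : NeZero q := ⟨hq.ne'⟩
  intro n
  induction n with
  | zero => exact fun R _ => ⟨1, Matrix.det_one, fun i j _ => j.elim0⟩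
  | succ n ih =>
    intro R hR
    change Matrix (Fin (k + n + 1)) (Fin (n + 1)) (ZMod q) at R
    change Function.Surjective fun c : Fin (k + n + 1) → ZMod q => Matrix.vecMul c R at hR
    show ∃ M : Matrix (Fin (k + n + 1)) (Fin (k + n + 1)) ℤ, M.det = 1 ∧
      ∀ (i : Fin (k + n + 1)) (j : Fin (n + 1)), (i : ℕ) < k →
        ((M.map (Int.cast : ℤ → ZMod q)) * R) i j = 0
    set L : Fin (k + n + 1) := Fin.last (k + n) with hLdef
    obtain ⟨c, hc⟩ := hR (Pi.single 0 1)
    have hc0 : ∑ i, c i * R i 0 = 1 := by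
      have h := congrFun hc 0
      simpa [Matrix.vecMul, dotProduct] using h
    set a : ZMod q := R L 0 with ha
    set b : ZMod q := ∑ i ∈ Finset.univ.erase L, c i * R i 0 with hb
    have hab : a * c L + b = 1 := by
      rw [← hc0, ← Finset.add_sum_erase _ _ (Finset.mem_univ L), mul_comm]
    obtain ⟨t, hu⟩ := zmod_sr1 hq a b (c L) hab
    set w : Fin (k + n + 1) → ZMod q := fun i => if i = L then 0 else t * c i with hw
    have hwL : w L = 0 := by simp [hw]
    set R1 : Matrix (Fin (k + n + 1)) (Fin (n + 1)) (ZMod q) := rowOpE (ZMod q) w * R with hR1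
    have hR1i : ∀ (i : Fin (k + n + 1)), i ≠ L → ∀ j, R1 i j = R i j := by
      intro i hi j
      rw [hR1, rowOpE_mul_apply, if_neg hi, add_zero]
    have hR1L0 : R1 L 0 = a + t * b := by
      rw [hR1, rowOpE_mul_apply, if_pos rfl, ← ha]
      congr 1
      rw [hb, Finset.mul_sum, ← Finset.sum_erase_add _ _ (Finset.mem_univ L)]
      simp only [hwL, zero_mul, add_zero]
      apply Finset.sum_congr rfl
      intro i hi
      rw [hw]
      simp only [if_neg (Finset.mem_erase.1 hi).1]
      ring
    obtain ⟨u, huu⟩ := hu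
    rw [hR1L0.symm] at huu
    set z : Fin (k + n + 1) → ZMod q := fun i => if i = L then 0 else -(R1 i 0) * ↑u⁻¹ with hz
    have hzL : z L = 0 := by simp [hz]
    set R2 : Matrix (Fin (k + n + 1)) (Fin (n + 1)) (ZMod q) := colOpF (ZMod q) z * R1 with hR2
    have hR2i0 : ∀ (i : Fin (k + n + 1)), i ≠ L → R2 i 0 = 0 := by
      intro i hi
      rw [hR2, colOpF_mul_apply, hz]
      simp only [if_neg hi]
      rw [← hLdef, ← huu]
      rw [mul_assoc, Units.inv_mul, mul_one, add_neg_cancel]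
    have hR2L : ∀ j, R2 L j = R1 L j := by
      intro j
      rw [hR2, colOpF_mul_apply, hzL, zero_mul, add_zero]
    have hR2L0 : R2 L 0 = ↑u := by rw [hR2L, huu]
    have hR2surj : Function.Surjective (fun c => Matrix.vecMul c R2) := by
      rw [hR2, hR1]
      exact surj_vecMul_mul _ (by rw [colOpF_det _ hzL]; exact isUnit_one)
        (surj_vecMul_mul _ (by rw [rowOpE_det _ hwL]; exact isUnit_one) hR)
    set R3 : Matrix (Fin (k + n)) (Fin n) (ZMod q) := R2.submatrix Fin.castSucc Fin.succ with hR3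
    have hR3surj : Function.Surjective (fun c => Matrix.vecMul c R3) := by
      intro tt
      obtain ⟨c', hc'⟩ := hR2surj (Fin.cons 0 tt)
      have hcL : c' L = 0 := by
        have h0 := congrFun hc' 0
        simp only [Matrix.vecMul, dotProduct, Fin.cons_zero] at h0
        rw [← Finset.sum_erase_add _ _ (Finset.mem_univ L)] at h0
        have : ∀ i ∈ Finset.univ.erase L, c' i * R2 i 0 = 0 := by
          intro i hi
          rw [hR2i0 i (Finset.mem_erase.1 hi).1, mul_zero]
        rw [Finset.sum_congr rfl this, Finset.sum_const_zero, zero_add, hR2L0] at h0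
        exact (Units.mul_left_eq_zero u).1 h0
      refine ⟨fun i => c' (Fin.castSucc i), ?_⟩
      funext j
      have hj := congrFun hc' (Fin.succ j)
      simp only [Matrix.vecMul, dotProduct, Fin.cons_succ] at hj ⊢
      rw [Fin.sum_univ_castSucc, hcL, zero_mul, add_zero] at hj
      exact hj
    obtain ⟨M', hdet', hM'⟩ := ih R3 hR3surj
    set wZ : Fin (k + n + 1) → ℤ := fun i => ((w i).val : ℤ) with hwZ
    set zZ : Fin (k + n + 1) → ℤ := fun i => ((z i).val : ℤ) with hzZ
    have hwZL : wZ L = 0 := by simp [hwZ, hwL]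
    have hzZL : zZ L = 0 := by simp [hzZ, hzL]
    refine ⟨extOne ℤ M' * colOpF ℤ zZ * rowOpE ℤ wZ, ?_, ?_⟩
    · rw [Matrix.det_mul, Matrix.det_mul, extOne_det, hdet', colOpF_det _ hzZL,
        rowOpE_det _ hwZL]
      ring
    · intro i j hik
      have hmap : (extOne ℤ M' * colOpF ℤ zZ * rowOpE ℤ wZ).map
          (Int.cast : ℤ → ZMod q) * R = extOne (ZMod q) (M'.map (Int.cast : ℤ → ZMod q)) * R2 := by
        have h1 : (extOne ℤ M' * colOpF ℤ zZ * rowOpE ℤ wZ).map (Int.cast : ℤ → ZMod q)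
            = (extOne ℤ M').map (Int.castRingHom (ZMod q)) *
              (colOpF ℤ zZ).map (Int.castRingHom (ZMod q)) *
              (rowOpE ℤ wZ).map (Int.castRingHom (ZMod q)) := by
          have hcoe : (Int.cast : ℤ → ZMod q) = ⇑(Int.castRingHom (ZMod q)) := rfl
          rw [hcoe, Matrix.map_mul, Matrix.map_mul]
        rw [h1, extOne_map, colOpF_map, rowOpE_map]
        have hwc : (Int.castRingHom (ZMod q)) ∘ wZ = w := by
          funext i
          simp [hwZ, castval]
        have hzc : (Int.castRingHom (ZMod q)) ∘ zZ = z := by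
          funext i
          simp [hzZ, castval]
        rw [hwc, hzc, hR2, hR1, Matrix.mul_assoc, Matrix.mul_assoc]
        rfl
      rw [hmap]
      have hiL : i ≠ L := by
        intro h
        rw [h] at hik
        simp only [hLdef, Fin.val_last] at hik
        omega
      obtain ⟨i₀, rfl⟩ : ∃ i₀ : Fin (k + n), i = Fin.castSucc i₀ :=
        ⟨i.castPred hiL, (Fin.castSucc_castPred i hiL).symm⟩
      rw [extOne_mul_apply_castSucc]
      refine Fin.cases ?_ ?_ j
      · apply Finset.sum_eq_zero
        intro kk _
        rw [hR2i0 (Fin.castSucc kk) (by simp [hLdef, Fin.ext_iff, Fin.lt_iff_val_lt_val]; omega),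
          mul_zero]
      · intro j₀
        have := hM' i₀ j₀ (by simpa using hik)
        rw [Matrix.mul_apply] at this
        rw [← this]
        apply Finset.sum_congr rfl
        intro kk _
        rw [hR3, Matrix.submatrix_apply]

lemma red_mul {it : Type*} [Fintype it] [DecidableEq it] {q : ℕ} (X Y : Matrix it it ℤ) :
    (X * Y).map (Int.cast : ℤ → ZMod q) = X.map Int.cast * Y.map Int.cast := by
  have hcoe : (Int.cast : ℤ → ZMod q) = ⇑(Int.castRingHom (ZMod q)) := rfl
  rw [hcoe, Matrix.map_mul]

lemma red_one {it : Type*} [Fintype it] [DecidableEq it] {q : ℕ} :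
    (1 : Matrix it it ℤ).map (Int.cast : ℤ → ZMod q) = 1 :=
  Matrix.map_one _ (by simp) (by simp)

lemma red_det {it : Type*} [Fintype it] [DecidableEq it] {q : ℕ} (X : Matrix it it ℤ) :
    (X.map (Int.cast : ℤ → ZMod q)).det = (X.det : ZMod q) :=
  (RingHom.map_det (Int.castRingHom (ZMod q)) X).symm

lemma span_iff_surj {mt nt : Type*} [Fintype mt] [Fintype nt] {K : Type*} [CommRing K]
    (R : Matrix mt nt K) :
    Submodule.span K (Set.range fun i => R i) = ⊤ ↔
      Function.Surjective fun c => Matrix.vecMul c R := by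
  have h : ⇑(R.vecMulLinear) = fun c => Matrix.vecMul c R := funext fun c => by
    simp [Matrix.vecMulLinear_apply]
  rw [show (Set.range fun i => R i) = Set.range R.row from rfl, ← range_vecMulLinear,
    LinearMap.range_eq_top, h]

lemma bottom_block {K : Type*} [CommRing K] {dn n : ℕ}
    (X : Matrix (Fin dn ⊕ Fin n) (Fin n) K)
    (h0 : ∀ i j, X (Sum.inl i) j = 0)
    (hs : Function.Surjective fun c => Matrix.vecMul c X) :
    ∃ U : (Matrix (Fin n) (Fin n) K)ˣ,
      X = Matrix.fromRows 0 (U : Matrix (Fin n) (Fin n) K) := by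
  set U : Matrix (Fin n) (Fin n) K := Matrix.of fun i j => X (Sum.inr i) j with hU
  choose cs hcs using fun j => hs (Pi.single j 1)
  set V : Matrix (Fin n) (Fin n) K := Matrix.of fun j k => cs j (Sum.inr k) with hV
  have hVU : V * U = 1 := by
    ext j j'
    rw [Matrix.mul_apply]
    have h := congrFun (hcs j) j'
    simp only [Matrix.vecMul, dotProduct] at h
    rw [Fintype.sum_sum_type] at h
    have hz : ∀ i : Fin dn, cs j (Sum.inl i) * X (Sum.inl i) j' = 0 := by
      intro i
      rw [h0, mul_zero]
    rw [Finset.sum_congr rfl (fun i _ => hz i), Finset.sum_const_zero, zero_add] at h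
    have hid : ∑ kk : Fin n, V j kk * U kk j'
        = ∑ kk : Fin n, cs j (Sum.inr kk) * X (Sum.inr kk) j' := rfl
    rw [hid, h, Matrix.one_apply, Pi.single_apply]
    simp [eq_comm]
  refine ⟨⟨U, V, mul_eq_one_comm.1 hVU, hVU⟩, ?_⟩
  ext (i | i) j
  · simp [h0, Matrix.fromRows_apply_inl]
  · simp [Matrix.fromRows_apply_inr, hU]

lemma KL_sum (q : ℕ) (hq : 0 < q) (k n : ℕ) (R : Matrix (Fin k ⊕ Fin n) (Fin n) (ZMod q))
    (hRs : Function.Surjective fun c => Matrix.vecMul c R) :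
    ∃ M : Matrix (Fin k ⊕ Fin n) (Fin k ⊕ Fin n) ℤ, M.det = 1 ∧
      ∀ i j, ((M.map (Int.cast : ℤ → ZMod q)) * R) (Sum.inl i) j = 0 := by
  set e := finSumFinEquiv (m := k) (n := n) with he
  set R' : Matrix (Fin (k + n)) (Fin n) (ZMod q) := R.submatrix e.symm id with hR'
  have hRR : R = R'.submatrix e id := by
    ext i j
    simp [hR']
  have hsurj' : Function.Surjective fun c => Matrix.vecMul c R' := by
    intro t
    obtain ⟨c, hc⟩ := hRs t
    refine ⟨c ∘ e.symm, ?_⟩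
    funext j
    have hcj := congrFun hc j
    have h2 := e.symm.sum_comp (fun s => c s * R s j)
    simp only [Matrix.vecMul, dotProduct, Function.comp_apply, hR',
      Matrix.submatrix_apply, id_eq] at hcj h2 ⊢
    rw [h2]
    exact hcj
  obtain ⟨M, hdet, hM⟩ := KL q hq k n R' hsurj'
  refine ⟨M.submatrix e e, ?_, ?_⟩
  · rw [Matrix.det_submatrix_equiv_self]
    exact hdet
  · intro i j
    have hmm : (M.submatrix e e).map (Int.cast : ℤ → ZMod q) * R
        = ((M.map (Int.cast : ℤ → ZMod q)) * R').submatrix e id := by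
      rw [hRR, ← Matrix.submatrix_map, Matrix.submatrix_mul_equiv]
    rw [hmm, Matrix.submatrix_apply, id_eq]
    apply hM
    rw [he, finSumFinEquiv_apply_left]
    simpa using i.isLt

/-- The congruence subgroup `Γ⁰(q) ⊆ SL_d(ℤ)` (`d = (d−n) + n`): block matrices
`(A B; ᵗC D)` whose top-right `(d−n)×n` block `B` vanishes mod `q`. -/
def Gamma0 (d n q : ℕ) : Set (Matrix.SpecialLinearGroup (Fin (d - n) ⊕ Fin n) ℤ) :=
  {γ | ∀ (i : Fin (d - n)) (j : Fin n), (q : ℤ) ∣ γ.val (Sum.inl i) (Sum.inr j)}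

/-- The map `(γ, U) ↦ γ⁻¹·(0; U) mod q`. -/
def paramMap (d n q : ℕ)
    (x : Matrix.SpecialLinearGroup (Fin (d - n) ⊕ Fin n) ℤ ×
          (Matrix (Fin n) (Fin n) (ZMod q))ˣ) :
    Matrix (Fin (d - n) ⊕ Fin n) (Fin n) (ZMod q) :=
  ((x.1⁻¹).val.map (Int.cast : ℤ → ZMod q)) *
    Matrix.fromRows (0 : Matrix (Fin (d - n)) (Fin n) (ZMod q))
      (x.2 : Matrix (Fin n) (Fin n) (ZMod q))

lemma paramMap_eq (d n q : ℕ) (γ : Matrix.SpecialLinearGroup (Fin (d - n) ⊕ Fin n) ℤ)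
    (U : (Matrix (Fin n) (Fin n) (ZMod q))ˣ) :
    paramMap d n q (γ, U) = ((γ⁻¹).val.map (Int.cast : ℤ → ZMod q)) *
      Matrix.fromRows (0 : Matrix (Fin (d - n)) (Fin n) (ZMod q))
        (U : Matrix (Fin n) (Fin n) (ZMod q)) := rfl

/-- If `B_q` contains exactly one element from each right coset `Γ⁰(q)γ` in `SL_d(ℤ)`,
then `(γ, U) ↦ γ⁻¹·(0; U) mod q` is injective on `B_q × GL_n(ℤ/qℤ)`, with image exactly
the set of `q`-primitive matrices in `M_{d×n}(ℤ/qℤ)`. -/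
theorem param_of_primitive_matrices (d n q : ℕ) (hn : 1 ≤ n) (hnd : n < d) (hq : 0 < q)
    (B : Set (Matrix.SpecialLinearGroup (Fin (d - n) ⊕ Fin n) ℤ))
    (hB : ∀ γ : Matrix.SpecialLinearGroup (Fin (d - n) ⊕ Fin n) ℤ,
      ∃! b, b ∈ B ∧ b * γ⁻¹ ∈ Gamma0 d n q) :
    Set.InjOn (paramMap d n q) (B ×ˢ Set.univ) ∧
    paramMap d n q '' (B ×ˢ Set.univ) =
      {R : Matrix (Fin (d - n) ⊕ Fin n) (Fin n) (ZMod q) |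
        Submodule.span (ZMod q) (Set.range fun i => R i) = ⊤} := by
  haveI : NeZero q := ⟨hq.ne'⟩
  have hred_inv : ∀ γ : Matrix.SpecialLinearGroup (Fin (d - n) ⊕ Fin n) ℤ,
      (γ.val.map (Int.cast : ℤ → ZMod q)) * ((γ⁻¹).val.map (Int.cast : ℤ → ZMod q)) = 1 := by
    intro γ
    rw [← red_mul, ← Matrix.SpecialLinearGroup.coe_mul, mul_inv_cancel,
      Matrix.SpecialLinearGroup.coe_one, red_one]
  have hred_inv' : ∀ γ : Matrix.SpecialLinearGroup (Fin (d - n) ⊕ Fin n) ℤ,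
      ((γ⁻¹).val.map (Int.cast : ℤ → ZMod q)) * (γ.val.map (Int.cast : ℤ → ZMod q)) = 1 := by
    intro γ
    rw [← red_mul, ← Matrix.SpecialLinearGroup.coe_mul, inv_mul_cancel,
      Matrix.SpecialLinearGroup.coe_one, red_one]
  constructor
  · -- Injectivity
    rintro ⟨γ, U⟩ hx ⟨γ', U'⟩ hy hxy
    have hxB : γ ∈ B := (Set.mem_prod.1 hx).1
    have hyB : γ' ∈ B := (Set.mem_prod.1 hy).1
    have h2 : (γ'.val.map (Int.cast : ℤ → ZMod q)) * paramMap d n q (γ', U')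
        = Matrix.fromRows 0 (U' : Matrix (Fin n) (Fin n) (ZMod q)) := by
      rw [paramMap_eq, ← Matrix.mul_assoc, hred_inv γ', Matrix.one_mul]
    have h3 : (((γ' * γ⁻¹).val).map (Int.cast : ℤ → ZMod q)) *
        Matrix.fromRows (0 : Matrix (Fin (d - n)) (Fin n) (ZMod q)) (U : Matrix (Fin n) (Fin n) (ZMod q))
        = Matrix.fromRows 0 (U' : Matrix (Fin n) (Fin n) (ZMod q)) := by
      rw [Matrix.SpecialLinearGroup.coe_mul, red_mul, Matrix.mul_assoc, ← paramMap_eq, hxy, h2]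
    set N := (((γ' * γ⁻¹).val).map (Int.cast : ℤ → ZMod q)) with hN
    have hBn : ∀ i k, N (Sum.inl i) (Sum.inr k) = 0 := by
      have hBU : (Matrix.of fun i k => N (Sum.inl i) (Sum.inr k)) *
          (U : Matrix (Fin n) (Fin n) (ZMod q)) = 0 := by
        ext i j
        have h := congrFun (congrFun h3 (Sum.inl i)) j
        rw [Matrix.mul_apply, Fintype.sum_sum_type] at h
        simp only [Matrix.fromRows_apply_inl, Matrix.zero_apply, mul_zero,
          Finset.sum_const_zero, zero_add, Matrix.fromRows_apply_inr] at h
        rw [Matrix.mul_apply, Matrix.zero_apply]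
        exact h
      have hz : (Matrix.of fun i k => N (Sum.inl i) (Sum.inr k)) =
          (0 : Matrix (Fin (d - n)) (Fin n) (ZMod q)) := by
        calc (Matrix.of fun i k => N (Sum.inl i) (Sum.inr k))
            = (Matrix.of fun i k => N (Sum.inl i) (Sum.inr k)) *
              ((U : Matrix (Fin n) (Fin n) (ZMod q)) * ↑U⁻¹) := by
              rw [Units.mul_inv, Matrix.mul_one]
          _ = ((Matrix.of fun i k => N (Sum.inl i) (Sum.inr k)) *
              (U : Matrix (Fin n) (Fin n) (ZMod q))) * (↑U⁻¹ : Matrix (Fin n) (Fin n) (ZMod q)) := by rw [Matrix.mul_assoc]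
          _ = 0 := by rw [hBU, Matrix.zero_mul]
      intro i k
      exact congrFun (congrFun hz i) k
    have hmem : γ' * γ⁻¹ ∈ Gamma0 d n q := by
      intro i j
      have h := hBn i j
      rw [hN, Matrix.map_apply, ZMod.intCast_zmod_eq_zero_iff_dvd] at h
      exact_mod_cast h
    have hone : γ * γ⁻¹ ∈ Gamma0 d n q := by
      rw [mul_inv_cancel]
      intro i j
      rw [Matrix.SpecialLinearGroup.coe_one, Matrix.one_apply_ne (by simp)]
      exact dvd_zero _
    obtain ⟨bb, _, huniq⟩ := hB γ
    have e1 : γ' = bb := huniq γ' ⟨hyB, hmem⟩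
    have e2 : γ = bb := huniq γ ⟨hxB, hone⟩
    have hγ : γ = γ' := e2.trans e1.symm
    have hUU : Matrix.fromRows (0 : Matrix (Fin (d - n)) (Fin n) (ZMod q))
          (U : Matrix (Fin n) (Fin n) (ZMod q))
        = Matrix.fromRows (0 : Matrix (Fin (d - n)) (Fin n) (ZMod q))
          (U' : Matrix (Fin n) (Fin n) (ZMod q)) := by
      have l := congrArg (fun (Z : Matrix (Fin (d - n) ⊕ Fin n) (Fin n) (ZMod q)) => (γ.val.map (Int.cast : ℤ → ZMod q)) * Z) hxy
      rw [hγ] at l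
      calc Matrix.fromRows (0 : Matrix (Fin (d - n)) (Fin n) (ZMod q))
            (U : Matrix (Fin n) (Fin n) (ZMod q))
          = (γ'.val.map (Int.cast : ℤ → ZMod q)) * paramMap d n q (γ', U) := by
            rw [paramMap_eq, ← Matrix.mul_assoc, hred_inv γ', Matrix.one_mul]
        _ = (γ'.val.map (Int.cast : ℤ → ZMod q)) * paramMap d n q (γ', U') := by
            rw [paramMap_eq d n q γ' U, ← l, paramMap_eq]
        _ = _ := h2
    have hU : U = U' := by
      apply Units.ext
      ext k j
      exact congrFun (congrFun hUU (Sum.inr k)) j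
    rw [Prod.mk.injEq]
    exact ⟨hγ, hU⟩
  · -- Image
    ext R
    simp only [Set.mem_image, Set.mem_setOf_eq]
    constructor
    · rintro ⟨⟨γ, U⟩, hmem, rfl⟩
      rw [span_iff_surj]
      have hdet : IsUnit (((γ⁻¹).val.map (Int.cast : ℤ → ZMod q)).det) := by
        rw [red_det, (γ⁻¹).prop, Int.cast_one]
        exact isUnit_one
      have hFU : Function.Surjective fun c => Matrix.vecMul c
          (Matrix.fromRows (0 : Matrix (Fin (d - n)) (Fin n) (ZMod q))
            (U : Matrix (Fin n) (Fin n) (ZMod q))) := by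
        intro t
        refine ⟨Sum.elim 0 (Matrix.vecMul t ↑U⁻¹), ?_⟩
        show Matrix.vecMul _ (Matrix.fromRows _ _) = t
        rw [Matrix.sumElim_vecMul_fromRows, Matrix.zero_vecMul, Matrix.vecMul_vecMul,
          Units.inv_mul, Matrix.vecMul_one, zero_add]
      exact surj_vecMul_mul _ hdet hFU
    · intro hR
      have hsurj := (span_iff_surj R).1 hR
      obtain ⟨M, hdet, hM⟩ := KL_sum q hq (d - n) n R hsurj
      set σ : Matrix.SpecialLinearGroup (Fin (d - n) ⊕ Fin n) ℤ := ⟨M, hdet⟩ with hσ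
      obtain ⟨γ, ⟨hγB, hγc⟩, -⟩ := hB σ
      set G := γ.val.map (Int.cast : ℤ → ZMod q) with hG
      have hXtop : ∀ i j, (G * R) (Sum.inl i) j = 0 := by
        intro i j
        have hfac : G = (((γ * σ⁻¹).val).map (Int.cast : ℤ → ZMod q)) *
            (M.map (Int.cast : ℤ → ZMod q)) := by
          have hv : γ.val = (γ * σ⁻¹).val * M :=
            calc γ.val = ((γ * σ⁻¹) * σ).val := by rw [inv_mul_cancel_right]
              _ = (γ * σ⁻¹).val * σ.val := Matrix.SpecialLinearGroup.coe_mul _ _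
              _ = (γ * σ⁻¹).val * M := rfl
          rw [hG, hv, red_mul]
        rw [hfac, Matrix.mul_assoc, Matrix.mul_apply, Fintype.sum_sum_type]
        have hz1 : ∀ x : Fin (d - n), (((γ * σ⁻¹).val).map (Int.cast : ℤ → ZMod q))
            (Sum.inl i) (Sum.inl x) * ((M.map (Int.cast : ℤ → ZMod q)) * R) (Sum.inl x) j
            = 0 := by
          intro x
          rw [hM x j, mul_zero]
        have hz2 : ∀ x : Fin n, (((γ * σ⁻¹).val).map (Int.cast : ℤ → ZMod q))
            (Sum.inl i) (Sum.inr x) * ((M.map (Int.cast : ℤ → ZMod q)) * R) (Sum.inr x) j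
            = 0 := by
          intro x
          have hc0 : (((γ * σ⁻¹).val).map (Int.cast : ℤ → ZMod q)) (Sum.inl i) (Sum.inr x)
              = 0 := by
            rw [Matrix.map_apply, ZMod.intCast_zmod_eq_zero_iff_dvd]
            exact_mod_cast hγc i x
          rw [hc0, zero_mul]
        rw [Finset.sum_congr rfl (fun x _ => hz1 x), Finset.sum_congr rfl (fun x _ => hz2 x),
          Finset.sum_const_zero, Finset.sum_const_zero, add_zero]
      have hXsurj : Function.Surjective fun c => Matrix.vecMul c (G * R) :=
        surj_vecMul_mul G (by rw [hG, red_det, γ.prop, Int.cast_one]; exact isUnit_one) hsurj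
      obtain ⟨U, hU⟩ := bottom_block (G * R) hXtop hXsurj
      refine ⟨(γ, U), Set.mem_prod.2 ⟨hγB, Set.mem_univ _⟩, ?_⟩
      show ((γ⁻¹).val.map (Int.cast : ℤ → ZMod q)) * Matrix.fromRows 0
        (U : Matrix (Fin n) (Fin n) (ZMod q)) = R
      rw [← hU, ← Matrix.mul_assoc, hred_inv' γ, Matrix.one_mul]

end
end

section
/- Let n ≥ 1 and r ≥ 1 be integers, let q₁, …, q_r be pairwise coprime positive integers and let q = ∏_{j=1}^r q_j. For each j, let c_j ∈ ℤ satisfy c_j·∏_{i≠j} q_i ≡ 1 (mod q_j). Then for all A, B ∈ M_n(ℤ): K_n(A, B; q) = ∏_{j=1}^r K_n(c_j·A, c_j·B; q_j). -/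
open scoped BigOperators

/-- The matrix Kloosterman sum `K_n(A,B;q)`:
the sum over `X ∈ GL_n(ℤ/qℤ)` of `e^{2πi·tr(ĀX + B̄X⁻¹)/q}`,
where `Ā, B̄` are the reductions of `A, B` modulo `q`.
(We set it to `0` in the degenerate case `q = 0`.) -/
noncomputable def Kl (n q : ℕ) (A B : Matrix (Fin n) (Fin n) ℤ) : ℂ :=
  if h : q = 0 then 0
  else
    letI : NeZero q := ⟨h⟩
    ∑ X : (Matrix (Fin n) (Fin n) (ZMod q))ˣ,
      Complex.exp (2 * (Real.pi : ℂ) * Complex.I *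
        (((Matrix.trace
            ((A.map (Int.cast : ℤ → ZMod q)) * (X : Matrix (Fin n) (Fin n) (ZMod q)) +
              (B.map (Int.cast : ℤ → ZMod q)) *
                ((X⁻¹ : (Matrix (Fin n) (Fin n) (ZMod q))ˣ) :
                  Matrix (Fin n) (Fin n) (ZMod q)))).val : ℂ) / (q : ℂ)))

/-- Units of a pi monoid are the pi of units. -/
def myPiUnits {ι : Type*} {M : ι → Type*} [∀ i, Monoid (M i)] :
    (∀ i, M i)ˣ ≃* ∀ i, (M i)ˣ where
  toFun u i := ⟨u.val i, u.inv i, congrFun u.val_inv i, congrFun u.inv_val i⟩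
  invFun x := ⟨fun i => (x i).val, fun i => (x i).inv,
    funext fun i => (x i).val_inv, funext fun i => (x i).inv_val⟩
  left_inv u := Units.ext rfl
  right_inv x := funext fun i => Units.ext rfl
  map_mul' u v := rfl

/-- Matrices over a pi ring are the pi of matrix rings. -/
def myMatrixPi {ι : Type*} (R : ι → Type*) [∀ i, Semiring (R i)]
    {m : Type*} [Fintype m] [DecidableEq m] :
    Matrix m m (∀ i, R i) ≃+* ∀ i, Matrix m m (R i) where
  toFun M i := M.map (fun v => v i)
  invFun f := Matrix.of (fun a b i => f i a b)
  left_inv M := rfl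
  right_inv f := rfl
  map_add' M N := rfl
  map_mul' M N := by
    funext i
    ext a b
    simp [Matrix.mul_apply, Matrix.map_apply, Finset.sum_apply]

noncomputable def eZ (q : ℕ) (a : ℤ) : ℂ :=
  Complex.exp (2 * (Real.pi : ℂ) * Complex.I * a / q)

lemma eZ_add (q : ℕ) (a b : ℤ) : eZ q (a + b) = eZ q a * eZ q b := by
  rw [eZ, eZ, eZ, ← Complex.exp_add, Int.cast_add, mul_add, add_div]

lemma eZ_zero (q : ℕ) : eZ q 0 = 1 := by simp [eZ]

lemma eZ_sum (q : ℕ) {ι : Type*} (s : Finset ι) (f : ι → ℤ) :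
    eZ q (∑ i ∈ s, f i) = ∏ i ∈ s, eZ q (f i) := by
  classical
  induction s using Finset.cons_induction with
  | empty => simp [eZ_zero]
  | cons i s hi ih => rw [Finset.sum_cons, Finset.prod_cons, eZ_add, ih]

lemma eZ_congr {q : ℕ} (hq : q ≠ 0) {a b : ℤ} (h : a ≡ b [ZMOD (q : ℤ)]) :
    eZ q a = eZ q b := by
  obtain ⟨k, hk⟩ := Int.ModEq.dvd h
  have hb : (b : ℂ) = a + q * k := by
    have : (b : ℤ) = a + q * k := by linarith [hk]
    exact_mod_cast congrArg (Int.cast : ℤ → ℂ) this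
  have hq' : (q : ℂ) ≠ 0 := Nat.cast_ne_zero.mpr hq
  rw [eZ, eZ, hb]
  rw [show 2 * (Real.pi : ℂ) * Complex.I * ((a : ℂ) + q * k) / q
      = 2 * (Real.pi : ℂ) * Complex.I * a / q + k * (2 * Real.pi * Complex.I) by
    field_simp]
  rw [Complex.exp_add, Complex.exp_int_mul_two_pi_mul_I, mul_one]

lemma key_sum_congr (r : ℕ) (qf : Fin r → ℕ) (hqf : ∀ j, 0 < qf j)
    (hcop : ∀ i j, i ≠ j → Nat.Coprime (qf i) (qf j)) (c : Fin r → ℤ)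
    (hc : ∀ j, (c j * ∏ i ∈ Finset.univ.erase j, (qf i : ℤ)) ≡ 1 [ZMOD (qf j : ℤ)]) :
    (∑ j, c j * ∏ i ∈ Finset.univ.erase j, (qf i : ℤ)) ≡ 1 [ZMOD ((∏ i, qf i : ℕ) : ℤ)] := by
  have hdvd : ((∏ i, qf i : ℕ) : ℤ) ∣
      (∑ j, c j * ∏ i ∈ Finset.univ.erase j, (qf i : ℤ)) - 1 := by
    push_cast
    refine Fintype.prod_dvd_of_coprime
      (fun i j hij => (Int.isCoprime_iff_gcd_eq_one).mpr ?_) (fun j => ?_)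
    · simpa [Int.gcd_natCast_natCast] using hcop i j hij
    · -- qf j divides the sum minus 1
      have h1 : (qf j : ℤ) ∣
          (c j * ∏ i ∈ Finset.univ.erase j, (qf i : ℤ)) - 1 :=
        Int.ModEq.dvd (hc j).symm
      have h2 : (qf j : ℤ) ∣
          ∑ i ∈ Finset.univ.erase j, c i * ∏ k ∈ Finset.univ.erase i, (qf k : ℤ) := by
        refine Finset.dvd_sum fun i hi => Dvd.dvd.mul_left ?_ _
        exact Finset.dvd_prod_of_mem _
          (Finset.mem_erase.mpr ⟨(Finset.mem_erase.mp hi).1.symm, Finset.mem_univ _⟩)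
      have h3 : (∑ i, c i * ∏ k ∈ Finset.univ.erase i, (qf k : ℤ))
          = c j * (∏ k ∈ Finset.univ.erase j, (qf k : ℤ))
            + ∑ i ∈ Finset.univ.erase j, c i * ∏ k ∈ Finset.univ.erase i, (qf k : ℤ) :=
        (Finset.add_sum_erase Finset.univ
          (fun i => c i * ∏ k ∈ Finset.univ.erase i, (qf k : ℤ)) (Finset.mem_univ j)).symm
      rw [h3, add_sub_right_comm]
      exact dvd_add h1 h2
  exact (Int.modEq_iff_dvd.mpr (by simpa using hdvd)).symm

lemma key_exp (r : ℕ) (qf : Fin r → ℕ) (hqf : ∀ j, 0 < qf j)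
    (hcop : ∀ i j, i ≠ j → Nat.Coprime (qf i) (qf j)) (c : Fin r → ℤ)
    (hc : ∀ j, (c j * ∏ i ∈ Finset.univ.erase j, (qf i : ℤ)) ≡ 1 [ZMOD (qf j : ℤ)])
    (m : ℤ) :
    eZ (∏ i, qf i) m = ∏ j, eZ (qf j) (c j * m) := by
  have hq0 : (∏ i, qf i) ≠ 0 := (Finset.prod_pos (fun i _ => hqf i)).ne'
  have h1 : eZ (∏ i, qf i) m
      = eZ (∏ i, qf i) ((∑ j, c j * ∏ i ∈ Finset.univ.erase j, (qf i : ℤ)) * m) := by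
    refine eZ_congr hq0 ?_
    calc m = 1 * m := (one_mul m).symm
    _ ≡ (∑ j, c j * ∏ i ∈ Finset.univ.erase j, (qf i : ℤ)) * m [ZMOD _] :=
      Int.ModEq.mul_right m (key_sum_congr r qf hqf hcop c hc).symm
  rw [h1, Finset.sum_mul, eZ_sum]
  refine Finset.prod_congr rfl fun j _ => ?_
  -- eZ q (c j * Q j * m) = eZ (qf j) (c j * m)
  have hq : ((∏ i, qf i : ℕ) : ℤ) = (qf j : ℤ) * ∏ i ∈ Finset.univ.erase j, (qf i : ℤ) := by
    push_cast
    rw [← Finset.mul_prod_erase _ _ (Finset.mem_univ j)]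
  have hQ0 : (∏ i ∈ Finset.univ.erase j, (qf i : ℤ)) ≠ 0 := by
    refine Finset.prod_ne_zero_iff.mpr fun i _ => ?_
    exact_mod_cast (hqf i).ne'
  have hqj0 : ((qf j : ℕ) : ℂ) ≠ 0 := Nat.cast_ne_zero.mpr (hqf j).ne'
  rw [eZ, eZ]
  congr 1
  have hqc : ((∏ i, qf i : ℕ) : ℂ) = (qf j : ℂ) * ((∏ i ∈ Finset.univ.erase j, (qf i : ℤ) : ℤ) : ℂ) := by
    exact_mod_cast congrArg (Int.cast : ℤ → ℂ) hq
  rw [hqc]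
  have hQ0' : ((∏ i ∈ Finset.univ.erase j, (qf i : ℤ) : ℤ) : ℂ) ≠ 0 := by
    exact_mod_cast hQ0
  rw [div_eq_div_iff (mul_ne_zero hqj0 hQ0') hqj0]
  push_cast
  ring

lemma Kl_eq (n q : ℕ) [NeZero q] (A B : Matrix (Fin n) (Fin n) ℤ) :
    Kl n q A B =
      ∑ X : (Matrix (Fin n) (Fin n) (ZMod q))ˣ,
        Complex.exp (2 * (Real.pi : ℂ) * Complex.I *
          (((Matrix.trace
              ((A.map (Int.cast : ℤ → ZMod q)) * (X : Matrix (Fin n) (Fin n) (ZMod q)) +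
                (B.map (Int.cast : ℤ → ZMod q)) *
                  ((X⁻¹ : (Matrix (Fin n) (Fin n) (ZMod q))ˣ) :
                    Matrix (Fin n) (Fin n) (ZMod q)))).val : ℂ) / (q : ℂ))) := by
  rw [Kl, dif_neg (NeZero.ne q)]

/-- Multiplicativity of matrix Kloosterman sums: if `q = q₁ ⋯ q_r` with the `q_j`
pairwise coprime, and `c_j · ∏_{i ≠ j} q_i ≡ 1 (mod q_j)`, then
`K_n(A, B; q) = ∏_j K_n(c_j A, c_j B; q_j)`. -/
theorem matrix_kloosterman_multiplicative
    (n r : ℕ) (hn : 1 ≤ n) (hr : 1 ≤ r)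
    (qf : Fin r → ℕ) (hqf : ∀ j, 0 < qf j)
    (hcop : ∀ i j, i ≠ j → Nat.Coprime (qf i) (qf j))
    (c : Fin r → ℤ)
    (hc : ∀ j, (c j * ∏ i ∈ Finset.univ.erase j, (qf i : ℤ)) ≡ 1 [ZMOD (qf j : ℤ)])
    (A B : Matrix (Fin n) (Fin n) ℤ) :
    Kl n (∏ i, qf i) A B = ∏ j, Kl n (qf j) (c j • A) (c j • B) := by
  classical
  have hpair : Pairwise (Function.onFun Nat.Coprime qf) := fun i j h => hcop i j h
  have hq0 : (∏ i, qf i) ≠ 0 := (Finset.prod_pos fun i _ => hqf i).ne'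
  haveI : NeZero (∏ i, qf i) := ⟨hq0⟩
  haveI instQ : ∀ j, NeZero (qf j) := fun j => ⟨(hqf j).ne'⟩
  set q : ℕ := ∏ i, qf i with hqdef
  have hdvd : ∀ j, qf j ∣ q := fun j => Finset.dvd_prod_of_mem _ (Finset.mem_univ j)
  let e : ZMod q ≃+* ∀ j, ZMod (qf j) := ZMod.prodEquivPi qf hpair
  let ht : Matrix (Fin n) (Fin n) (ZMod q) ≃+* ∀ j, Matrix (Fin n) (Fin n) (ZMod (qf j)) :=
    e.mapMatrix.trans (myMatrixPi _)
  let Φ : (Matrix (Fin n) (Fin n) (ZMod q))ˣ ≃* ∀ j, (Matrix (Fin n) (Fin n) (ZMod (qf j)))ˣ :=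
    (Units.mapEquiv ht.toMulEquiv).trans myPiUnits
  have hcomp : ∀ j (y : ZMod q), e y j = ZMod.castHom (hdvd j) (ZMod (qf j)) y := by
    intro j y
    have h : (Pi.evalRingHom (fun j => ZMod (qf j)) j).comp e.toRingHom
        = ZMod.castHom (hdvd j) (ZMod (qf j)) := RingHom.ext_zmod _ _
    exact RingHom.congr_fun h y
  -- component formula for Φ
  have hΦval : ∀ (X : (Matrix (Fin n) (Fin n) (ZMod q))ˣ) (j : Fin r),
      ((Φ X j : (Matrix (Fin n) (Fin n) (ZMod (qf j)))ˣ) :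
        Matrix (Fin n) (Fin n) (ZMod (qf j)))
      = (X : Matrix (Fin n) (Fin n) (ZMod q)).map
          (ZMod.castHom (hdvd j) (ZMod (qf j))) := by
    intro X j
    ext a b
    show e ((X : Matrix (Fin n) (Fin n) (ZMod q)) a b) j = _
    rw [hcomp]
    rfl
  have hΦinv : ∀ (X : (Matrix (Fin n) (Fin n) (ZMod q))ˣ) (j : Fin r),
      (Φ X j)⁻¹ = Φ X⁻¹ j := by
    intro X j
    rw [map_inv]
    rfl
  -- rewrite both sides
  rw [Kl_eq]
  have hRHS : ∀ j, Kl n (qf j) (c j • A) (c j • B) =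
      ∑ X : (Matrix (Fin n) (Fin n) (ZMod (qf j)))ˣ,
        Complex.exp (2 * (Real.pi : ℂ) * Complex.I *
          (((Matrix.trace
              (((c j • A).map (Int.cast : ℤ → ZMod (qf j))) *
                  (X : Matrix (Fin n) (Fin n) (ZMod (qf j))) +
                ((c j • B).map (Int.cast : ℤ → ZMod (qf j))) *
                  ((X⁻¹ : (Matrix (Fin n) (Fin n) (ZMod (qf j)))ˣ) :
                    Matrix (Fin n) (Fin n) (ZMod (qf j))))).val : ℂ) / (qf j : ℂ))) :=
    fun j => Kl_eq n (qf j) _ _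
  rw [Finset.prod_congr rfl (fun j _ => hRHS j)]
  rw [Finset.prod_univ_sum]
  rw [Fintype.piFinset_univ]
  refine Fintype.sum_equiv Φ.toEquiv _ _ (fun X => ?_)
  rw [show ⇑Φ.toEquiv = ⇑Φ from rfl]
  -- pointwise identity
  set t : ZMod q := Matrix.trace
      ((A.map (Int.cast : ℤ → ZMod q)) * (X : Matrix (Fin n) (Fin n) (ZMod q)) +
        (B.map (Int.cast : ℤ → ZMod q)) *
          ((X⁻¹ : (Matrix (Fin n) (Fin n) (ZMod q))ˣ) :
            Matrix (Fin n) (Fin n) (ZMod q))) with htdef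
  have htrace : ∀ j, Matrix.trace
      (((c j • A).map (Int.cast : ℤ → ZMod (qf j))) *
          ((Φ X j : (Matrix (Fin n) (Fin n) (ZMod (qf j)))ˣ) :
            Matrix (Fin n) (Fin n) (ZMod (qf j))) +
        ((c j • B).map (Int.cast : ℤ → ZMod (qf j))) *
          (((Φ X j)⁻¹ : (Matrix (Fin n) (Fin n) (ZMod (qf j)))ˣ) :
            Matrix (Fin n) (Fin n) (ZMod (qf j))))
      = ((c j : ZMod (qf j))) * ZMod.castHom (hdvd j) (ZMod (qf j)) t := by
    intro j
    have hsmulA : ((c j • A).map (Int.cast : ℤ → ZMod (qf j)))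
        = (c j : ZMod (qf j)) • (A.map (Int.cast : ℤ → ZMod (qf j))) := by
      ext a b
      simp only [Matrix.map_apply, Matrix.smul_apply, smul_eq_mul]
      push_cast
      rfl
    have hsmulB : ((c j • B).map (Int.cast : ℤ → ZMod (qf j)))
        = (c j : ZMod (qf j)) • (B.map (Int.cast : ℤ → ZMod (qf j))) := by
      ext a b
      simp only [Matrix.map_apply, Matrix.smul_apply, smul_eq_mul]
      push_cast
      rfl
    have hmapA : (A.map (Int.cast : ℤ → ZMod q)).map (ZMod.castHom (hdvd j) (ZMod (qf j)))
        = A.map (Int.cast : ℤ → ZMod (qf j)) := by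
      ext a b
      simp [Matrix.map_apply]
    have hmapB : (B.map (Int.cast : ℤ → ZMod q)).map (ZMod.castHom (hdvd j) (ZMod (qf j)))
        = B.map (Int.cast : ℤ → ZMod (qf j)) := by
      ext a b
      simp [Matrix.map_apply]
    have hXiv : (((Φ X j)⁻¹ : (Matrix (Fin n) (Fin n) (ZMod (qf j)))ˣ) :
          Matrix (Fin n) (Fin n) (ZMod (qf j)))
        = ((X⁻¹ : (Matrix (Fin n) (Fin n) (ZMod q))ˣ) :
            Matrix (Fin n) (Fin n) (ZMod q)).map (ZMod.castHom (hdvd j) (ZMod (qf j))) := by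
      rw [hΦinv X j, hΦval X⁻¹ j]
    rw [hΦval X j, hXiv, hsmulA, hsmulB, Matrix.smul_mul, Matrix.smul_mul, ← smul_add,
      Matrix.trace_smul, smul_eq_mul]
    congr 1
    rw [htdef, AddMonoidHom.map_trace (ZMod.castHom (hdvd j) (ZMod (qf j))) _]
    congr 1
    rw [Matrix.map_add _ (fun x y => map_add _ x y), Matrix.map_mul, Matrix.map_mul, hmapA, hmapB]
  have hfact : ∀ j, Complex.exp (2 * (Real.pi : ℂ) * Complex.I *
          (((Matrix.trace
              (((c j • A).map (Int.cast : ℤ → ZMod (qf j))) *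
                  ((Φ X j : (Matrix (Fin n) (Fin n) (ZMod (qf j)))ˣ) :
                    Matrix (Fin n) (Fin n) (ZMod (qf j))) +
                ((c j • B).map (Int.cast : ℤ → ZMod (qf j))) *
                  (((Φ X j)⁻¹ : (Matrix (Fin n) (Fin n) (ZMod (qf j)))ˣ) :
                    Matrix (Fin n) (Fin n) (ZMod (qf j))))).val : ℂ) / (qf j : ℂ)))
      = Complex.exp (2 * (Real.pi : ℂ) * Complex.I *
          ((((c j : ZMod (qf j)) * ZMod.castHom (hdvd j) (ZMod (qf j)) t).val : ℂ) /
            (qf j : ℂ))) := fun j => by rw [htrace j]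
  rw [Finset.prod_congr rfl (fun j _ => hfact j)]
  calc Complex.exp (2 * (Real.pi : ℂ) * Complex.I * ((t.val : ℂ) / (q : ℂ)))
      = eZ q (t.val : ℤ) := by rw [eZ]; push_cast; rw [mul_div_assoc]
    _ = ∏ j, eZ (qf j) (c j * (t.val : ℤ)) := key_exp r qf hqf hcop c hc _
    _ = ∏ j, Complex.exp (2 * (Real.pi : ℂ) * Complex.I *
          ((((c j : ZMod (qf j)) * ZMod.castHom (hdvd j) (ZMod (qf j)) t).val : ℂ) /
            (qf j : ℂ))) := by
        refine Finset.prod_congr rfl fun j _ => ?_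
        have hcongr : (c j * (t.val : ℤ)) ≡
            (((c j : ZMod (qf j)) * ZMod.castHom (hdvd j) (ZMod (qf j)) t).val : ℤ)
            [ZMOD (qf j : ℤ)] := by
          rw [← ZMod.intCast_eq_intCast_iff]
          push_cast
          have hr1 : ((((c j : ZMod (qf j)) * ZMod.castHom (hdvd j) (ZMod (qf j)) t).val : ℕ)
              : ZMod (qf j)) = (c j : ZMod (qf j)) * ZMod.castHom (hdvd j) (ZMod (qf j)) t := by
            rw [ZMod.natCast_val, ZMod.cast_id]
          rw [hr1]
          congr 1
          have h5 : ((t.val : ℕ) : ZMod q) = t := by rw [ZMod.natCast_val, ZMod.cast_id]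
          calc ((t.val : ℕ) : ZMod (qf j))
              = ZMod.castHom (hdvd j) (ZMod (qf j)) ((t.val : ℕ) : ZMod q) :=
                (map_natCast _ _).symm
            _ = ZMod.castHom (hdvd j) (ZMod (qf j)) t := by rw [h5]
        rw [eZ_congr (hqf j).ne' hcongr, eZ]
        push_cast
        rw [mul_div_assoc]
end

section
/- Let n ≥ 1 and q be a positive integer, let A, B ∈ M_n(ℤ), and let ℓ be a positive integer such that ℓ·∏_{p prime, p∣q} p divides q. Assume ℓ divides every entry of B. Then: if ℓ does not divide every entry of A, then K_n(A, B; q) = 0; and if ℓ divides every entry of A, then K_n(A, B; q) = ℓ^{n²}·K_n(ℓ^{−1}A, ℓ^{−1}B; q/ℓ), where ℓ^{−1}A and ℓ^{−1}B denote the integer matrices obtained by dividing every entry by ℓ. -/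
open scoped BigOperators


namespace MKaux

noncomputable def eChar (q : ℕ) (x : ZMod q) : ℂ :=
  Complex.exp (2 * (Real.pi : ℂ) * Complex.I * ((x.val : ℂ) / q))

lemma eChar_natCast {q : ℕ} (hq : q ≠ 0) (m : ℕ) :
    eChar q ((m : ZMod q)) =
      Complex.exp (2 * (Real.pi : ℂ) * Complex.I * ((m : ℂ) / q)) := by
  have hqC : (q : ℂ) ≠ 0 := Nat.cast_ne_zero.mpr hq
  unfold eChar
  rw [ZMod.val_natCast]
  have hm : 2 * (Real.pi : ℂ) * Complex.I * ((m : ℂ) / q)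
      = 2 * (Real.pi : ℂ) * Complex.I * (((m % q : ℕ) : ℂ) / q)
        + ((m / q : ℕ) : ℂ) * (2 * (Real.pi : ℂ) * Complex.I) := by
    conv_lhs => rw [← Nat.mod_add_div m q]
    push_cast
    field_simp
  rw [hm, Complex.exp_add, Complex.exp_nat_mul_two_pi_mul_I, mul_one]

lemma eChar_zero {q : ℕ} (hq : q ≠ 0) : eChar q 0 = 1 := by
  haveI := NeZero.mk hq
  simp [eChar]

lemma eChar_add {q : ℕ} (hq : q ≠ 0) (x y : ZMod q) :
    eChar q (x + y) = eChar q x * eChar q y := by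
  haveI := NeZero.mk hq
  have hqC : (q : ℂ) ≠ 0 := Nat.cast_ne_zero.mpr hq
  have hx := ZMod.natCast_rightInverse (n := q) x
  have hy := ZMod.natCast_rightInverse (n := q) y
  rw [← hx, ← hy, ← Nat.cast_add, eChar_natCast hq, eChar_natCast hq, eChar_natCast hq,
    ← Complex.exp_add]
  congr 1
  push_cast
  ring

lemma eChar_sum {q : ℕ} (hq : q ≠ 0) {ι : Type*} (s : Finset ι) (f : ι → ZMod q) :
    eChar q (∑ i ∈ s, f i) = ∏ i ∈ s, eChar q (f i) := by
  classical
  induction s using Finset.cons_induction with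
  | empty => simpa using eChar_zero hq
  | cons a s ha ih =>
    rw [Finset.sum_cons, Finset.prod_cons, eChar_add hq, ih]

lemma eChar_eq_one_iff {q : ℕ} (hq : q ≠ 0) (x : ZMod q) :
    eChar q x = 1 ↔ x = 0 := by
  haveI := NeZero.mk hq
  constructor
  · intro h
    rw [eChar, Complex.exp_eq_one_iff] at h
    obtain ⟨k, hk⟩ := h
    have hπ : (2 : ℂ) * (Real.pi : ℂ) * Complex.I ≠ 0 := by
      simp [Real.pi_ne_zero, Complex.I_ne_zero]
    have hk2 : (2 * (Real.pi : ℂ) * Complex.I) * ((x.val : ℂ) / q)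
        = (2 * (Real.pi : ℂ) * Complex.I) * k := by linear_combination hk
    have hk' : ((x.val : ℂ) / q) = k := mul_left_cancel₀ hπ hk2
    have hqC : (q : ℂ) ≠ 0 := Nat.cast_ne_zero.mpr hq
    have hv : (x.val : ℂ) = k * q := (div_eq_iff hqC).mp hk'
    have hvz : (x.val : ℤ) = k * q := by exact_mod_cast hv
    have hdvd : (q : ℤ) ∣ (x.val : ℤ) := ⟨k, by rw [hvz, mul_comm]⟩
    have hdvd' : q ∣ x.val := by exact_mod_cast hdvd
    have hv0 : x.val = 0 := Nat.eq_zero_of_dvd_of_lt hdvd' (ZMod.val_lt x)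
    exact (ZMod.val_eq_zero x).mp hv0
  · rintro rfl; exact eChar_zero hq


lemma charSum {ℓ : ℕ} [NeZero ℓ] (a : ZMod ℓ) :
    ∑ t : ZMod ℓ, eChar ℓ (a * t) = if a = 0 then (ℓ : ℂ) else 0 := by
  have hℓ : ℓ ≠ 0 := NeZero.ne ℓ
  by_cases ha : a = 0
  · subst ha
    simp only [zero_mul, eChar_zero hℓ, if_pos rfl]
    simp [Finset.card_univ, ZMod.card]
  · rw [if_neg ha]
    have hshift : ∑ t : ZMod ℓ, eChar ℓ (a * t)
        = ∑ t : ZMod ℓ, eChar ℓ a * eChar ℓ (a * t) := by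
      refine Fintype.sum_equiv (Equiv.addRight (-1 : ZMod ℓ)) _ _ (fun t => ?_)
      show eChar ℓ (a * t) = eChar ℓ a * eChar ℓ (a * (t + -1))
      have h : a * t = a * (t + -1) + a := by ring
      rw [h, eChar_add hℓ]
      ring
    rw [← Finset.mul_sum] at hshift
    have hne : eChar ℓ a ≠ 1 := fun h => ha ((eChar_eq_one_iff hℓ a).mp h)
    have hS : (1 - eChar ℓ a) * (∑ t : ZMod ℓ, eChar ℓ (a * t)) = 0 := by
      linear_combination hshift
    rcases mul_eq_zero.mp hS with h | h
    · exact absurd (by linear_combination -h) hne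
    · exact h

lemma eChar_q'_mul {q ℓ q' : ℕ} (hℓ : ℓ ≠ 0) (hq' : q' ≠ 0) (hfac : q = ℓ * q')
    (w : ZMod q) (t : ZMod ℓ) (hdl : ℓ ∣ q) :
    eChar q ((q' : ZMod q) * w * ((t.val : ℕ) : ZMod q))
      = eChar ℓ ((ZMod.castHom hdl (ZMod ℓ) w) * t) := by
  have hq0 : q ≠ 0 := by simp [hfac, hℓ, hq']
  haveI := NeZero.mk hq0
  haveI := NeZero.mk hℓ
  have hw : ((w.val : ℕ) : ZMod q) = w := ZMod.natCast_rightInverse w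
  have ht : ((t.val : ℕ) : ZMod ℓ) = t := ZMod.natCast_rightInverse t
  have hcast : (ZMod.castHom hdl (ZMod ℓ) w) = ((w.val : ℕ) : ZMod ℓ) := by
    rw [ZMod.castHom_apply, ← ZMod.natCast_val]
  have h1 : (q' : ZMod q) * w * ((t.val : ℕ) : ZMod q)
      = ((q' * w.val * t.val : ℕ) : ZMod q) := by
    push_cast
    rw [hw]
  have h2 : (ZMod.castHom hdl (ZMod ℓ) w) * t = ((w.val * t.val : ℕ) : ZMod ℓ) := by
    push_cast
    rw [hcast, ht]
  rw [h1, h2, eChar_natCast hq0, eChar_natCast hℓ]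
  congr 1
  have hq'C : (q' : ℂ) ≠ 0 := Nat.cast_ne_zero.mpr hq'
  have hℓC : (ℓ : ℂ) ≠ 0 := Nat.cast_ne_zero.mpr hℓ
  have hqC : ((q : ℕ) : ℂ) = (ℓ : ℂ) * (q' : ℂ) := by rw [hfac]; push_cast; ring
  rw [hqC]
  push_cast
  field_simp

lemma eChar_ell_mul {q ℓ q' : ℕ} (hℓ : ℓ ≠ 0) (hq' : q' ≠ 0) (hfac : q = ℓ * q')
    (w : ZMod q') :
    eChar q ((ℓ : ZMod q) * ((w.val : ℕ) : ZMod q)) = eChar q' w := by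
  have hq0 : q ≠ 0 := by simp [hfac, hℓ, hq']
  have h1 : (ℓ : ZMod q) * ((w.val : ℕ) : ZMod q) = ((ℓ * w.val : ℕ) : ZMod q) := by
    push_cast; ring
  rw [h1, eChar_natCast hq0]
  unfold eChar
  congr 1
  have hq'C : (q' : ℂ) ≠ 0 := Nat.cast_ne_zero.mpr hq'
  have hℓC : (ℓ : ℂ) ≠ 0 := Nat.cast_ne_zero.mpr hℓ
  have hqC : ((q : ℕ) : ℂ) = (ℓ : ℂ) * (q' : ℂ) := by rw [hfac]; push_cast; ring
  rw [hqC]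
  push_cast
  field_simp

lemma ell_mul_eq {q ℓ q' : ℕ} (hℓ : ℓ ≠ 0) (hq' : q' ≠ 0) (hfac : q = ℓ * q')
    (hdq : q' ∣ q) (z : ZMod q) :
    (ℓ : ZMod q) * z
      = (ℓ : ZMod q) * (((ZMod.castHom hdq (ZMod q') z).val : ℕ) : ZMod q) := by
  have hq0 : q ≠ 0 := by simp [hfac, hℓ, hq']
  haveI := NeZero.mk hq0
  haveI := NeZero.mk hq'
  have hz : ((z.val : ℕ) : ZMod q) = z := ZMod.natCast_rightInverse z
  have hcast : (ZMod.castHom hdq (ZMod q') z) = ((z.val : ℕ) : ZMod q') := by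
    rw [ZMod.castHom_apply, ← ZMod.natCast_val]
  have hval : (ZMod.castHom hdq (ZMod q') z).val = z.val % q' := by
    rw [hcast, ZMod.val_natCast]
  calc (ℓ : ZMod q) * z = ((ℓ * z.val : ℕ) : ZMod q) := by
        rw [Nat.cast_mul, hz]
    _ = ((q * (z.val / q') + ℓ * (z.val % q') : ℕ) : ZMod q) := by
        congr 1
        calc ℓ * z.val = ℓ * (q' * (z.val / q') + z.val % q') := by rw [Nat.div_add_mod]
          _ = ℓ * q' * (z.val / q') + ℓ * (z.val % q') := by ring
          _ = q * (z.val / q') + ℓ * (z.val % q') := by rw [← hfac]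
    _ = (ℓ : ZMod q) * (((z.val % q' : ℕ)) : ZMod q) := by
        push_cast
        rw [ZMod.natCast_self]
        ring
    _ = (ℓ : ZMod q) * (((ZMod.castHom hdq (ZMod q') z).val : ℕ) : ZMod q) := by
        rw [hval]


lemma key_dvd {q ℓ q' : ℕ} (hq0 : q ≠ 0) (hq'0 : q' ≠ 0) (hfac : q = ℓ * q')
    (hrad : (∏ p ∈ q.primeFactors, p) ∣ q') : q ∣ q' ^ q := by
  rw [← Nat.factorization_le_iff_dvd hq0 (pow_ne_zero _ hq'0)]
  rw [Finsupp.le_iff]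
  intro p hp
  rw [Nat.support_factorization] at hp
  have hpp : p.Prime := Nat.prime_of_mem_primeFactors hp
  have hpq' : p ∣ q' := (Finset.dvd_prod_of_mem (fun x => x) hp).trans hrad
  have h1 : 0 < q'.factorization p := hpp.factorization_pos_of_dvd hq'0 hpq'
  have h2 : q.factorization p < q := Nat.factorization_lt p hq0
  rw [Nat.factorization_pow, Finsupp.smul_apply, smul_eq_mul]
  calc q.factorization p ≤ q := h2.le
    _ = q * 1 := (mul_one q).symm
    _ ≤ q * q'.factorization p := Nat.mul_le_mul_left q h1

lemma nilpotent_of_cast_eq_zero {q q' : ℕ} (hq0 : q ≠ 0) (hdq : q' ∣ q)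
    (hkd : q ∣ q' ^ q) {z : ZMod q}
    (hz : ZMod.castHom hdq (ZMod q') z = 0) : IsNilpotent z := by
  haveI := NeZero.mk hq0
  have hz' : ((z.val : ℕ) : ZMod q') = 0 := by
    rw [ZMod.natCast_val, ← ZMod.castHom_apply (h := hdq), hz]
  have hdvd : q' ∣ z.val := (ZMod.natCast_eq_zero_iff _ _).mp hz'
  obtain ⟨m, hm⟩ := hdvd
  refine ⟨q, ?_⟩
  have hzz : z = ((q' * m : ℕ) : ZMod q) := by
    rw [← hm]
    exact (ZMod.natCast_rightInverse z).symm
  rw [hzz, ← Nat.cast_pow, ZMod.natCast_eq_zero_iff]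
  calc q ∣ q' ^ q := hkd
    _ ∣ (q' * m) ^ q := pow_dvd_pow_of_dvd (dvd_mul_right _ _) q

lemma isUnit_of_cast_isUnit {q q' : ℕ} (hq0 : q ≠ 0) (hdq : q' ∣ q)
    (hkd : q ∣ q' ^ q) {x : ZMod q}
    (h : IsUnit (ZMod.castHom hdq (ZMod q') x)) : IsUnit x := by
  haveI := NeZero.mk hq0
  have hq'0 : q' ≠ 0 := by rintro rfl; exact hq0 (Nat.eq_zero_of_zero_dvd hdq)
  haveI := NeZero.mk hq'0
  set ψ := ZMod.castHom hdq (ZMod q') with hψ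
  set u := h.unit with hu
  set y : ZMod q := (((u⁻¹ : (ZMod q')ˣ) : ZMod q').val : ZMod q) with hy
  have hψy : ψ y = ((u⁻¹ : (ZMod q')ˣ) : ZMod q') := by
    rw [hy, map_natCast, ZMod.natCast_rightInverse]
  have hxy : ψ (x * y - 1) = 0 := by
    rw [map_sub, map_mul, map_one, hψy]
    have hx : ψ x = (u : ZMod q') := h.unit_spec.symm
    rw [hx, Units.mul_inv, sub_self]
  have hnil : IsNilpotent (x * y - 1) := nilpotent_of_cast_eq_zero hq0 hdq hkd hxy
  have hunit : IsUnit (x * y) := by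
    have := hnil.isUnit_add_one
    simpa using this
  exact isUnit_of_mul_isUnit_left hunit


section MatrixPart

variable {n : ℕ}

/-- entrywise lift of a matrix over `ZMod r` to `ZMod q` using `val`. -/
def up (q : ℕ) {r : ℕ} (Y : Matrix (Fin n) (Fin n) (ZMod r)) :
    Matrix (Fin n) (Fin n) (ZMod q) :=
  Matrix.of fun i j => (((Y i j).val : ℕ) : ZMod q)

/-- the fiber parametrization. -/
def FF (q q' ℓ : ℕ) (Y : Matrix (Fin n) (Fin n) (ZMod q'))
    (T : Matrix (Fin n) (Fin n) (ZMod ℓ)) : Matrix (Fin n) (Fin n) (ZMod q) :=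
  up q Y + (q' : ZMod q) • up q T

lemma up_apply {q r : ℕ} (Y : Matrix (Fin n) (Fin n) (ZMod r)) (i j : Fin n) :
    up q Y i j = (((Y i j).val : ℕ) : ZMod q) := rfl

lemma map_up {q q' : ℕ} (hq'0 : q' ≠ 0) (hdq : q' ∣ q)
    (Y : Matrix (Fin n) (Fin n) (ZMod q')) :
    (up q Y).map (ZMod.castHom hdq (ZMod q')) = Y := by
  haveI := NeZero.mk hq'0
  ext i j
  simp only [Matrix.map_apply, up_apply, map_natCast]
  exact ZMod.natCast_rightInverse (Y i j)

lemma map_FF {q q' ℓ : ℕ} (hq'0 : q' ≠ 0) (hdq : q' ∣ q)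
    (Y : Matrix (Fin n) (Fin n) (ZMod q')) (T : Matrix (Fin n) (Fin n) (ZMod ℓ)) :
    (FF q q' ℓ Y T).map (ZMod.castHom hdq (ZMod q')) = Y := by
  haveI := NeZero.mk hq'0
  ext i j
  simp only [FF, Matrix.map_apply, Matrix.add_apply, Matrix.smul_apply, up_apply,
    smul_eq_mul, map_add, map_mul, map_natCast, ZMod.natCast_self, zero_mul, add_zero]
  exact ZMod.natCast_rightInverse (Y i j)

lemma FF_zero {q q' ℓ : ℕ} (hℓ0 : ℓ ≠ 0) (Y : Matrix (Fin n) (Fin n) (ZMod q')) :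
    FF q q' ℓ Y (0 : Matrix (Fin n) (Fin n) (ZMod ℓ)) = up q Y := by
  haveI := NeZero.mk hℓ0
  unfold FF
  have : up q (0 : Matrix (Fin n) (Fin n) (ZMod ℓ)) = (0 : Matrix (Fin n) (Fin n) (ZMod q)) := by
    ext i j
    simp [up_apply]
  rw [this, smul_zero, add_zero]

lemma isUnit_FF {q q' ℓ : ℕ} (hq0 : q ≠ 0) (hq'0 : q' ≠ 0) (hdq : q' ∣ q)
    (hkd : q ∣ q' ^ q)
    {Y : Matrix (Fin n) (Fin n) (ZMod q')} (hY : IsUnit Y)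
    (T : Matrix (Fin n) (Fin n) (ZMod ℓ)) : IsUnit (FF q q' ℓ Y T) := by
  rw [Matrix.isUnit_iff_isUnit_det]
  refine isUnit_of_cast_isUnit hq0 hdq hkd ?_
  rw [RingHom.map_det]
  have : (ZMod.castHom hdq (ZMod q')).mapMatrix (FF q q' ℓ Y T) = Y := by
    rw [RingHom.mapMatrix_apply]
    exact map_FF hq'0 hdq Y T
  rw [this]
  exact (Matrix.isUnit_iff_isUnit_det Y).mp hY

lemma FF_apply {q q' ℓ : ℕ} (Y : Matrix (Fin n) (Fin n) (ZMod q'))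
    (T : Matrix (Fin n) (Fin n) (ZMod ℓ)) (i j : Fin n) :
    FF q q' ℓ Y T i j = ((((Y i j).val + q' * (T i j).val : ℕ)) : ZMod q) := by
  simp only [FF, Matrix.add_apply, Matrix.smul_apply, up_apply, smul_eq_mul]
  push_cast
  ring

lemma eps_lt {q q' ℓ : ℕ} (hℓ0 : ℓ ≠ 0) (hq'0 : q' ≠ 0) (hfac : q = ℓ * q')
    (y : ZMod q') (t : ZMod ℓ) : y.val + q' * t.val < q := by
  haveI := NeZero.mk hℓ0
  haveI := NeZero.mk hq'0
  have hy := ZMod.val_lt y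
  have ht := ZMod.val_lt t
  calc y.val + q' * t.val < q' + q' * t.val := by omega
    _ = q' * (t.val + 1) := by ring
    _ ≤ q' * ℓ := Nat.mul_le_mul_left q' (by omega)
    _ = q := by rw [hfac, mul_comm]

lemma eps_val {q q' ℓ : ℕ} (hℓ0 : ℓ ≠ 0) (hq'0 : q' ≠ 0) (hfac : q = ℓ * q')
    (y : ZMod q') (t : ZMod ℓ) :
    (((y.val + q' * t.val : ℕ)) : ZMod q).val = y.val + q' * t.val :=
  ZMod.val_cast_of_lt (eps_lt hℓ0 hq'0 hfac y t)

lemma val_injective {r : ℕ} [NeZero r] : Function.Injective (ZMod.val (n := r)) :=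
  (ZMod.natCast_rightInverse (n := r)).injective

lemma FF_bijective {n q q' ℓ : ℕ} (hq0 : q ≠ 0) (hℓ0 : ℓ ≠ 0) (hq'0 : q' ≠ 0)
    (hfac : q = ℓ * q') (hdq : q' ∣ q) (hkd : q ∣ q' ^ q) :
    Function.Bijective
      (fun p : (Matrix (Fin n) (Fin n) (ZMod q'))ˣ × Matrix (Fin n) (Fin n) (ZMod ℓ) =>
        (isUnit_FF hq0 hq'0 hdq hkd p.1.isUnit p.2).unit) := by
  haveI := NeZero.mk hq0
  haveI := NeZero.mk hℓ0
  haveI := NeZero.mk hq'0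
  constructor
  · rintro ⟨Y₁, T₁⟩ ⟨Y₂, T₂⟩ h
    have hval : FF q q' ℓ (Y₁ : Matrix (Fin n) (Fin n) (ZMod q')) T₁
        = FF q q' ℓ (Y₂ : Matrix (Fin n) (Fin n) (ZMod q')) T₂ := by
      have := congrArg (fun u : (Matrix (Fin n) (Fin n) (ZMod q))ˣ =>
        (u : Matrix (Fin n) (Fin n) (ZMod q))) h
      simpa [IsUnit.unit_spec] using this
    have hent : ∀ i j, (Y₁ : Matrix (Fin n) (Fin n) (ZMod q')) i j
          = (Y₂ : Matrix (Fin n) (Fin n) (ZMod q')) i j ∧ T₁ i j = T₂ i j := by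
      intro i j
      have h1 := congrFun (congrFun hval i) j
      rw [FF_apply, FF_apply] at h1
      have h2 := congrArg ZMod.val h1
      rw [eps_val hℓ0 hq'0 hfac, eps_val hℓ0 hq'0 hfac] at h2
      have hy1 := ZMod.val_lt ((Y₁ : Matrix (Fin n) (Fin n) (ZMod q')) i j)
      have hy2 := ZMod.val_lt ((Y₂ : Matrix (Fin n) (Fin n) (ZMod q')) i j)
      have hmod : ((Y₁ : Matrix (Fin n) (Fin n) (ZMod q')) i j).val
          = ((Y₂ : Matrix (Fin n) (Fin n) (ZMod q')) i j).val := by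
        have h3 := congrArg (fun x => x % q') h2
        simpa [Nat.add_mul_mod_self_left, Nat.mod_eq_of_lt hy1, Nat.mod_eq_of_lt hy2] using h3
      have hdiv : (T₁ i j).val = (T₂ i j).val := by
        have hq'pos : 0 < q' := Nat.pos_of_ne_zero hq'0
        have h3 := congrArg (fun x => x / q') h2
        simpa [Nat.add_mul_div_left _ _ hq'pos, Nat.div_eq_of_lt hy1,
          Nat.div_eq_of_lt hy2] using h3
      exact ⟨val_injective hmod, val_injective hdiv⟩
    have hYT : (Y₁ : Matrix (Fin n) (Fin n) (ZMod q')) = Y₂ ∧ T₁ = T₂ := by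
      constructor
      · ext i j; exact (hent i j).1
      · ext i j; exact (hent i j).2
    ext : 1
    · exact Units.ext hYT.1
    · exact hYT.2
  · intro u
    set Ψ : Matrix (Fin n) (Fin n) (ZMod q) →+* Matrix (Fin n) (Fin n) (ZMod q') :=
      (ZMod.castHom hdq (ZMod q')).mapMatrix with hΨ
    refine ⟨⟨Units.map Ψ.toMonoidHom u,
      Matrix.of fun i j =>
        ((((u : Matrix (Fin n) (Fin n) (ZMod q)) i j).val / q' : ℕ) : ZMod ℓ)⟩, ?_⟩
    apply Units.ext
    rw [IsUnit.unit_spec]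
    ext i j
    set z : ZMod q := (u : Matrix (Fin n) (Fin n) (ZMod q)) i j with hz
    have hYe : ((Units.map Ψ.toMonoidHom u : (Matrix (Fin n) (Fin n) (ZMod q'))ˣ)
        : Matrix (Fin n) (Fin n) (ZMod q')) i j = ZMod.castHom hdq (ZMod q') z := by
      rw [Units.coe_map]
      rfl
    rw [FF_apply, hYe]
    have hcv : (ZMod.castHom hdq (ZMod q') z).val = z.val % q' := by
      rw [ZMod.castHom_apply, ← ZMod.natCast_val, ZMod.val_natCast]
    have hT : ((((z.val / q' : ℕ)) : ZMod ℓ)).val = z.val / q' := by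
      rw [ZMod.val_natCast]
      apply Nat.mod_eq_of_lt
      rw [Nat.div_lt_iff_lt_mul (Nat.pos_of_ne_zero hq'0), ← hfac]
      exact ZMod.val_lt z
    show ((((ZMod.castHom hdq (ZMod q') z).val
        + q' * ((Matrix.of fun i j =>
            ((((u : Matrix (Fin n) (Fin n) (ZMod q)) i j).val / q' : ℕ) : ZMod ℓ)) i j).val : ℕ))
        : ZMod q) = z
    rw [hcv]
    have : ((Matrix.of fun i j =>
        ((((u : Matrix (Fin n) (Fin n) (ZMod q)) i j).val / q' : ℕ) : ZMod ℓ)) i j)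
        = (((z.val / q' : ℕ)) : ZMod ℓ) := rfl
    rw [this, hT, Nat.mod_add_div]
    exact ZMod.natCast_rightInverse z

end MatrixPart


lemma ellq'_zero {q ℓ q' : ℕ} (hfac : q = ℓ * q') :
    (ℓ : ZMod q) * (q' : ZMod q) = 0 := by
  have : ((ℓ * q' : ℕ) : ZMod q) = 0 := by rw [← hfac, ZMod.natCast_self]
  push_cast at this
  exact this

lemma master {n q ℓ q' : ℕ} [NeZero q] [NeZero ℓ] [NeZero q']
    (hfac : q = ℓ * q') (hdq : q' ∣ q) (hdl : ℓ ∣ q) (hkd : q ∣ q' ^ q)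
    (A B : Matrix (Fin n) (Fin n) ℤ) (hB : ∀ i j, (ℓ : ℤ) ∣ B i j) :
    Kl n q A B =
      (∏ i : Fin n, ∏ j : Fin n,
        ∑ t : ZMod ℓ, eChar ℓ (((A i j : ℤ) : ZMod ℓ) * t)) *
      ∑ Y : (Matrix (Fin n) (Fin n) (ZMod q'))ˣ,
        eChar q (Matrix.trace
          ((A.map (Int.cast : ℤ → ZMod q)) * up q (Y : Matrix (Fin n) (Fin n) (ZMod q')) +
           (B.map (Int.cast : ℤ → ZMod q)) *
             Ring.inverse (up q (Y : Matrix (Fin n) (Fin n) (ZMod q'))))) := by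
  have hq0 : q ≠ 0 := NeZero.ne q
  have hℓ0 : ℓ ≠ 0 := NeZero.ne ℓ
  have hq'0 : q' ≠ 0 := NeZero.ne q'
  set Aq : Matrix (Fin n) (Fin n) (ZMod q) := A.map (Int.cast : ℤ → ZMod q) with hAqdef
  set Bq : Matrix (Fin n) (Fin n) (ZMod q) := B.map (Int.cast : ℤ → ZMod q) with hBqdef
  set B' : Matrix (Fin n) (Fin n) ℤ := Matrix.of fun i j => B i j / (ℓ : ℤ) with hB'def
  set B'q : Matrix (Fin n) (Fin n) (ZMod q) := B'.map (Int.cast : ℤ → ZMod q) with hB'qdef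
  have hBq : Bq = (ℓ : ZMod q) • B'q := by
    ext i j
    simp only [hBqdef, hB'qdef, hB'def, Matrix.map_apply, Matrix.smul_apply, smul_eq_mul,
      Matrix.of_apply]
    conv_lhs => rw [← Int.mul_ediv_cancel' (hB i j)]
    push_cast
    ring
  -- step 0 : unfold Kl
  have step0 : Kl n q A B =
      ∑ X : (Matrix (Fin n) (Fin n) (ZMod q))ˣ,
        eChar q (Matrix.trace (Aq * (X : Matrix (Fin n) (Fin n) (ZMod q)) +
          Bq * ((X⁻¹ : (Matrix (Fin n) (Fin n) (ZMod q))ˣ) : Matrix (Fin n) (Fin n) (ZMod q)))) := by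
    unfold Kl eChar
    rw [dif_neg hq0]
  rw [step0]
  -- step 1 : reindex by the fiber bijection
  have hcoeeq : ∀ p : (Matrix (Fin n) (Fin n) (ZMod q'))ˣ × Matrix (Fin n) (Fin n) (ZMod ℓ),
      eChar q (Matrix.trace (Aq * (FF q q' ℓ (p.1 : Matrix (Fin n) (Fin n) (ZMod q')) p.2) +
        Bq * Ring.inverse (FF q q' ℓ (p.1 : Matrix (Fin n) (Fin n) (ZMod q')) p.2)))
      = eChar q (Matrix.trace
          (Aq * (((isUnit_FF hq0 hq'0 hdq hkd (p.1.isUnit) p.2).unit :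
              (Matrix (Fin n) (Fin n) (ZMod q))ˣ) : Matrix (Fin n) (Fin n) (ZMod q)) +
           Bq * ((((isUnit_FF hq0 hq'0 hdq hkd (p.1.isUnit) p.2).unit)⁻¹ :
              (Matrix (Fin n) (Fin n) (ZMod q))ˣ) : Matrix (Fin n) (Fin n) (ZMod q)))) := by
    rintro ⟨Y, T⟩
    have hval : (((isUnit_FF hq0 hq'0 hdq hkd (Y.isUnit) T).unit :
        (Matrix (Fin n) (Fin n) (ZMod q))ˣ) : Matrix (Fin n) (Fin n) (ZMod q))
        = FF q q' ℓ (Y : Matrix (Fin n) (Fin n) (ZMod q')) T := IsUnit.unit_spec _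
    have hinv : ((((isUnit_FF hq0 hq'0 hdq hkd (Y.isUnit) T).unit)⁻¹ :
        (Matrix (Fin n) (Fin n) (ZMod q))ˣ) : Matrix (Fin n) (Fin n) (ZMod q))
        = Ring.inverse (FF q q' ℓ (Y : Matrix (Fin n) (Fin n) (ZMod q')) T) := by
      rw [← Ring.inverse_unit, IsUnit.unit_spec]
    simp only [hval, hinv]
  have step1 := Fintype.sum_bijective _ (FF_bijective (n := n) hq0 hℓ0 hq'0 hfac hdq hkd)
    (fun p : (Matrix (Fin n) (Fin n) (ZMod q'))ˣ × Matrix (Fin n) (Fin n) (ZMod ℓ) =>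
      eChar q (Matrix.trace (Aq * (FF q q' ℓ (p.1 : Matrix (Fin n) (Fin n) (ZMod q')) p.2) +
        Bq * Ring.inverse (FF q q' ℓ (p.1 : Matrix (Fin n) (Fin n) (ZMod q')) p.2))))
    (fun X : (Matrix (Fin n) (Fin n) (ZMod q))ˣ =>
      eChar q (Matrix.trace (Aq * (X : Matrix (Fin n) (Fin n) (ZMod q)) +
        Bq * ((X⁻¹ : (Matrix (Fin n) (Fin n) (ZMod q))ˣ) : Matrix (Fin n) (Fin n) (ZMod q)))))
    hcoeeq
  rw [← step1]
  -- pointwise factorization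
  have hupunit : ∀ Y : (Matrix (Fin n) (Fin n) (ZMod q'))ˣ,
      IsUnit (up q (Y : Matrix (Fin n) (Fin n) (ZMod q'))) := by
    intro Y
    have := isUnit_FF (ℓ := ℓ) hq0 hq'0 hdq hkd (Y.isUnit) 0
    rwa [FF_zero hℓ0] at this
  have hpoint : ∀ (Y : (Matrix (Fin n) (Fin n) (ZMod q'))ˣ)
      (T : Matrix (Fin n) (Fin n) (ZMod ℓ)),
      eChar q (Matrix.trace (Aq * (FF q q' ℓ (Y : Matrix (Fin n) (Fin n) (ZMod q')) T) +
        Bq * Ring.inverse (FF q q' ℓ (Y : Matrix (Fin n) (Fin n) (ZMod q')) T)))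
      = eChar q (Matrix.trace (Aq * up q (Y : Matrix (Fin n) (Fin n) (ZMod q')) +
          Bq * Ring.inverse (up q (Y : Matrix (Fin n) (Fin n) (ZMod q')))))
        * eChar q ((q' : ZMod q) * Matrix.trace (Aq * up q T)) := by
    intro Y T
    set Yv : Matrix (Fin n) (Fin n) (ZMod q') := (Y : Matrix (Fin n) (Fin n) (ZMod q')) with hYv
    set u := (isUnit_FF hq0 hq'0 hdq hkd (Y.isUnit) T).unit with hu
    set v := (hupunit Y).unit with hv
    have huval : (u : Matrix (Fin n) (Fin n) (ZMod q)) = FF q q' ℓ Yv T := IsUnit.unit_spec _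
    have hvval : (v : Matrix (Fin n) (Fin n) (ZMod q)) = up q Yv := IsUnit.unit_spec _
    have hiu : Ring.inverse (FF q q' ℓ Yv T)
        = ((u⁻¹ : (Matrix (Fin n) (Fin n) (ZMod q))ˣ) : Matrix (Fin n) (Fin n) (ZMod q)) := by
      rw [← huval, Ring.inverse_unit]
    have hiv : Ring.inverse (up q Yv)
        = ((v⁻¹ : (Matrix (Fin n) (Fin n) (ZMod q))ˣ) : Matrix (Fin n) (Fin n) (ZMod q)) := by
      rw [← hvval, Ring.inverse_unit]
    -- the inverses agree after multiplication by ℓ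
    have hdiff : ((u⁻¹ : (Matrix (Fin n) (Fin n) (ZMod q))ˣ) : Matrix (Fin n) (Fin n) (ZMod q))
        - ((v⁻¹ : (Matrix (Fin n) (Fin n) (ZMod q))ˣ) : Matrix (Fin n) (Fin n) (ZMod q))
        = ((u⁻¹ : (Matrix (Fin n) (Fin n) (ZMod q))ˣ) : Matrix (Fin n) (Fin n) (ZMod q)) *
          (((v : (Matrix (Fin n) (Fin n) (ZMod q))ˣ) : Matrix (Fin n) (Fin n) (ZMod q))
            - ((u : (Matrix (Fin n) (Fin n) (ZMod q))ˣ) : Matrix (Fin n) (Fin n) (ZMod q))) *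
          ((v⁻¹ : (Matrix (Fin n) (Fin n) (ZMod q))ˣ) : Matrix (Fin n) (Fin n) (ZMod q)) := by
      rw [mul_sub, sub_mul]
      rw [mul_assoc (((u⁻¹ : (Matrix (Fin n) (Fin n) (ZMod q))ˣ) : Matrix (Fin n) (Fin n) (ZMod q)))]
      rw [Units.mul_inv, mul_one, Units.inv_mul, one_mul]
    have hvu2 : (((v : (Matrix (Fin n) (Fin n) (ZMod q))ˣ) : Matrix (Fin n) (Fin n) (ZMod q))
          - ((u : (Matrix (Fin n) (Fin n) (ZMod q))ˣ) : Matrix (Fin n) (Fin n) (ZMod q)))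
        = -((q' : ZMod q) • up q T) := by
      rw [huval, hvval]
      have hFF : FF q q' ℓ Yv T = up q Yv + (q' : ZMod q) • up q T := rfl
      rw [hFF]
      abel
    have hsmul : (ℓ : ZMod q) • ((u⁻¹ : (Matrix (Fin n) (Fin n) (ZMod q))ˣ)
          : Matrix (Fin n) (Fin n) (ZMod q))
        = (ℓ : ZMod q) • ((v⁻¹ : (Matrix (Fin n) (Fin n) (ZMod q))ˣ)
          : Matrix (Fin n) (Fin n) (ZMod q)) := by
      have h1 : (ℓ : ZMod q) • (((u⁻¹ : (Matrix (Fin n) (Fin n) (ZMod q))ˣ)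
            : Matrix (Fin n) (Fin n) (ZMod q))
          - ((v⁻¹ : (Matrix (Fin n) (Fin n) (ZMod q))ˣ) : Matrix (Fin n) (Fin n) (ZMod q)))
          = 0 := by
        rw [hdiff, hvu2]
        simp only [← neg_smul, Matrix.mul_smul, Matrix.smul_mul, smul_smul]
        rw [show (ℓ : ZMod q) * -(q' : ZMod q) = 0 by
          rw [mul_neg, ellq'_zero hfac, neg_zero], zero_smul]
      rw [smul_sub] at h1
      exact sub_eq_zero.mp h1
    have hBtr : Matrix.trace (Bq * Ring.inverse (FF q q' ℓ Yv T))
        = Matrix.trace (Bq * Ring.inverse (up q Yv)) := by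
      rw [hiu, hiv, hBq]
      have e1 : ((ℓ : ZMod q) • B'q) * ((u⁻¹ : (Matrix (Fin n) (Fin n) (ZMod q))ˣ)
            : Matrix (Fin n) (Fin n) (ZMod q))
          = B'q * ((ℓ : ZMod q) • ((u⁻¹ : (Matrix (Fin n) (Fin n) (ZMod q))ˣ)
            : Matrix (Fin n) (Fin n) (ZMod q))) := by
        rw [Matrix.smul_mul, Matrix.mul_smul]
      have e2 : ((ℓ : ZMod q) • B'q) * ((v⁻¹ : (Matrix (Fin n) (Fin n) (ZMod q))ˣ)
            : Matrix (Fin n) (Fin n) (ZMod q))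
          = B'q * ((ℓ : ZMod q) • ((v⁻¹ : (Matrix (Fin n) (Fin n) (ZMod q))ˣ)
            : Matrix (Fin n) (Fin n) (ZMod q))) := by
        rw [Matrix.smul_mul, Matrix.mul_smul]
      rw [e1, e2, hsmul]
    have hAtr : Matrix.trace (Aq * FF q q' ℓ Yv T)
        = Matrix.trace (Aq * up q Yv) + (q' : ZMod q) * Matrix.trace (Aq * up q T) := by
      have hFF : FF q q' ℓ Yv T = up q Yv + (q' : ZMod q) • up q T := rfl
      rw [hFF, mul_add, Matrix.trace_add, Matrix.mul_smul, Matrix.trace_smul, smul_eq_mul]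
    rw [Matrix.trace_add, Matrix.trace_add, hAtr, hBtr, ← eChar_add hq0]
    congr 1
    ring
  -- step 2: inner sum over T
  have innerT : ∑ T : Matrix (Fin n) (Fin n) (ZMod ℓ),
      eChar q ((q' : ZMod q) * Matrix.trace (Aq * up q T))
      = ∏ i : Fin n, ∏ j : Fin n,
          ∑ t : ZMod ℓ, eChar ℓ (((A i j : ℤ) : ZMod ℓ) * t) := by
    have hpt : ∀ T : Matrix (Fin n) (Fin n) (ZMod ℓ),
        eChar q ((q' : ZMod q) * Matrix.trace (Aq * up q T))
        = ∏ j : Fin n, ∏ i : Fin n, eChar ℓ (((A i j : ℤ) : ZMod ℓ) * T j i) := by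
      intro T
      have htr : (q' : ZMod q) * Matrix.trace (Aq * up q T)
          = ∑ i : Fin n, ∑ j : Fin n,
              (q' : ZMod q) * Aq i j * (((T j i).val : ℕ) : ZMod q) := by
        have h0 : Matrix.trace (Aq * up q T) = ∑ i : Fin n, ∑ j : Fin n,
            Aq i j * (((T j i).val : ℕ) : ZMod q) := by
          simp [Matrix.trace, Matrix.diag, Matrix.mul_apply, up_apply]
        rw [h0, Finset.mul_sum]
        refine Finset.sum_congr rfl (fun i _ => ?_)
        rw [Finset.mul_sum]
        refine Finset.sum_congr rfl (fun j _ => ?_)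
        ring
      rw [htr, eChar_sum hq0]
      have hstep : ∀ i : Fin n,
          eChar q (∑ j : Fin n, (q' : ZMod q) * Aq i j * (((T j i).val : ℕ) : ZMod q))
          = ∏ j : Fin n, eChar ℓ (((A i j : ℤ) : ZMod ℓ) * T j i) := by
        intro i
        rw [eChar_sum hq0]
        refine Finset.prod_congr rfl (fun j _ => ?_)
        rw [eChar_q'_mul hℓ0 hq'0 hfac (Aq i j) (T j i) hdl]
        congr 1
        have hAij : Aq i j = ((A i j : ℤ) : ZMod q) := rfl
        rw [hAij, map_intCast]
      calc ∏ i : Fin n,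
            eChar q (∑ j : Fin n, (q' : ZMod q) * Aq i j * (((T j i).val : ℕ) : ZMod q))
          = ∏ i : Fin n, ∏ j : Fin n, eChar ℓ (((A i j : ℤ) : ZMod ℓ) * T j i) :=
            Finset.prod_congr rfl (fun i _ => hstep i)
        _ = ∏ j : Fin n, ∏ i : Fin n, eChar ℓ (((A i j : ℤ) : ZMod ℓ) * T j i) :=
            Finset.prod_comm
    calc ∑ T : Matrix (Fin n) (Fin n) (ZMod ℓ),
          eChar q ((q' : ZMod q) * Matrix.trace (Aq * up q T))
        = ∑ T : Matrix (Fin n) (Fin n) (ZMod ℓ),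
            ∏ j : Fin n, ∏ i : Fin n, eChar ℓ (((A i j : ℤ) : ZMod ℓ) * T j i) :=
          Finset.sum_congr rfl (fun T _ => hpt T)
      _ = ∑ g : Fin n → Fin n → ZMod ℓ,
            ∏ j : Fin n, ∏ i : Fin n, eChar ℓ (((A i j : ℤ) : ZMod ℓ) * g j i) :=
          (Fintype.sum_equiv (Matrix.of (m := Fin n) (n := Fin n) (α := ZMod ℓ))
            _ _ (fun g => rfl)).symm
      _ = ∏ j : Fin n, ∑ row : Fin n → ZMod ℓ,
            ∏ i : Fin n, eChar ℓ (((A i j : ℤ) : ZMod ℓ) * row i) :=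
          (Fintype.prod_sum
            (fun j (row : Fin n → ZMod ℓ) =>
              ∏ i : Fin n, eChar ℓ (((A i j : ℤ) : ZMod ℓ) * row i))).symm
      _ = ∏ j : Fin n, ∏ i : Fin n, ∑ t : ZMod ℓ, eChar ℓ (((A i j : ℤ) : ZMod ℓ) * t) :=
          Finset.prod_congr rfl (fun j _ =>
            (Fintype.prod_sum (fun i (t : ZMod ℓ) =>
              eChar ℓ (((A i j : ℤ) : ZMod ℓ) * t))).symm)
      _ = ∏ i : Fin n, ∏ j : Fin n, ∑ t : ZMod ℓ, eChar ℓ (((A i j : ℤ) : ZMod ℓ) * t) :=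
          Finset.prod_comm
  -- step 3: assemble
  calc ∑ p : (Matrix (Fin n) (Fin n) (ZMod q'))ˣ × Matrix (Fin n) (Fin n) (ZMod ℓ),
        eChar q (Matrix.trace (Aq * (FF q q' ℓ (p.1 : Matrix (Fin n) (Fin n) (ZMod q')) p.2) +
          Bq * Ring.inverse (FF q q' ℓ (p.1 : Matrix (Fin n) (Fin n) (ZMod q')) p.2)))
      = ∑ Y : (Matrix (Fin n) (Fin n) (ZMod q'))ˣ, ∑ T : Matrix (Fin n) (Fin n) (ZMod ℓ),
          eChar q (Matrix.trace (Aq * up q (Y : Matrix (Fin n) (Fin n) (ZMod q')) +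
            Bq * Ring.inverse (up q (Y : Matrix (Fin n) (Fin n) (ZMod q')))))
          * eChar q ((q' : ZMod q) * Matrix.trace (Aq * up q T)) := by
        rw [Fintype.sum_prod_type]
        exact Finset.sum_congr rfl (fun Y _ =>
          Finset.sum_congr rfl (fun T _ => hpoint Y T))
    _ = (∑ Y : (Matrix (Fin n) (Fin n) (ZMod q'))ˣ,
          eChar q (Matrix.trace (Aq * up q (Y : Matrix (Fin n) (Fin n) (ZMod q')) +
            Bq * Ring.inverse (up q (Y : Matrix (Fin n) (Fin n) (ZMod q')))))) *
        (∑ T : Matrix (Fin n) (Fin n) (ZMod ℓ),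
          eChar q ((q' : ZMod q) * Matrix.trace (Aq * up q T))) := by
        rw [Finset.sum_mul_sum]
    _ = (∏ i : Fin n, ∏ j : Fin n,
          ∑ t : ZMod ℓ, eChar ℓ (((A i j : ℤ) : ZMod ℓ) * t)) *
        ∑ Y : (Matrix (Fin n) (Fin n) (ZMod q'))ˣ,
          eChar q (Matrix.trace (Aq * up q (Y : Matrix (Fin n) (Fin n) (ZMod q')) +
            Bq * Ring.inverse (up q (Y : Matrix (Fin n) (Fin n) (ZMod q'))))) := by
        rw [innerT, mul_comm]


lemma isUnit_up {n q q' ℓ : ℕ} [NeZero ℓ] (hq0 : q ≠ 0) (hq'0 : q' ≠ 0) (hdq : q' ∣ q)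
    (hkd : q ∣ q' ^ q) (Y : (Matrix (Fin n) (Fin n) (ZMod q'))ˣ) :
    IsUnit (up q (Y : Matrix (Fin n) (Fin n) (ZMod q'))) := by
  have := isUnit_FF (ℓ := ℓ) hq0 hq'0 hdq hkd (Y.isUnit) 0
  rwa [FF_zero (NeZero.ne ℓ)] at this

lemma downstairs {n q ℓ q' : ℕ} [NeZero q] [NeZero ℓ] [NeZero q']
    (hfac : q = ℓ * q') (hdq : q' ∣ q) (hkd : q ∣ q' ^ q)
    (A B : Matrix (Fin n) (Fin n) ℤ)
    (hA : ∀ i j, (ℓ : ℤ) ∣ A i j) (hB : ∀ i j, (ℓ : ℤ) ∣ B i j) :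
    ∑ Y : (Matrix (Fin n) (Fin n) (ZMod q'))ˣ,
      eChar q (Matrix.trace
        ((A.map (Int.cast : ℤ → ZMod q)) * up q (Y : Matrix (Fin n) (Fin n) (ZMod q')) +
         (B.map (Int.cast : ℤ → ZMod q)) *
           Ring.inverse (up q (Y : Matrix (Fin n) (Fin n) (ZMod q')))))
    = Kl n q' (Matrix.of fun i j => A i j / (ℓ : ℤ)) (Matrix.of fun i j => B i j / (ℓ : ℤ)) := by
  have hq0 : q ≠ 0 := NeZero.ne q
  have hℓ0 : ℓ ≠ 0 := NeZero.ne ℓ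
  have hq'0 : q' ≠ 0 := NeZero.ne q'
  set A' : Matrix (Fin n) (Fin n) ℤ := Matrix.of fun i j => A i j / (ℓ : ℤ) with hA'def
  set B' : Matrix (Fin n) (Fin n) ℤ := Matrix.of fun i j => B i j / (ℓ : ℤ) with hB'def
  set ψ := ZMod.castHom hdq (ZMod q') with hψdef
  have hKl : Kl n q' A' B' = ∑ Y : (Matrix (Fin n) (Fin n) (ZMod q'))ˣ,
      eChar q' (Matrix.trace
        ((A'.map (Int.cast : ℤ → ZMod q')) * (Y : Matrix (Fin n) (Fin n) (ZMod q')) +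
         (B'.map (Int.cast : ℤ → ZMod q')) *
           ((Y⁻¹ : (Matrix (Fin n) (Fin n) (ZMod q'))ˣ) : Matrix (Fin n) (Fin n) (ZMod q')))) := by
    unfold Kl eChar
    rw [dif_neg hq'0]
  rw [hKl]
  refine Finset.sum_congr rfl (fun Y _ => ?_)
  set Yv : Matrix (Fin n) (Fin n) (ZMod q') := (Y : Matrix (Fin n) (Fin n) (ZMod q')) with hYv
  set v := (isUnit_up (ℓ := ℓ) hq0 hq'0 hdq hkd Y).unit with hv
  have hvval : (v : Matrix (Fin n) (Fin n) (ZMod q)) = up q Yv := IsUnit.unit_spec _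
  have hiv : Ring.inverse (up q Yv)
      = ((v⁻¹ : (Matrix (Fin n) (Fin n) (ZMod q))ˣ) : Matrix (Fin n) (Fin n) (ZMod q)) := by
    rw [← hvval, Ring.inverse_unit]
  -- divisibility rewrites
  have hAq : A.map (Int.cast : ℤ → ZMod q) = (ℓ : ZMod q) • A'.map (Int.cast : ℤ → ZMod q) := by
    ext i j
    simp only [Matrix.map_apply, Matrix.smul_apply, smul_eq_mul, hA'def, Matrix.of_apply]
    conv_lhs => rw [← Int.mul_ediv_cancel' (hA i j)]
    push_cast
    ring
  have hBq : B.map (Int.cast : ℤ → ZMod q) = (ℓ : ZMod q) • B'.map (Int.cast : ℤ → ZMod q) := by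
    ext i j
    simp only [Matrix.map_apply, Matrix.smul_apply, smul_eq_mul, hB'def, Matrix.of_apply]
    conv_lhs => rw [← Int.mul_ediv_cancel' (hB i j)]
    push_cast
    ring
  set w0 : ZMod q := Matrix.trace ((A'.map (Int.cast : ℤ → ZMod q)) * up q Yv +
      (B'.map (Int.cast : ℤ → ZMod q)) *
        ((v⁻¹ : (Matrix (Fin n) (Fin n) (ZMod q))ˣ) : Matrix (Fin n) (Fin n) (ZMod q))) with hw0
  have htr : Matrix.trace ((A.map (Int.cast : ℤ → ZMod q)) * up q Yv +
      (B.map (Int.cast : ℤ → ZMod q)) * Ring.inverse (up q Yv)) = (ℓ : ZMod q) * w0 := by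
    rw [hiv, hAq, hBq, hw0]
    rw [Matrix.smul_mul, Matrix.smul_mul, ← smul_add, Matrix.trace_smul, smul_eq_mul]
  rw [htr]
  -- push the trace down to `ZMod q'`
  have hw0down : ψ w0 = Matrix.trace
      ((A'.map (Int.cast : ℤ → ZMod q')) * Yv +
       (B'.map (Int.cast : ℤ → ZMod q')) *
         ((Y⁻¹ : (Matrix (Fin n) (Fin n) (ZMod q'))ˣ) : Matrix (Fin n) (Fin n) (ZMod q'))) := by
    have h1 : (A'.map (Int.cast : ℤ → ZMod q)).map ψ = A'.map (Int.cast : ℤ → ZMod q') := by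
      ext i j
      simp [Matrix.map_apply, map_intCast]
    have h2 : (B'.map (Int.cast : ℤ → ZMod q)).map ψ = B'.map (Int.cast : ℤ → ZMod q') := by
      ext i j
      simp [Matrix.map_apply, map_intCast]
    have h3 : (up q Yv).map ψ = Yv := map_up hq'0 hdq Yv
    have h4 : (((v⁻¹ : (Matrix (Fin n) (Fin n) (ZMod q))ˣ) :
        Matrix (Fin n) (Fin n) (ZMod q))).map ψ
        = ((Y⁻¹ : (Matrix (Fin n) (Fin n) (ZMod q'))ˣ) : Matrix (Fin n) (Fin n) (ZMod q')) := by
      set Ψ : Matrix (Fin n) (Fin n) (ZMod q) →+* Matrix (Fin n) (Fin n) (ZMod q') :=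
        ψ.mapMatrix with hΨ
      have hmap : Units.map Ψ.toMonoidHom v = Y := by
        apply Units.ext
        rw [Units.coe_map]
        show Ψ (v : Matrix (Fin n) (Fin n) (ZMod q)) = Yv
        rw [hvval]
        exact map_up hq'0 hdq Yv
      calc (((v⁻¹ : (Matrix (Fin n) (Fin n) (ZMod q))ˣ) :
            Matrix (Fin n) (Fin n) (ZMod q))).map ψ
          = Ψ ((v⁻¹ : (Matrix (Fin n) (Fin n) (ZMod q))ˣ) : Matrix (Fin n) (Fin n) (ZMod q)) :=
            rfl
        _ = (((Units.map Ψ.toMonoidHom v)⁻¹ : (Matrix (Fin n) (Fin n) (ZMod q'))ˣ) :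
            Matrix (Fin n) (Fin n) (ZMod q')) := (Units.coe_map_inv Ψ.toMonoidHom v).symm
        _ = ((Y⁻¹ : (Matrix (Fin n) (Fin n) (ZMod q'))ˣ) :
            Matrix (Fin n) (Fin n) (ZMod q')) := by rw [hmap]
    calc ψ w0
        = Matrix.trace (((ψ : ZMod q →+ ZMod q')).mapMatrix
            ((A'.map (Int.cast : ℤ → ZMod q)) * up q Yv +
             (B'.map (Int.cast : ℤ → ZMod q)) *
               ((v⁻¹ : (Matrix (Fin n) (Fin n) (ZMod q))ˣ) : Matrix (Fin n) (Fin n) (ZMod q)))) := by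
          rw [hw0]
          exact AddMonoidHom.map_trace ψ _
      _ = Matrix.trace (((A'.map (Int.cast : ℤ → ZMod q)) * up q Yv +
            (B'.map (Int.cast : ℤ → ZMod q)) *
              ((v⁻¹ : (Matrix (Fin n) (Fin n) (ZMod q))ˣ) :
                Matrix (Fin n) (Fin n) (ZMod q))).map ψ) := rfl
      _ = Matrix.trace
            ((A'.map (Int.cast : ℤ → ZMod q')) * Yv +
             (B'.map (Int.cast : ℤ → ZMod q')) *
               ((Y⁻¹ : (Matrix (Fin n) (Fin n) (ZMod q'))ˣ) :
                 Matrix (Fin n) (Fin n) (ZMod q'))) := by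
          rw [Matrix.map_add ⇑ψ (fun a b => map_add ψ a b), Matrix.map_mul, Matrix.map_mul, h1, h2, h3, h4]
  rw [ell_mul_eq hℓ0 hq'0 hfac hdq w0, eChar_ell_mul hℓ0 hq'0 hfac (ψ w0), hw0down]

end MKaux

open MKaux in
/-- If `ℓ · ∏_{p ∣ q} p` divides `q` and `ℓ` divides every entry of `B`, then
`K_n(A,B;q) = 0` unless `ℓ` divides every entry of `A`, in which case
`K_n(A,B;q) = ℓ^{n²} K_n(ℓ⁻¹A, ℓ⁻¹B; q/ℓ)`. -/
theorem matrix_kloosterman_descend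
    (n q ℓ : ℕ) (hn : 1 ≤ n) (hq : 0 < q) (hℓ : 0 < ℓ)
    (hdvd : (ℓ * ∏ p ∈ q.primeFactors, p) ∣ q)
    (A B : Matrix (Fin n) (Fin n) ℤ)
    (hB : ∀ i j, (ℓ : ℤ) ∣ B i j) :
    ((¬ ∀ i j, (ℓ : ℤ) ∣ A i j) → Kl n q A B = 0) ∧
    ((∀ i j, (ℓ : ℤ) ∣ A i j) →
      Kl n q A B = (ℓ : ℂ) ^ (n ^ 2) *
        Kl n (q / ℓ) (Matrix.of fun i j => A i j / (ℓ : ℤ))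
          (Matrix.of fun i j => B i j / (ℓ : ℤ))) := by
  have hq0 : q ≠ 0 := hq.ne'
  have hℓ0 : ℓ ≠ 0 := hℓ.ne'
  have hℓq : ℓ ∣ q := (dvd_mul_right ℓ _).trans hdvd
  set q' : ℕ := q / ℓ with hq'def
  have hfac : q = ℓ * q' := (Nat.mul_div_cancel' hℓq).symm
  have hq'0 : q' ≠ 0 := by
    intro h
    rw [h, mul_zero] at hfac
    exact hq0 hfac
  have hdq : q' ∣ q := ⟨ℓ, by rw [hfac]; ring⟩
  have hrad : (∏ p ∈ q.primeFactors, p) ∣ q' := by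
    have h2 : ℓ * (∏ p ∈ q.primeFactors, p) ∣ ℓ * q' := by rw [← hfac]; exact hdvd
    exact (mul_dvd_mul_iff_left hℓ0).mp h2
  have hkd : q ∣ q' ^ q := key_dvd hq0 hq'0 hfac hrad
  haveI := NeZero.mk hq0
  haveI := NeZero.mk hℓ0
  haveI := NeZero.mk hq'0
  have hmaster := master (n := n) hfac hdq hℓq hkd A B hB
  constructor
  · intro hnA
    push_neg at hnA
    obtain ⟨i, j, hij⟩ := hnA
    have hz : ((A i j : ℤ) : ZMod ℓ) ≠ 0 := by
      intro h
      exact hij ((ZMod.intCast_zmod_eq_zero_iff_dvd _ _).mp h)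
    have hcol : ∑ t : ZMod ℓ, eChar ℓ (((A i j : ℤ) : ZMod ℓ) * t) = 0 := by
      rw [charSum, if_neg hz]
    have hprod : (∏ i : Fin n, ∏ j : Fin n,
        ∑ t : ZMod ℓ, eChar ℓ (((A i j : ℤ) : ZMod ℓ) * t)) = 0 :=
      Finset.prod_eq_zero (Finset.mem_univ i)
        (Finset.prod_eq_zero (Finset.mem_univ j) hcol)
    rw [hmaster, hprod, zero_mul]
  · intro hA
    have hone : ∀ i j : Fin n,
        ∑ t : ZMod ℓ, eChar ℓ (((A i j : ℤ) : ZMod ℓ) * t) = (ℓ : ℂ) := by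
      intro i j
      have hz : ((A i j : ℤ) : ZMod ℓ) = 0 :=
        (ZMod.intCast_zmod_eq_zero_iff_dvd _ _).mpr (hA i j)
      rw [charSum, if_pos hz]
    have hprod : (∏ i : Fin n, ∏ j : Fin n,
        ∑ t : ZMod ℓ, eChar ℓ (((A i j : ℤ) : ZMod ℓ) * t)) = (ℓ : ℂ) ^ (n ^ 2) := by
      calc ∏ i : Fin n, ∏ j : Fin n, ∑ t : ZMod ℓ, eChar ℓ (((A i j : ℤ) : ZMod ℓ) * t)
          = ∏ _i : Fin n, ∏ _j : Fin n, (ℓ : ℂ) :=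
            Finset.prod_congr rfl (fun i _ => Finset.prod_congr rfl (fun j _ => hone i j))
        _ = ((ℓ : ℂ) ^ n) ^ n := by simp [Finset.prod_const, Finset.card_univ]
        _ = (ℓ : ℂ) ^ (n ^ 2) := by rw [← pow_mul, sq]
    rw [hmaster, hprod, downstairs hfac hdq hkd A B hA hB]
end

section
/- Let n ≥ 1 be an integer, p a prime, and C ∈ M_n(𝔽_p) with C ≠ 0. If p > 2 or C ≠ I_n, then d(C) ≤ (n−1)² + 1. -/
open Matrix Submodule Module

section Aux

variable {F : Type} [Field F] {n m : ℕ}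

theorem mulVMV (C : Matrix (Fin n) (Fin n) F) (a b : Fin n → F) :
    C * vecMulVec a b = vecMulVec (C *ᵥ a) b := by
  ext i j
  simp [Matrix.mul_apply, vecMulVec_apply, Matrix.mulVec, dotProduct,
    Finset.sum_mul, mul_assoc]

theorem vMVmul (C : Matrix (Fin n) (Fin n) F) (a b : Fin n → F) :
    vecMulVec a b * C = vecMulVec a (b ᵥ* C) := by
  ext i j
  simp [Matrix.mul_apply, vecMulVec_apply, Matrix.vecMul, dotProduct,
    Finset.mul_sum, mul_assoc, mul_comm, mul_left_comm]

theorem vMVmulVec (a b x : Fin n → F) : vecMulVec a b *ᵥ x = (b ⬝ᵥ x) • a := by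
  ext i
  simp [Matrix.mulVec, vecMulVec_apply, dotProduct, Finset.mul_sum,
    mul_assoc, mul_comm, mul_left_comm]

theorem vecMulVMV (a b y : Fin n → F) : y ᵥ* vecMulVec a b = (y ⬝ᵥ a) • b := by
  ext j
  simp [Matrix.vecMul, vecMulVec_apply, dotProduct, Finset.sum_mul, mul_assoc]

theorem exists_dual (u : Fin m → (Fin n → F)) (hu : LinearIndependent F u) :
    ∃ x : Fin m → (Fin n → F), ∀ i j, u i ⬝ᵥ x j = if i = j then 1 else 0 := by
  have key : ∀ j : Fin m, ∃ xj : Fin n → F, ∀ i, u i ⬝ᵥ xj = if i = j then 1 else 0 := by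
    intro j
    obtain ⟨g, hg⟩ := LinearMap.exists_extend ((Basis.span hu).coord j)
    refine ⟨fun k => g (Pi.single k 1), fun i => ?_⟩
    have h1 : u i ⬝ᵥ (fun k => g (Pi.single k 1)) = g (u i) := by
      have he : u i = ∑ k, (u i k) • (Pi.single k 1 : Fin n → F) := by
        ext l; simp [Pi.single_apply]
      conv_rhs => rw [he]
      rw [map_sum]
      simp [dotProduct, _root_.map_smul, smul_eq_mul]
    rw [h1]
    have h2 : u i = ((Basis.span hu i : span F (Set.range u)) : Fin n → F) := by
      rw [Basis.span_apply]
    rw [h2]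
    have h3 : g ((Basis.span hu i : span F (Set.range u)) : Fin n → F)
        = ((Basis.span hu).coord j) (Basis.span hu i) := by
      have := congrArg (fun f => f (Basis.span hu i)) hg
      simpa using this
    rw [h3]
    simp [Basis.coord_apply, Basis.repr_self, Finsupp.single_apply]
  choose x hx using key
  exact ⟨x, fun i j => hx j i⟩

theorem scalar_of_dep (hn : 1 ≤ n) (C : Matrix (Fin n) (Fin n) F)
    (h : ∀ u : Fin n → F, u ≠ 0 → ∃ c : F, C *ᵥ u = c • u) : ∃ c : F, C = c • 1 := by
  have hcol : ∀ i : Fin n, ∃ c : F,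
      C *ᵥ (Pi.single i 1 : Fin n → F) = c • (Pi.single i 1 : Fin n → F) := by
    intro i
    refine h _ (fun h0 => ?_)
    have := congrFun h0 i
    simp at this
  choose c hc using hcol
  have hentry : ∀ i j : Fin n, C j i = if j = i then c i else 0 := by
    intro i j
    have := congrFun (hc i) j
    simp [Matrix.mulVec_single, Pi.single_apply] at this
    simpa [Pi.single_apply] using this
  have hsame : ∀ i j : Fin n, c i = c j := by
    intro i j
    rcases eq_or_ne i j with rfl | hij
    · rfl
    · have hu : (Pi.single i 1 + Pi.single j 1 : Fin n → F) ≠ 0 := by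
        intro h0
        have := congrFun h0 i
        simp [Pi.single_apply, hij] at this
      obtain ⟨d, hd⟩ := h _ hu
      have hdi := congrFun hd i
      have hdj := congrFun hd j
      rw [Matrix.mulVec_add] at hdi hdj
      simp [Matrix.mulVec_single, hentry, Pi.single_apply, hij, hij.symm] at hdi hdj
      rw [hdi, hdj]
  refine ⟨c ⟨0, hn⟩, ?_⟩
  ext j i
  rw [hentry i j]
  rcases eq_or_ne j i with rfl | hji
  · simp [hsame j ⟨0, hn⟩]
  · simp [Matrix.one_apply, hji]

/-- Row extraction from the anticommutator equation. -/
theorem row4 (C : Matrix (Fin n) (Fin n) F) (v w α β : Fin n → F)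
    (heq : C * (vecMulVec α v + vecMulVec w β) + (vecMulVec α v + vecMulVec w β) * C = 0)
    (y : Fin n → F) :
    (y ⬝ᵥ (C *ᵥ α)) • v + (y ⬝ᵥ α) • (v ᵥ* C) + (y ⬝ᵥ (C *ᵥ w)) • β
      + (y ⬝ᵥ w) • (β ᵥ* C) = 0 := by
  rw [mul_add, add_mul, mulVMV C α v, mulVMV C w β, vMVmul C α v, vMVmul C w β] at heq
  have h2 := congrArg (fun M => y ᵥ* M) heq
  simp only [Matrix.vecMul_add, vecMulVMV, Matrix.vecMul_zero] at h2
  linear_combination (norm := module) h2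

/-- Column extraction from the anticommutator equation. -/
theorem col4 (C : Matrix (Fin n) (Fin n) F) (v w α β : Fin n → F)
    (heq : C * (vecMulVec α v + vecMulVec w β) + (vecMulVec α v + vecMulVec w β) * C = 0)
    (x : Fin n → F) :
    (v ⬝ᵥ x) • (C *ᵥ α) + ((v ᵥ* C) ⬝ᵥ x) • α + (β ⬝ᵥ x) • (C *ᵥ w)
      + ((β ᵥ* C) ⬝ᵥ x) • w = 0 := by
  rw [mul_add, add_mul, mulVMV C α v, mulVMV C w β, vMVmul C α v, vMVmul C w β] at heq
  have h2 := congrArg (fun M => M *ᵥ x) heq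
  simp only [Matrix.add_mulVec, vMVmulVec, Matrix.zero_mulVec] at h2
  linear_combination (norm := module) h2

/-- Core analysis, case of a cyclic vector of depth 3: the kernel of `L ∘ ι` is a line. -/
theorem kerA (C : Matrix (Fin n) (Fin n) F) (v w α β : Fin n → F)
    (hw : ∀ x y : F, x • w + y • (C *ᵥ w) = 0 → x = 0 ∧ y = 0)
    (hv3 : ∀ x y z : F, x • v + y • (v ᵥ* C) + z • ((v ᵥ* C) ᵥ* C) = 0 →
      x = 0 ∧ y = 0 ∧ z = 0)
    (heq : C * (vecMulVec α v + vecMulVec w β) + (vecMulVec α v + vecMulVec w β) * C = 0) :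
    ∃ c : F, α = c • w ∧ β = -(c • v) := by
  by_cases hdep : ∀ x y : F, x • α + y • w = 0 → x = 0 ∧ y = 0
  · exfalso
    obtain ⟨x, hx⟩ := exists_dual ![α, w] (LinearIndependent.pair_iff.mpr hdep)
    have h00 : x 0 ⬝ᵥ α = 1 := by rw [dotProduct_comm]; simpa using hx 0 0
    have h10 : x 0 ⬝ᵥ w = 0 := by rw [dotProduct_comm]; simpa using hx 1 0
    have h01 : x 1 ⬝ᵥ α = 0 := by rw [dotProduct_comm]; simpa using hx 0 1
    have h11 : x 1 ⬝ᵥ w = 1 := by rw [dotProduct_comm]; simpa using hx 1 1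
    have R1 := row4 C v w α β heq (x 0)
    rw [h00, h10] at R1
    have R2 := row4 C v w α β heq (x 1)
    rw [h01, h11] at R2
    set k₀ := x 0 ⬝ᵥ (C *ᵥ α) with hk₀
    set c := x 0 ⬝ᵥ (C *ᵥ w) with hc'
    set k₁ := x 1 ⬝ᵥ (C *ᵥ α) with hk₁
    set c₂ := x 1 ⬝ᵥ (C *ᵥ w) with hc₂
    -- R1 : k₀ • v + 1 • (v ᵥ* C) + c • β + 0 • (β ᵥ* C) = 0
    -- R2 : k₁ • v + 0 • (v ᵥ* C) + c₂ • β + 1 • (β ᵥ* C) = 0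
    have hb : k₀ • v + (v ᵥ* C) + c • β = 0 := by
      linear_combination (norm := module) R1
    by_cases hc : c = 0
    · rw [hc] at hb
      obtain ⟨-, h1, -⟩ := hv3 k₀ 1 0 (by linear_combination (norm := module) hb)
      exact one_ne_zero h1
    · have hb' : k₀ • (v ᵥ* C) + ((v ᵥ* C) ᵥ* C) + c • (β ᵥ* C) = 0 := by
        have h3 := congrArg (fun z => z ᵥ* C) hb
        simpa [Matrix.add_vecMul, Matrix.smul_vecMul, Matrix.zero_vecMul] using h3
      obtain ⟨-, -, hz⟩ := hv3 (c * k₁ - c₂ * k₀) (-c₂ - k₀) (-1)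
        (by linear_combination (norm := module) c • R2 - c₂ • hb - hb')
      exact one_ne_zero (neg_eq_zero.mp hz)
  · push_neg at hdep
    obtain ⟨a, b, hab, hne⟩ := hdep
    by_cases ha : a = 0
    · exfalso
      rw [ha] at hab
      have hb0 : b ≠ 0 := hne ha
      have hw0 : w = 0 := by
        have : b • w = 0 := by linear_combination (norm := module) hab
        exact (smul_eq_zero.mp this).resolve_left hb0
      have := (hw 1 0 (by rw [hw0]; simp)).1
      exact one_ne_zero this
    · set c := -(a⁻¹ * b) with hcdef
      have hα : α = c • w := by
        have h1 : a • α = -(b • w) := by linear_combination (norm := module) hab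
        calc α = a⁻¹ • (a • α) := by rw [smul_smul, inv_mul_cancel₀ ha, one_smul]
        _ = a⁻¹ • (-(b • w)) := by rw [h1]
        _ = c • w := by rw [hcdef]; module
      refine ⟨c, hα, ?_⟩
      rw [hα] at heq
      obtain ⟨z, hz⟩ := exists_dual ![w, C *ᵥ w] (LinearIndependent.pair_iff.mpr hw)
      have g01 : z 1 ⬝ᵥ w = 0 := by rw [dotProduct_comm]; simpa using hz 0 1
      have g11 : z 1 ⬝ᵥ (C *ᵥ w) = 1 := by rw [dotProduct_comm]; simpa using hz 1 1
      have R := row4 C v w (c • w) β heq (z 1)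
      rw [Matrix.mulVec_smul, dotProduct_smul, dotProduct_smul,
        g01, g11] at R
      simp only [smul_eq_mul, mul_one, mul_zero] at R
      linear_combination (norm := module) R

/-- Core analysis, quadratic case: the kernel of `L ∘ ι` lies in an explicit 2-dim span. -/
theorem kerB (C : Matrix (Fin n) (Fin n) F) (v w α β : Fin n → F) (a₁ b₁ : F)
    (hw : ∀ x y : F, x • w + y • (C *ᵥ w) = 0 → x = 0 ∧ y = 0)
    (hv : ∀ x y : F, x • v + y • (v ᵥ* C) = 0 → x = 0 ∧ y = 0)
    (hrel : (v ᵥ* C) ᵥ* C = b₁ • v + a₁ • (v ᵥ* C))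
    (heq : C * (vecMulVec α v + vecMulVec w β) + (vecMulVec α v + vecMulVec w β) * C = 0) :
    ∃ s t : F, α = s • w + t • ((-a₁) • w - C *ᵥ w) ∧ β = -(s • v) + t • (v ᵥ* C) := by
  by_cases hdep : ∀ x y : F, x • α + y • w = 0 → x = 0 ∧ y = 0
  · obtain ⟨x, hx⟩ := exists_dual ![α, w] (LinearIndependent.pair_iff.mpr hdep)
    have h00 : x 0 ⬝ᵥ α = 1 := by rw [dotProduct_comm]; simpa using hx 0 0
    have h10 : x 0 ⬝ᵥ w = 0 := by rw [dotProduct_comm]; simpa using hx 1 0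
    obtain ⟨xv, hxv⟩ := exists_dual ![v, v ᵥ* C] (LinearIndependent.pair_iff.mpr hv)
    have e01 : v ⬝ᵥ xv 1 = 0 := by simpa using hxv 0 1
    have e11 : (v ᵥ* C) ⬝ᵥ xv 1 = 1 := by simpa using hxv 1 1
    have R1 := row4 C v w α β heq (x 0)
    rw [h00, h10] at R1
    set k₀ := x 0 ⬝ᵥ (C *ᵥ α) with hk₀
    set c := x 0 ⬝ᵥ (C *ᵥ w) with hcdef
    have hb : k₀ • v + (v ᵥ* C) + c • β = 0 := by
      linear_combination (norm := module) R1
    by_cases hc : c = 0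
    · exfalso
      rw [hc] at hb
      obtain ⟨-, h1⟩ := hv k₀ 1 (by linear_combination (norm := module) hb)
      exact one_ne_zero h1
    · -- dot hb with xv 1 :
      have ht : c * (β ⬝ᵥ xv 1) = -1 := by
        have h3 := congrArg (fun u => u ⬝ᵥ xv 1) hb
        simp only [add_dotProduct, smul_dotProduct, zero_dotProduct,
          e01, e11, smul_eq_mul] at h3
        linear_combination h3
      set t := β ⬝ᵥ xv 1 with htdef
      have hβ : β = -((-(t * k₀)) • v) + t • (v ᵥ* C) := by
        have h4 : (t * c) • β = t • (-(k₀ • v + (v ᵥ* C))) := by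
          have hcb : c • β = -(k₀ • v + (v ᵥ* C)) := by
            linear_combination (norm := module) hb
          rw [← smul_smul, hcb]
        rw [mul_comm t c, ht] at h4
        linear_combination (norm := module) (-1 : F) • h4
      refine ⟨-(t * k₀), t, ?_, hβ⟩
      -- β ᵥ* C
      have hβ' : β ᵥ* C = (t * b₁) • v + (t * k₀ + t * a₁) • (v ᵥ* C) := by
        rw [hβ, Matrix.add_vecMul, Matrix.neg_vecMul, Matrix.smul_vecMul,
          Matrix.smul_vecMul, hrel]
        module
      -- column extraction with xv 1
      have Ecol := col4 C v w α β heq (xv 1)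
      rw [e01, e11] at Ecol
      have hβ'dot : (β ᵥ* C) ⬝ᵥ xv 1 = t * k₀ + t * a₁ := by
        rw [hβ']
        simp only [add_dotProduct, smul_dotProduct, e01, e11, smul_eq_mul]
        ring
      rw [hβ'dot] at Ecol
      -- Ecol : 0 • (C *ᵥ α) + 1 • α + t • (C *ᵥ w) + (t*k₀ + t*a₁) • w = 0
      linear_combination (norm := module) Ecol
  · push_neg at hdep
    obtain ⟨a, b, hab, hne⟩ := hdep
    by_cases ha : a = 0
    · exfalso
      rw [ha] at hab
      have hb0 : b ≠ 0 := hne ha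
      have hw0 : w = 0 := by
        have : b • w = 0 := by linear_combination (norm := module) hab
        exact (smul_eq_zero.mp this).resolve_left hb0
      have := (hw 1 0 (by rw [hw0]; simp)).1
      exact one_ne_zero this
    · set c := -(a⁻¹ * b) with hcdef
      have hα : α = c • w := by
        have h1 : a • α = -(b • w) := by linear_combination (norm := module) hab
        calc α = a⁻¹ • (a • α) := by rw [smul_smul, inv_mul_cancel₀ ha, one_smul]
        _ = a⁻¹ • (-(b • w)) := by rw [h1]
        _ = c • w := by rw [hcdef]; module
      refine ⟨c, 0, by rw [hα]; module, ?_⟩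
      rw [hα] at heq
      obtain ⟨z, hz⟩ := exists_dual ![w, C *ᵥ w] (LinearIndependent.pair_iff.mpr hw)
      have g01 : z 1 ⬝ᵥ w = 0 := by rw [dotProduct_comm]; simpa using hz 0 1
      have g11 : z 1 ⬝ᵥ (C *ᵥ w) = 1 := by rw [dotProduct_comm]; simpa using hz 1 1
      have R := row4 C v w (c • w) β heq (z 1)
      rw [Matrix.mulVec_smul, dotProduct_smul, dotProduct_smul,
        g01, g11] at R
      simp only [smul_eq_mul, mul_one, mul_zero] at R
      linear_combination (norm := module) R

/-- The rank-one parametrization, as a linear map. -/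
noncomputable def iot (v w : Fin n → F) :
    ((Fin n → F) × (Fin n → F)) →ₗ[F] Matrix (Fin n) (Fin n) F where
  toFun q := vecMulVec q.1 v + vecMulVec w q.2
  map_add' q r := by
    ext i j
    simp [vecMulVec_apply]
    ring
  map_smul' c q := by
    ext i j
    simp [vecMulVec_apply]
    ring

/-- The master bound: if the kernel of `L ∘ ι` lies in the span of two explicit vectors,
then `finrank (ker L) + 2n ≤ n² + 2`. -/
theorem ker_bound_generic (C : Matrix (Fin n) (Fin n) F) (v w : Fin n → F)
    (g₂ : (Fin n → F) × (Fin n → F))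
    (hker : ∀ α β : Fin n → F,
      C * (vecMulVec α v + vecMulVec w β) + (vecMulVec α v + vecMulVec w β) * C = 0 →
      ∃ s t : F, α = s • w + t • g₂.1 ∧ β = -(s • v) + t • g₂.2) :
    Module.finrank F
      ↥(LinearMap.ker (LinearMap.mulLeft F C + LinearMap.mulRight F C)) + 2 * n
      ≤ n * n + 2 := by
  classical
  set L := LinearMap.mulLeft F C + LinearMap.mulRight F C with hL
  have h1 : finrank F (LinearMap.range L) + finrank F (LinearMap.ker L)
      = n * n := by
    have := LinearMap.finrank_range_add_finrank_ker L
    rwa [Module.finrank_matrix, Fintype.card_fin, Module.finrank_self, mul_one] at this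
  have h2 : finrank F (LinearMap.range (L ∘ₗ iot v w))
      + finrank F (LinearMap.ker (L ∘ₗ iot v w)) = n + n := by
    have := LinearMap.finrank_range_add_finrank_ker (L ∘ₗ iot v w)
    rwa [Module.finrank_prod, Module.finrank_fintype_fun_eq_card, Fintype.card_fin] at this
  have h3 : finrank F (LinearMap.range (L ∘ₗ iot v w)) ≤ finrank F (LinearMap.range L) :=
    Submodule.finrank_mono (LinearMap.range_comp_le_range _ _)
  have h4 : finrank F (LinearMap.ker (L ∘ₗ iot v w)) ≤ 2 := by
    have hsub : LinearMap.ker (L ∘ₗ iot v w)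
        ≤ span F {((w, -v) : (Fin n → F) × (Fin n → F)), g₂} := by
      intro q hq
      have hq0 : C * (vecMulVec q.1 v + vecMulVec w q.2)
          + (vecMulVec q.1 v + vecMulVec w q.2) * C = 0 := by
        have := hq
        simp only [LinearMap.mem_ker, LinearMap.comp_apply, hL, LinearMap.add_apply,
          LinearMap.mulLeft_apply, LinearMap.mulRight_apply] at this
        simpa [iot] using this
      obtain ⟨s, t, h5, h6⟩ := hker q.1 q.2 hq0
      have hqe : q = s • ((w, -v) : (Fin n → F) × (Fin n → F)) + t • g₂ := by
        rw [Prod.ext_iff]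
        constructor
        · simpa using h5
        · simpa [smul_neg] using h6
      rw [hqe]
      exact Submodule.add_mem _
        (Submodule.smul_mem _ _ (subset_span (by simp)))
        (Submodule.smul_mem _ _ (subset_span (by simp)))
    calc finrank F (LinearMap.ker (L ∘ₗ iot v w))
        ≤ finrank F (span F {((w, -v) : (Fin n → F) × (Fin n → F)), g₂}) :=
          Submodule.finrank_mono hsub
      _ ≤ 2 := by
          apply (finrank_span_le_card _).trans
          have : ({((w, -v) : (Fin n → F) × (Fin n → F)), g₂} : Set _).toFinset.card ≤ 2 := by
            rw [Set.toFinset_insert, Set.toFinset_singleton]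
            exact (Finset.card_insert_le _ _).trans (by simp)
          exact this
  omega

end Aux

/-- `d(C)`: the dimension over `𝔽_p` of `{Z ∈ M_n(𝔽_p) : CZ + ZC = 0}`. -/
noncomputable def dC (n p : ℕ) (C : Matrix (Fin n) (Fin n) (ZMod p)) : ℕ :=
  Module.finrank (ZMod p)
    ↥(LinearMap.ker (LinearMap.mulLeft (ZMod p) C + LinearMap.mulRight (ZMod p) C))

/-- For a prime `p` and `C ∈ M_n(𝔽_p)`, `C ≠ 0`: if `p > 2` or `C ≠ I_n`,
then `d(C) ≤ (n−1)² + 1`. -/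
theorem dC_le (n p : ℕ) (hn : 1 ≤ n) (hp : p.Prime)
    (C : Matrix (Fin n) (Fin n) (ZMod p)) (hC : C ≠ 0) (h : 2 < p ∨ C ≠ 1) :
    dC n p C ≤ (n - 1) ^ 2 + 1 := by
  haveI : Fact p.Prime := ⟨hp⟩
  obtain ⟨m, rfl⟩ : ∃ m, n = m + 1 := ⟨n - 1, (Nat.succ_pred_eq_of_pos hn).symm⟩
  have hgoal : (m + 1 - 1) ^ 2 + 1 = m * m + 1 := by
    simp [pow_two]
  rw [hgoal]
  by_cases hw : ∃ w : Fin (m + 1) → ZMod p,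
      ∀ x y : ZMod p, x • w + y • (C *ᵥ w) = 0 → x = 0 ∧ y = 0
  · obtain ⟨w, hw⟩ := hw
    have key : dC (m + 1) p C + 2 * (m + 1) ≤ (m + 1) * (m + 1) + 2 := by
      by_cases hA : ∃ v : Fin (m + 1) → ZMod p,
          ∀ x y z : ZMod p, x • v + y • (v ᵥ* C) + z • ((v ᵥ* C) ᵥ* C) = 0 →
            x = 0 ∧ y = 0 ∧ z = 0
      · obtain ⟨v, hv3⟩ := hA
        exact ker_bound_generic C v w (0, 0) (fun α β heq => by
          obtain ⟨c, h5, h6⟩ := kerA C v w α β hw hv3 heq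
          exact ⟨c, 0, by rw [h5]; module, by rw [h6]; module⟩)
      · -- get a depth-2 vector for the row side
        have hv : ∃ v : Fin (m + 1) → ZMod p,
            ∀ x y : ZMod p, x • v + y • (v ᵥ* C) = 0 → x = 0 ∧ y = 0 := by
          by_contra hnv
          push_neg at hnv
          have hdep : ∀ u : Fin (m + 1) → ZMod p, u ≠ 0 → ∃ c : ZMod p, Cᵀ *ᵥ u = c • u := by
            intro u hu
            obtain ⟨x, y, hxy, hne⟩ := hnv u
            by_cases hy : y = 0
            · exfalso
              rw [hy] at hxy
              have hx : x ≠ 0 := fun hx => hne hx hy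
              have : x • u = 0 := by linear_combination (norm := module) hxy
              exact hu ((smul_eq_zero.mp this).resolve_left hx)
            · refine ⟨-(y⁻¹ * x), ?_⟩
              rw [Matrix.mulVec_transpose]
              have h1 : y • (u ᵥ* C) = -(x • u) := by
                linear_combination (norm := module) hxy
              calc u ᵥ* C = y⁻¹ • (y • (u ᵥ* C)) := by
                    rw [smul_smul, inv_mul_cancel₀ hy, one_smul]
                _ = y⁻¹ • (-(x • u)) := by rw [h1]
                _ = -(y⁻¹ * x) • u := by module
          obtain ⟨c, hc⟩ := scalar_of_dep hn Cᵀ hdep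
          have hCs : C = c • 1 := by
            have := congrArg Matrix.transpose hc
            rwa [Matrix.transpose_transpose, Matrix.transpose_smul,
              Matrix.transpose_one] at this
          have h2 := (hw c (-1) (by rw [hCs]; simp [Matrix.smul_mulVec])).2
          exact one_ne_zero (neg_eq_zero.mp h2)
        obtain ⟨v, hv⟩ := hv
        push_neg at hA
        obtain ⟨x, y, z, hxyz, hne⟩ := hA v
        -- first two can't both carry it : z ≠ 0
        by_cases hz : z = 0
        · exfalso
          rw [hz] at hxyz
          obtain ⟨hx, hy⟩ := hv x y (by linear_combination (norm := module) hxyz)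
          exact hne hx hy hz
        · have hrel : (v ᵥ* C) ᵥ* C = (-(z⁻¹ * x)) • v + (-(z⁻¹ * y)) • (v ᵥ* C) := by
            have h1 : z • ((v ᵥ* C) ᵥ* C) = -(x • v + y • (v ᵥ* C)) := by
              linear_combination (norm := module) hxyz
            calc (v ᵥ* C) ᵥ* C = z⁻¹ • (z • ((v ᵥ* C) ᵥ* C)) := by
                  rw [smul_smul, inv_mul_cancel₀ hz, one_smul]
              _ = z⁻¹ • (-(x • v + y • (v ᵥ* C))) := by rw [h1]
              _ = (-(z⁻¹ * x)) • v + (-(z⁻¹ * y)) • (v ᵥ* C) := by module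
          exact ker_bound_generic C v w ((-(-(z⁻¹ * y))) • w - C *ᵥ w, v ᵥ* C)
            (fun α β heq =>
              kerB C v w α β (-(z⁻¹ * y)) (-(z⁻¹ * x)) hw hv hrel heq)
    have hexp : (m + 1) * (m + 1) = m * m + 2 * m + 1 := by ring
    rw [hexp] at key
    unfold dC at key ⊢
    linarith
  · -- scalar case
    push_neg at hw
    have hdep : ∀ u : Fin (m + 1) → ZMod p, u ≠ 0 → ∃ c : ZMod p, C *ᵥ u = c • u := by
      intro u hu
      obtain ⟨x, y, hxy, hne⟩ := hw u
      by_cases hy : y = 0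
      · exfalso
        rw [hy] at hxy
        have hx : x ≠ 0 := fun hx => hne hx hy
        have : x • u = 0 := by linear_combination (norm := module) hxy
        exact hu ((smul_eq_zero.mp this).resolve_left hx)
      · refine ⟨-(y⁻¹ * x), ?_⟩
        have h1 : y • (C *ᵥ u) = -(x • u) := by
          linear_combination (norm := module) hxy
        calc C *ᵥ u = y⁻¹ • (y • (C *ᵥ u)) := by
              rw [smul_smul, inv_mul_cancel₀ hy, one_smul]
          _ = y⁻¹ • (-(x • u)) := by rw [h1]
          _ = -(y⁻¹ * x) • u := by module
    obtain ⟨c, hc⟩ := scalar_of_dep hn C hdep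
    have hc0 : c ≠ 0 := by
      intro h0
      apply hC
      rw [hc, h0, zero_smul]
    have hp2 : 2 < p := by
      by_contra hle
      push_neg at hle
      have hpeq : p = 2 := le_antisymm hle hp.two_le
      subst hpeq
      have hC1 : C ≠ 1 := h.resolve_left (by omega)
      apply hC1
      have hc1 : c = 1 := by
        have hall : ∀ x : ZMod 2, ¬x = 0 → x = 1 := by
          intro x hx
          fin_cases x
          · exact (hx rfl).elim
          · rfl
        exact hall c hc0
      rw [hc, hc1, one_smul]
    -- p odd : kernel is trivial
    have h2ne : (2 : ZMod p) ≠ 0 := by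
      intro h20
      have hdvd : p ∣ 2 := (ZMod.natCast_eq_zero_iff 2 p).mp (by exact_mod_cast h20)
      have := Nat.le_of_dvd (by norm_num) hdvd
      omega
    have hker : LinearMap.ker (LinearMap.mulLeft (ZMod p) C
        + LinearMap.mulRight (ZMod p) C) = ⊥ := by
      rw [LinearMap.ker_eq_bot']
      intro Z hZ
      simp only [LinearMap.add_apply, LinearMap.mulLeft_apply, LinearMap.mulRight_apply] at hZ
      rw [hc] at hZ
      have hZ2 : (2 * c) • Z = 0 := by
        have h1 : (c • (1 : Matrix (Fin (m + 1)) (Fin (m + 1)) (ZMod p))) * Z = c • Z := by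
          simp [Matrix.smul_mul]
        have h2 : Z * (c • (1 : Matrix (Fin (m + 1)) (Fin (m + 1)) (ZMod p))) = c • Z := by
          simp [Matrix.mul_smul]
        rw [h1, h2] at hZ
        rw [two_mul, add_smul]
        exact hZ
      have : (2 * c) ≠ 0 := mul_ne_zero h2ne hc0
      exact (smul_eq_zero.mp hZ2).resolve_left this
    unfold dC
    rw [hker]
    simp
end

section
/- Let n ≥ 1 be an integer and C ∈ M_n(𝔽₂). Then the dimension over 𝔽₂ of the linear subspace {Z ∈ M_n(𝔽₂) : Z + CZ + ZC = 0} of M_n(𝔽₂) is at most n²/2 (equivalently, twice this dimension is at most n²). -/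
/- Auxiliary development for `finrank_ker_id_add_mulLeft_add_mulRight_le`. -/

open Module LinearMap Polynomial Finset

namespace KerTcAux

section CommRingPart

variable {n : ℕ} {R : Type*} [CommRing R]

/-- The operator `Z ↦ Z + CZ + ZC`. -/
def Tc (C : Matrix (Fin n) (Fin n) R) :
    Matrix (Fin n) (Fin n) R →ₗ[R] Matrix (Fin n) (Fin n) R :=
  LinearMap.id + LinearMap.mulLeft R C + LinearMap.mulRight R C

lemma Tc_apply (C Z : Matrix (Fin n) (Fin n) R) : Tc C Z = Z + C * Z + Z * C := rfl

lemma Tc_Tc (h2 : (2 : R) = 0) (C Z : Matrix (Fin n) (Fin n) R) :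
    Tc C (Tc C Z) = Tc (C ^ 2) Z := by
  have key : ∀ X : Matrix (Fin n) (Fin n) R, X + X = 0 := by
    intro X
    rw [← two_smul R X, h2, zero_smul]
  simp only [Tc_apply, pow_two, mul_add, add_mul, mul_assoc]
  abel_nf
  simp [two_mul, key]

lemma ker_Tc_le_pow (h2 : (2 : R) = 0) (C : Matrix (Fin n) (Fin n) R) (k : ℕ) :
    LinearMap.ker (Tc C) ≤ LinearMap.ker (Tc (C ^ 2 ^ k)) := by
  induction k with
  | zero => simp
  | succ k ih =>
    intro Z hZ
    have hZ' : Tc (C ^ 2 ^ k) Z = 0 := ih hZ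
    have : (C ^ 2 ^ k) ^ 2 = C ^ 2 ^ (k + 1) := by
      rw [← pow_mul, pow_succ]
    rw [LinearMap.mem_ker, ← this, ← Tc_Tc h2, hZ', map_zero]

lemma Tc_map_map {S : Type*} [CommRing S] (f : R →+* S) (C Z : Matrix (Fin n) (Fin n) R) :
    Tc (C.map f) (Z.map f) = (Tc C Z).map f := by
  ext i j
  simp [Tc_apply, Matrix.map_apply, Matrix.add_apply, Matrix.mul_apply, map_sum, map_mul]


end CommRingPart

section FieldPart

variable {n : ℕ} {K : Type*} [Field K] [DecidableEq K]



lemma finrank_ker_Tc_diagonal (a : Fin n → K) :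
    finrank K (LinearMap.ker (Tc (Matrix.diagonal a)))
      ≤ (Finset.univ.filter fun p : Fin n × Fin n => (1 : K) + a p.1 + a p.2 = 0).card := by
  classical
  set S := Finset.univ.filter fun p : Fin n × Fin n => (1 : K) + a p.1 + a p.2 = 0 with hS
  have hTD : ∀ (Z : Matrix (Fin n) (Fin n) K) (i j : Fin n),
      Tc (Matrix.diagonal a) Z i j = (1 + a i + a j) * Z i j := by
    intro Z i j
    rw [Tc_apply]
    simp [Matrix.add_apply, Matrix.diagonal_mul, Matrix.mul_diagonal]
    ring
  -- the evaluation map on positions in S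
  set φ : Matrix (Fin n) (Fin n) K →ₗ[K] ({ x // x ∈ S } → K) :=
    LinearMap.pi (fun s => (LinearMap.proj s.val.2 :
        (Fin n → K) →ₗ[K] K).comp (LinearMap.proj s.val.1)) with hφ
  have hinj : Function.Injective (φ.comp (LinearMap.ker (Tc (Matrix.diagonal a))).subtype) := by
    rw [← LinearMap.ker_eq_bot, LinearMap.ker_eq_bot']
    intro Z hZ
    have hZker : Tc (Matrix.diagonal a) (Z : Matrix (Fin n) (Fin n) K) = 0 := Z.2
    ext i j
    by_cases hij : ((i, j) : Fin n × Fin n) ∈ S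
    · have := congrFun hZ ⟨(i, j), hij⟩
      exact this
    · have hc : (1 : K) + a i + a j ≠ 0 := by
        rw [hS] at hij
        simpa using hij
      have h0 : (1 + a i + a j) * (Z : Matrix (Fin n) (Fin n) K) i j = 0 := by
        rw [← hTD, hZker]
        rfl
      simpa [hc] using h0
  calc finrank K (LinearMap.ker (Tc (Matrix.diagonal a)))
      ≤ finrank K ({ x // x ∈ S } → K) :=
        LinearMap.finrank_le_finrank_of_injective hinj
    _ = S.card := by simp
-- conjugation
lemma finrank_ker_Tc_conj (P A : Matrix (Fin n) (Fin n) K) [Invertible P] :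
    finrank K (LinearMap.ker (Tc (P * A * ⅟P)))
      = finrank K (LinearMap.ker (Tc A)) := by
  classical
  set e : Matrix (Fin n) (Fin n) K ≃ₗ[K] Matrix (Fin n) (Fin n) K :=
    LinearEquiv.ofLinear
      ((LinearMap.mulLeft K (⅟P)).comp (LinearMap.mulRight K P))
      ((LinearMap.mulLeft K P).comp (LinearMap.mulRight K (⅟P)))
      (by ext Z : 1; simp [mul_assoc])
      (by ext Z : 1; simp [mul_assoc]) with he
  have hcomm : ∀ Z, Tc A (⅟P * Z * P) = ⅟P * (Tc (P * A * ⅟P) Z) * P := by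
    intro Z
    simp only [Tc_apply, mul_add, add_mul, mul_assoc, invOf_mul_cancel_left,
      invOf_mul_cancel_left, mul_invOf_cancel_left]
    simp [mul_assoc, mul_invOf_self, invOf_mul_self]
  have hker : LinearMap.ker (Tc (P * A * ⅟P))
      = Submodule.comap (e : Matrix (Fin n) (Fin n) K →ₗ[K] Matrix (Fin n) (Fin n) K)
          (LinearMap.ker (Tc A)) := by
    ext Z
    simp only [LinearMap.mem_ker, Submodule.mem_comap, he, LinearEquiv.coe_coe,
      LinearEquiv.ofLinear_apply, LinearMap.coe_comp, Function.comp_apply,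
      LinearMap.mulLeft_apply, LinearMap.mulRight_apply]
    rw [← mul_assoc, hcomm Z]
    constructor
    · intro h; rw [h]; simp
    · intro h
      have := congrArg (fun W => P * W * ⅟P) h
      simpa [mul_assoc] using this
  rw [hker, Submodule.comap_equiv_eq_map_symm, LinearEquiv.finrank_map_eq]


end FieldPart

section FinitePart

variable {n : ℕ} {K : Type*} [Field K] [Fintype K] [DecidableEq K]

lemma count_pairs {n : ℕ} {K : Type*} [Field K] [Fintype K] [DecidableEq K]
    (h2 : (2 : K) = 0) (a : Fin n → K) :
    2 * (Finset.univ.filter fun p : Fin n × Fin n => (1 : K) + a p.1 + a p.2 = 0).card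
      ≤ n ^ 2 := by
  classical
  set m : K → ℕ := fun μ => (Finset.univ.filter fun j : Fin n => a j = μ).card with hm
  have hcardS : ∀ (g : K → K),
      (Finset.univ.filter fun p : Fin n × Fin n => a p.2 = g (a p.1)).card
        = ∑ μ : K, m μ * m (g μ) := by
    intro g
    rw [Finset.card_filter, ← Finset.univ_product_univ, Finset.sum_product]
    have step1 : ∀ i : Fin n,
        (∑ j : Fin n, if a j = g (a i) then 1 else 0) = m (g (a i)) := by
      intro i
      show _ = (Finset.univ.filter fun j : Fin n => a j = g (a i)).card
      rw [Finset.card_filter]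
    simp_rw [step1]
    -- now ∑ i, m (g (a i)) = ∑ μ, m μ * m (g μ)
    have : ∀ i : Fin n, m (g (a i)) = ∑ μ : K, if a i = μ then m (g μ) else 0 := by
      intro i
      rw [Finset.sum_ite_eq]
      simp
    simp_rw [this]
    rw [Finset.sum_comm]
    congr 1
    ext μ
    rw [← Finset.sum_filter, Finset.sum_const, smul_eq_mul, mul_comm]
  have hSQ : (Finset.univ.filter fun p : Fin n × Fin n => (1:K) + a p.1 + a p.2 = 0)
      = Finset.univ.filter fun p : Fin n × Fin n => a p.2 = -1 - a p.1 := by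
    apply Finset.filter_congr
    intro p _
    constructor
    · intro h; linear_combination h
    · intro h; linear_combination h
  rw [hSQ]
  set S := Finset.univ.filter fun p : Fin n × Fin n => a p.2 = -1 - a p.1 with hS
  set Q := Finset.univ.filter fun p : Fin n × Fin n => a p.2 = a p.1 with hQ
  have hScard : S.card = ∑ μ : K, m μ * m (-1 - μ) := hcardS (fun μ => -1 - μ)
  have hQcard : Q.card = ∑ μ : K, m μ * m μ := hcardS id
  have hSleQ : S.card ≤ Q.card := by
    have h2S : 2 * S.card ≤ 2 * Q.card := by
      rw [hScard, hQcard]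
      calc 2 * ∑ μ : K, m μ * m (-1 - μ)
          = ∑ μ : K, 2 * (m μ * m (-1 - μ)) := by rw [Finset.mul_sum]
        _
          ≤ ∑ μ : K, (m μ * m μ + m (-1 - μ) * m (-1 - μ)) := by
            apply Finset.sum_le_sum
            intro μ _
            have := two_mul_le_add_sq (m μ) (m (-1 - μ))
            simpa [sq, mul_assoc] using this
        _ = ∑ μ : K, m μ * m μ + ∑ μ : K, m (-1 - μ) * m (-1 - μ) := by
            rw [Finset.sum_add_distrib]
        _ = ∑ μ : K, m μ * m μ + ∑ μ : K, m μ * m μ := by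
            congr 1
            exact Fintype.sum_equiv (Equiv.subLeft (-1 : K)) _ _
              (fun μ => by rw [Equiv.subLeft_apply])
        _ = ∑ μ : K, 2 * (m μ * m μ) := by rw [← Finset.sum_add_distrib]; simp [two_mul]
        _ = 2 * ∑ μ : K, m μ * m μ := by rw [← Finset.mul_sum]
    omega
  have hdisj : Disjoint S Q := by
    rw [Finset.disjoint_left]
    intro p hp hq
    rw [hS, Finset.mem_filter] at hp
    rw [hQ, Finset.mem_filter] at hq
    have hp' := hp.2
    have hq' := hq.2
    have hone : (1 : K) = 0 := by linear_combination hp' - hq' - a p.1 * h2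
    exact one_ne_zero hone
  have : S.card + Q.card ≤ n ^ 2 := by
    rw [← Finset.card_union_of_disjoint hdisj]
    calc (S ∪ Q).card ≤ (Finset.univ : Finset (Fin n × Fin n)).card :=
          Finset.card_le_card (Finset.subset_univ _)
      _ = n ^ 2 := by simp [sq]
  omega

lemma mulVecLin_pow (E : Matrix (Fin n) (Fin n) K) (m : ℕ) :
    Matrix.mulVecLin (E ^ m) = (Matrix.mulVecLin E) ^ m := by
  induction m with
  | zero => rw [pow_zero, pow_zero, Matrix.mulVecLin_one]; rfl
  | succ m ih => rw [pow_succ, pow_succ, Matrix.mulVecLin_mul, ih]; rfl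

lemma eigen_span (f : Module.End K (Fin n → K)) (hf : f ^ Fintype.card K = f) :
    ⨆ c : K, f.eigenspace c = ⊤ := by
  classical
  set q := Fintype.card K with hq
  set p : K[X] := X ^ q - X with hp
  have haeval : aeval f p = 0 := by
    rw [hp, map_sub, map_pow, aeval_X, hf, sub_self]
  have hmonic : p.Monic := by
    rw [hp]
    apply monic_X_pow_sub
    rw [degree_X]
    exact_mod_cast Fintype.one_lt_card
  have hprod : ∏ c : K, (X - C c) = p := by
    have hroots : p.roots = Finset.univ.val := FiniteField.roots_X_pow_card_sub_X K
    have hcard : Multiset.card p.roots = p.natDegree := by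
      rw [hroots, ← Finset.card_def, Finset.card_univ, hp,
        FiniteField.X_pow_card_sub_X_natDegree_eq K Fintype.one_lt_card]
    have := C_leadingCoeff_mul_prod_multiset_X_sub_C (p := p) hcard
    rw [hmonic.leadingCoeff, map_one, one_mul, hroots] at this
    rw [← this]
    rfl
  have hderiv : ∑ c : K, ∏ c' ∈ Finset.univ.erase c, (X - C c') = -1 := by
    have h1 : derivative p = -1 := by
      rw [hp, derivative_sub, derivative_X_pow, derivative_X,
        Nat.cast_card_eq_zero K, C_0, zero_mul, zero_sub]
    rw [← h1, ← hprod]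
    show _ = derivative (Multiset.map (fun c => X - C c) Finset.univ.val).prod
    rw [derivative_prod]
    simp only [derivative_sub, derivative_X, derivative_C, sub_zero, mul_one]
    exact congrArg Multiset.sum (Multiset.map_congr rfl (fun c _ => by
      rw [← Finset.erase_val]; rfl))
  rw [eq_top_iff]
  intro x _
  have hsum : ∑ c : K, (aeval f (∏ c' ∈ Finset.univ.erase c, (X - C c'))) x = -x := by
    have := congrArg (fun g => aeval f g x) hderiv
    simpa only [map_sum, map_neg, map_one, LinearMap.sum_apply, LinearMap.neg_apply,
      Module.End.one_apply] using this
  have hx : x = ∑ c : K, -((aeval f (∏ c' ∈ Finset.univ.erase c, (X - C c'))) x) := by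
    rw [Finset.sum_neg_distrib, hsum, neg_neg]
  rw [hx]
  apply Submodule.sum_mem
  intro c _
  apply Submodule.mem_iSup_of_mem c
  apply Submodule.neg_mem
  rw [Module.End.mem_eigenspace_iff]
  have hmul : (X - C c) * ∏ c' ∈ Finset.univ.erase c, (X - C c') = p := by
    rw [← hprod]
    exact Finset.mul_prod_erase Finset.univ (fun c => X - C c) (Finset.mem_univ c)
  have h0 : f ((aeval f (∏ c' ∈ Finset.univ.erase c, (X - C c'))) x)
      = c • ((aeval f (∏ c' ∈ Finset.univ.erase c, (X - C c'))) x) := by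
    have h2 := congrArg (fun g => aeval f g x) hmul
    simp only [map_mul, haeval, map_sub, aeval_X, aeval_C, LinearMap.zero_apply,
      Module.End.mul_apply, LinearMap.sub_apply, Module.algebraMap_end_apply] at h2
    rw [sub_eq_zero] at h2
    exact h2
  exact h0

lemma exists_diagonalization (E : Matrix (Fin n) (Fin n) K)
    (hE : E ^ Fintype.card K = E) :
    ∃ (P : Matrix (Fin n) (Fin n) K) (_ : Invertible P) (a : Fin n → K),
      E = P * Matrix.diagonal a * ⅟P := by
  classical
  set f : Module.End K (Fin n → K) := Matrix.mulVecLin E with hfdef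
  have hf : f ^ Fintype.card K = f := by
    rw [hfdef, ← mulVecLin_pow, hE]
  have hspan := eigen_span f hf
  have hind := f.eigenspaces_iSupIndep
  have internal : DirectSum.IsInternal (fun c : K => f.eigenspace c) :=
    DirectSum.isInternal_submodule_of_iSupIndep_of_iSup_eq_top hind hspan
  let vbases : ∀ c : K, Basis (Fin (finrank K (f.eigenspace c))) K (f.eigenspace c) :=
    fun c => finBasis K _
  let B := internal.collectedBasis vbases
  let idx := B.indexEquiv (Pi.basisFun K (Fin n))
  let b := B.reindex idx
  let a : Fin n → K := fun j => (idx.symm j).1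
  have hb : ∀ j, E.mulVec (b j) = a j • b j := by
    intro j
    have hmem := internal.collectedBasis_mem vbases (idx.symm j)
    rw [Module.End.mem_eigenspace_iff] at hmem
    have : b j = B (idx.symm j) := B.reindex_apply idx j
    rw [this]
    exact hmem
  set P := (Pi.basisFun K (Fin n)).toMatrix b with hP
  letI : Invertible P := Basis.invertibleToMatrix (Pi.basisFun K (Fin n)) b
  refine ⟨P, this, a, ?_⟩
  have hPapply : ∀ k j, P k j = b j k := by
    intro k j
    rw [hP, Basis.toMatrix_apply, Pi.basisFun_repr]
  have hEP : E * P = P * Matrix.diagonal a := by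
    ext i j
    rw [Matrix.mul_diagonal, Matrix.mul_apply]
    have : ∑ k, E i k * P k j = E.mulVec (b j) i := by
      rw [Matrix.mulVec]
      simp only [dotProduct, hPapply]
    rw [this, hb j, Pi.smul_apply, smul_eq_mul, hPapply, mul_comm]
  calc E = E * P * ⅟P := by rw [Matrix.mul_assoc, mul_invOf_self, Matrix.mul_one]
    _ = P * Matrix.diagonal a * ⅟P := by rw [hEP]


lemma spectral (h2 : (2 : K) = 0) (E : Matrix (Fin n) (Fin n) K)
    (hE : E ^ Fintype.card K = E) :
    2 * finrank K (LinearMap.ker (Tc E)) ≤ n ^ 2 := by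
  obtain ⟨P, iP, a, hdiag⟩ := exists_diagonalization E hE
  haveI := iP
  rw [hdiag, finrank_ker_Tc_conj]
  calc 2 * finrank K (LinearMap.ker (Tc (Matrix.diagonal a)))
      ≤ 2 * (Finset.univ.filter fun p : Fin n × Fin n => (1 : K) + a p.1 + a p.2 = 0).card :=
        Nat.mul_le_mul_left 2 (finrank_ker_Tc_diagonal a)
    _ ≤ n ^ 2 := count_pairs h2 a

end FinitePart

lemma base_change {K : Type*} [Field K] [Fintype K] [Algebra (ZMod 2) K]
    (C : Matrix (Fin n) (Fin n) (ZMod 2)) :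
    finrank (ZMod 2) (LinearMap.ker (Tc C))
      ≤ finrank K (LinearMap.ker (Tc (C.map (algebraMap (ZMod 2) K)))) := by
  classical
  set f := algebraMap (ZMod 2) K with hf
  set ker2 := LinearMap.ker (Tc C) with hker2
  set kerK := LinearMap.ker (Tc (C.map f)) with hkerK
  set D := finrank (ZMod 2) K with hD
  set m2 := finrank (ZMod 2) ker2 with hm2
  set mK := finrank K kerK with hmK
  have hDpos : 0 < D := finrank_pos
  -- basis of K over ZMod 2
  let e : Basis (Fin D) (ZMod 2) K := finBasis (ZMod 2) K
  -- the injection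
  have hmem : ∀ (z : Fin D → ker2),
      (∑ t, e t • ((z t : Matrix (Fin n) (Fin n) (ZMod 2)).map f)) ∈ kerK := by
    intro z
    rw [hkerK, LinearMap.mem_ker, map_sum]
    have : ∀ t, Tc (C.map f) (e t • ((z t : Matrix (Fin n) (Fin n) (ZMod 2)).map f)) = 0 := by
      intro t
      rw [map_smul, Tc_map_map f C (z t : Matrix (Fin n) (Fin n) (ZMod 2))]
      have hz : Tc C (z t : Matrix (Fin n) (Fin n) (ZMod 2)) = 0 := (z t).2
      rw [hz]
      simp
    simp [this]
  set Φ : (Fin D → ker2) → kerK := fun z =>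
    ⟨∑ t, e t • ((z t : Matrix (Fin n) (Fin n) (ZMod 2)).map f), hmem z⟩ with hΦ
  have hinj : Function.Injective Φ := by
    intro z z' hzz
    have hsum : (∑ t, e t • ((z t : Matrix (Fin n) (Fin n) (ZMod 2)).map f))
        = ∑ t, e t • ((z' t : Matrix (Fin n) (Fin n) (ZMod 2)).map f) := by
      have := congrArg Subtype.val hzz
      simpa [hΦ] using this
    funext t
    ext i j
    -- entrywise
    have hent : ∀ (w : Fin D → ker2),
        (∑ t, e t • ((w t : Matrix (Fin n) (Fin n) (ZMod 2)).map f)) i j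
          = ∑ t, ((w t : Matrix (Fin n) (Fin n) (ZMod 2)) i j) • e t := by
      intro w
      rw [Matrix.sum_apply]
      apply Finset.sum_congr rfl
      intro t _
      rw [Matrix.smul_apply, Matrix.map_apply, smul_eq_mul, Algebra.smul_def, mul_comm]
    have h1 := hent z
    have h2 := hent z'
    have hc : ∑ t, ((z t : Matrix (Fin n) (Fin n) (ZMod 2)) i j) • e t
        = ∑ t, ((z' t : Matrix (Fin n) (Fin n) (ZMod 2)) i j) • e t := by
      rw [← h1, ← h2, hsum]
    have hrel : ∑ t, (((z t : Matrix (Fin n) (Fin n) (ZMod 2)) i j)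
          - ((z' t : Matrix (Fin n) (Fin n) (ZMod 2)) i j)) • e t = 0 := by
      simp only [sub_smul]
      rw [Finset.sum_sub_distrib, hc, sub_self]
    have := Fintype.linearIndependent_iff.mp e.linearIndependent _ hrel t
    exact sub_eq_zero.mp this
  -- cardinalities
  letI : Fintype ↥ker2 := Fintype.ofFinite _
  letI : Fintype ↥kerK := Fintype.ofFinite _
  have hcard2 : Nat.card ↥ker2 = 2 ^ m2 := by
    rw [Nat.card_eq_fintype_card, card_eq_pow_finrank (K := ZMod 2) (V := ↥ker2), ZMod.card]
  have hcardK : Nat.card ↥kerK = (2 ^ D) ^ mK := by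
    rw [Nat.card_eq_fintype_card, card_eq_pow_finrank (K := K) (V := ↥kerK),
      card_eq_pow_finrank (K := ZMod 2) (V := K), ZMod.card]
  have hle : Nat.card (Fin D → ↥ker2) ≤ Nat.card ↥kerK :=
    Nat.card_le_card_of_injective Φ hinj
  rw [Nat.card_fun, Nat.card_eq_fintype_card (α := Fin D), Fintype.card_fin,
    hcard2, hcardK, ← pow_mul, ← pow_mul] at hle
  rw [Nat.pow_le_pow_iff_right (by norm_num : 1 < 2)] at hle
  rw [mul_comm] at hle
  exact Nat.le_of_mul_le_mul_left hle hDpos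

end KerTcAux


/-- For `C ∈ M_n(𝔽₂)`, the dimension over `𝔽₂` of
`{Z ∈ M_n(𝔽₂) : Z + CZ + ZC = 0}` is at most `n²/2`
(equivalently, twice this dimension is at most `n²`). -/
theorem finrank_ker_id_add_mulLeft_add_mulRight_le
    (n : ℕ) (hn : 1 ≤ n) (C : Matrix (Fin n) (Fin n) (ZMod 2)) :
    2 * Module.finrank (ZMod 2)
      ↥(LinearMap.ker
        ((LinearMap.id : Matrix (Fin n) (Fin n) (ZMod 2) →ₗ[ZMod 2] Matrix (Fin n) (Fin n) (ZMod 2)) +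
          LinearMap.mulLeft (ZMod 2) C + LinearMap.mulRight (ZMod 2) C)) ≤ n ^ 2 := by
  classical
  open KerTcAux in
  show 2 * Module.finrank (ZMod 2) ↥(LinearMap.ker (Tc C)) ≤ n ^ 2
  have h2 : (2 : ZMod 2) = 0 := by decide
  -- find a power of `C` which is "semisimple"
  obtain ⟨x, y, hne, heq⟩ :=
    Finite.exists_ne_map_eq_of_infinite (fun k : ℕ => C ^ 2 ^ k)
  have hkd : ∃ k d, 0 < d ∧ C ^ 2 ^ k = C ^ 2 ^ (k + d) := by
    rcases lt_or_gt_of_ne hne with h | h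
    · exact ⟨x, y - x, by omega, by rw [heq]; congr 2; omega⟩
    · exact ⟨y, x - y, by omega, by rw [← heq]; congr 2; omega⟩
  obtain ⟨k, d, hd, hCk⟩ := hkd
  set E := C ^ 2 ^ k with hE
  have hEd : E ^ 2 ^ d = E := by
    rw [hE, ← pow_mul, ← pow_add, ← hCk]
  -- step 1 : pass to `E`
  have step1 : Module.finrank (ZMod 2) ↥(LinearMap.ker (Tc C))
      ≤ Module.finrank (ZMod 2) ↥(LinearMap.ker (Tc E)) :=
    Submodule.finrank_mono (ker_Tc_le_pow h2 C k)
  -- step 2 : base change to the Galois field with `2 ^ d` elements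
  haveI : Fact (Nat.Prime 2) := ⟨Nat.prime_two⟩
  set K := GaloisField 2 d with hK
  letI : Fintype K := Fintype.ofFinite K
  set f := algebraMap (ZMod 2) K with hf
  have step2 : Module.finrank (ZMod 2) ↥(LinearMap.ker (Tc E))
      ≤ Module.finrank K ↥(LinearMap.ker (Tc (E.map f))) := base_change E
  -- step 3 : the spectral estimate over `K`
  have hcardK : Fintype.card K = 2 ^ d := by
    rw [← Nat.card_eq_fintype_card]
    exact GaloisField.card 2 d hd.ne'
  have hq : (E.map f) ^ Fintype.card K = E.map f := by
    rw [hcardK, ← RingHom.mapMatrix_apply, ← map_pow, hEd]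
  have h2K : (2 : K) = 0 := by
    have : (2 : K) = f (2 : ZMod 2) := by rw [map_ofNat]
    rw [this, h2, map_zero]
  have step3 := spectral h2K (E.map f) hq
  omega
end
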